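/- arXiv:2005.05820 — 7 statements merged into one kernel-verified Lean document; each statement's English description precedes it below -/
import Mathlib

section
/- Let r > 0 and β ∈ ℝ with cos β < 1. For r′ > 0 set ρ(r′) = √(r² + r′² − 2 r r′ cos β) and t(r′) = (r′ + ρ(r′))/r. Then t is a continuously differentiable, strictly increasing bijection from (0, ∞) onto (1, ∞), and for every r′ > 0, writing t = t(r′), one has the identities ρ(r′) = r·f_β(t) and r′ = r·(t² − 1)/(2(t − cos β)), and the inverse map t ↦ r′ has derivative dr′/dt = r·f_β(t)/(t − cos β), which is strictly positive. -/
/-- `fbeta β t = (t² − 2t·cos β + 1)/(2(t − cos β))`, the function `f_β` from the paper. -/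
noncomputable def fbeta (β t : ℝ) : ℝ :=
  (t ^ 2 - 2 * t * Real.cos β + 1) / (2 * (t - Real.cos β))

/-- the change of variables `t(r′) = (r′ + ρ(r′))/r` with
`ρ(r′) = √(r² + r′² − 2 r r′ cos β)` is a `C¹`, strictly increasing bijection from
`(0,∞)` onto `(1,∞)`, with `ρ(r′) = r·f_β(t(r′))`,
`r′ = r(t² − 1)/(2(t − cos β))`, and the inverse map `t ↦ r′` has strictly positive
derivative `r·f_β(t)/(t − cos β)`. -/
theorem stmt0 (r β : ℝ) (hr : 0 < r) (hβ : Real.cos β < 1)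
    (ρ t : ℝ → ℝ)
    (hρ : ∀ r', ρ r' = Real.sqrt (r ^ 2 + r' ^ 2 - 2 * r * r' * Real.cos β))
    (ht : ∀ r', t r' = (r' + ρ r') / r) :
    ContDiffOn ℝ 1 t (Set.Ioi 0) ∧
    StrictMonoOn t (Set.Ioi 0) ∧
    Set.BijOn t (Set.Ioi 0) (Set.Ioi 1) ∧
    (∀ r' > 0, ρ r' = r * fbeta β (t r')) ∧
    (∀ r' > 0, r' = r * ((t r') ^ 2 - 1) / (2 * (t r' - Real.cos β))) ∧
    (∀ r' > 0,
      HasDerivAt (fun s : ℝ => r * (s ^ 2 - 1) / (2 * (s - Real.cos β)))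
        (r * fbeta β (t r') / (t r' - Real.cos β)) (t r') ∧
      0 < r * fbeta β (t r') / (t r' - Real.cos β)) := by
  set c := Real.cos β with hc
  have hq : ∀ r' : ℝ, 0 < r' → 0 < r ^ 2 + r' ^ 2 - 2 * r * r' * c := by
    intro r' h
    nlinarith [sq_nonneg (r - r'), mul_pos (mul_pos hr h) (sub_pos.2 hβ)]
  have hρpos : ∀ r' > (0:ℝ), 0 < ρ r' := fun r' h => by
    rw [hρ]; exact Real.sqrt_pos.2 (hq r' h)
  have hρsq : ∀ r' > (0:ℝ), (ρ r') ^ 2 = r ^ 2 + r' ^ 2 - 2 * r * r' * c := fun r' h => by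
    rw [hρ]; exact Real.sq_sqrt (hq r' h).le
  have ht1 : ∀ r' > (0:ℝ), 1 < t r' := by
    intro r' h
    rw [ht, lt_div_iff₀ hr]
    have h1 := hρsq r' h
    have h0 := hρpos r' h
    nlinarith [mul_pos (mul_pos hr h) (sub_pos.2 hβ), sq_nonneg (ρ r' - (r - r'))]
  have htc : ∀ r' > (0:ℝ), 0 < t r' - c := fun r' h => by
    have := ht1 r' h; linarith
  have hrt : ∀ r' > (0:ℝ), ρ r' = r * t r' - r' := by
    intro r' h
    have := ht r'
    field_simp at this
    linarith
  have hkey : ∀ r' > (0:ℝ), r * ((t r') ^ 2 - 1) = 2 * r' * (t r' - c) := by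
    intro r' h
    have h1 := hρsq r' h
    have h2 := hrt r' h
    have hr0 : r ≠ 0 := ne_of_gt hr
    have : (r * t r' - r') ^ 2 = r ^ 2 + r' ^ 2 - 2 * r * r' * c := by rw [← h2]; exact h1
    nlinarith [this]
  have hD : ∀ r' > (0:ℝ), r' = r * ((t r') ^ 2 - 1) / (2 * (t r' - c)) := by
    intro r' h
    have h1 := hkey r' h
    have h2 := htc r' h
    field_simp
    linarith
  have hE : ∀ r' > (0:ℝ), ρ r' = r * fbeta β (t r') := by
    intro r' h
    have h1 := hkey r' h
    have h2 := htc r' h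
    have h3 := hrt r' h
    rw [h3]
    unfold fbeta
    rw [← hc]
    field_simp
    nlinarith [h1]
  have hfb : ∀ s : ℝ, 1 < s → 0 < fbeta β s := by
    intro s hs
    unfold fbeta
    rw [← hc]
    apply div_pos
    · nlinarith [sq_nonneg (s - 1), mul_pos (lt_trans zero_lt_one hs) (sub_pos.2 hβ)]
    · linarith
  have hg : ∀ s : ℝ, s ≠ c → HasDerivAt (fun s : ℝ => r * (s ^ 2 - 1) / (2 * (s - c)))
      (r * fbeta β s / (s - c)) s := by
    intro s hs
    have hden : 2 * (s - c) ≠ 0 := mul_ne_zero two_ne_zero (sub_ne_zero.2 hs)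
    have h1 : HasDerivAt (fun s : ℝ => r * (s ^ 2 - 1)) (r * (2 * s)) s := by
      simpa using ((hasDerivAt_pow 2 s).sub_const 1).const_mul r
    have h2 : HasDerivAt (fun s : ℝ => 2 * (s - c)) 2 s := by
      simpa using ((hasDerivAt_id s).sub_const c).const_mul 2
    have h3 := h1.div h2 hden
    refine h3.congr_deriv ?_
    unfold fbeta
    rw [← hc]
    have hsc : s - c ≠ 0 := sub_ne_zero.2 hs
    field_simp
    ring
  have hgmono : StrictMonoOn (fun s : ℝ => r * (s ^ 2 - 1) / (2 * (s - c))) (Set.Ioi 1) := by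
    apply strictMonoOn_of_deriv_pos (convex_Ioi 1)
    · intro x hx
      have hx1 : (1:ℝ) < x := hx
      exact (hg x (ne_of_gt (lt_of_lt_of_le (lt_of_le_of_lt (le_refl c) (lt_trans hβ hx1)) (le_refl x)))).differentiableAt.continuousAt.continuousWithinAt
    · rw [interior_Ioi]
      intro x hx
      have hx1 : (1:ℝ) < x := hx
      have hxc : x ≠ c := ne_of_gt (lt_trans hβ hx1)
      rw [(hg x hxc).deriv]
      exact div_pos (mul_pos hr (hfb x hx1)) (by linarith)
  have hginv : ∀ r' > (0:ℝ), r * ((t r') ^ 2 - 1) / (2 * (t r' - c)) = r' :=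
    fun r' h => (hD r' h).symm
  -- strict monotonicity of t
  have hmono : StrictMonoOn t (Set.Ioi 0) := by
    intro a ha b hb hab
    have ha' : (0:ℝ) < a := ha
    have hb' : (0:ℝ) < b := hb
    rcases lt_trichotomy (t a) (t b) with h | h | h
    · exact h
    · exfalso
      have : a = b := by
        have := hD a ha'
        rw [this, h, ← hD b hb']
      linarith
    · exfalso
      have := hgmono (ht1 b hb') (ht1 a ha') h
      simp only at this
      rw [hginv a ha', hginv b hb'] at this
      linarith
  refine ⟨?_, hmono, ⟨fun r' h => ht1 r' h, hmono.injOn, ?_⟩, hE, fun r' h => hD r' h, fun r' h => ?_⟩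
  · -- ContDiffOn
    have htfun : t = fun r' => (r' + Real.sqrt (r ^ 2 + r' ^ 2 - 2 * r * r' * c)) / r :=
      funext fun r' => by rw [ht, hρ]
    rw [htfun]
    intro x hx
    have hx0 : (0:ℝ) < x := hx
    have hpoly : ContDiff ℝ 1 (fun r' : ℝ => r ^ 2 + r' ^ 2 - 2 * r * r' * c) := by fun_prop
    have hsq : ContDiffAt ℝ 1 (fun r' : ℝ => Real.sqrt (r ^ 2 + r' ^ 2 - 2 * r * r' * c)) x := by
      exact (Real.contDiffAt_sqrt (ne_of_gt (hq x hx0))).comp x hpoly.contDiffAt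
    exact (((contDiffAt_id.add hsq).div_const r)).contDiffWithinAt
  · -- surjectivity
    intro s hs
    have hs1 : (1:ℝ) < s := hs
    have hsc : (0:ℝ) < s - c := by linarith
    set r'' := r * (s ^ 2 - 1) / (2 * (s - c)) with hr''
    have hr''pos : 0 < r'' := by
      apply div_pos (mul_pos hr (by nlinarith)) (by linarith)
    refine ⟨r'', hr''pos, ?_⟩
    have hR : (0:ℝ) < r * (s ^ 2 - 2 * s * c + 1) / (2 * (s - c)) := by
      apply div_pos (mul_pos hr (by nlinarith [sq_nonneg (s - 1), mul_pos (lt_trans zero_lt_one hs1) (sub_pos.2 hβ)])) (by linarith)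
    have hrad : r ^ 2 + r'' ^ 2 - 2 * r * r'' * c
        = (r * (s ^ 2 - 2 * s * c + 1) / (2 * (s - c))) ^ 2 := by
      rw [hr'']
      field_simp
      ring
    rw [ht, hρ, hrad, Real.sqrt_sq hR.le, hr'']
    field_simp
    ring
  · -- derivative part
    have h1 := ht1 r' h
    have hxc : t r' ≠ c := ne_of_gt (lt_trans hβ h1)
    exact ⟨hg (t r') hxc, div_pos (mul_pos hr (hfb _ h1)) (by have := htc r' h; linarith)⟩
end

section
/- Let k > 0. There exists a constant C > 0, depending only on k, such that for every r ≥ 1 and every β ∈ ℝ with sin β ≠ 0, the improper integral ∫₁^∞ (d/dt)(f_β(t)^{−1/2}) · e^{i k r t} dt converges absolutely and satisfies |∫₁^∞ (d/dt)(f_β(t)^{−1/2}) e^{i k r t} dt| ≤ C·|sin β|^{−2}·r^{−1}. -/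
open Real MeasureTheory Set Filter

namespace Stmt2Aux

noncomputable def fb' (β t : ℝ) : ℝ :=
  ((t - Real.cos β) ^ 2 - Real.sin β ^ 2) / (2 * (t - Real.cos β) ^ 2)

noncomputable def g1 (β t : ℝ) : ℝ :=
  -(1 / 2) * fbeta β t ^ (-(3 / 2) : ℝ) * fb' β t

noncomputable def g2 (β t : ℝ) : ℝ :=
  3 / 4 * fbeta β t ^ (-(5 / 2) : ℝ) * fb' β t ^ 2
    - 1 / 2 * fbeta β t ^ (-(3 / 2) : ℝ) * (Real.sin β ^ 2 / (t - Real.cos β) ^ 3)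

variable {β t : ℝ}

lemma cos_lt_one (hs : Real.sin β ≠ 0) : Real.cos β < 1 := by
  have h1 := Real.sin_sq_add_cos_sq β
  have h2 : 0 < Real.sin β ^ 2 := by positivity
  nlinarith [sq_nonneg (Real.cos β - 1)]

lemma half_s2_le (hs : Real.sin β ≠ 0) : Real.sin β ^ 2 / 2 ≤ 1 - Real.cos β := by
  have h1 := Real.sin_sq_add_cos_sq β
  have h2 := Real.neg_one_le_cos β
  nlinarith

lemma fbeta_eq (h : Real.cos β < t) :
    fbeta β t = ((t - Real.cos β) ^ 2 + Real.sin β ^ 2) / (2 * (t - Real.cos β)) := by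
  unfold fbeta
  congr 1
  linear_combination -Real.sin_sq_add_cos_sq β

lemma fbeta_pos (h : Real.cos β < t) : 0 < fbeta β t := by
  rw [fbeta_eq h]
  have hu : 0 < t - Real.cos β := by linarith
  exact div_pos (by nlinarith [sq_nonneg (Real.sin β)]) (by linarith)

lemma two_mul_fbeta (h : Real.cos β < t) :
    2 * (t - Real.cos β) * fbeta β t = (t - Real.cos β) ^ 2 + Real.sin β ^ 2 := by
  rw [fbeta_eq h, mul_div_cancel₀]
  have : 0 < t - Real.cos β := by linarith
  positivity

lemma hasDerivAt_fbeta (h : Real.cos β < t) : HasDerivAt (fbeta β) (fb' β t) t := by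
  have hu : 0 < t - Real.cos β := by linarith
  have hne : 2 * (t - Real.cos β) ≠ 0 := by positivity
  have h1 : HasDerivAt (fun y : ℝ => y ^ 2 - 2 * y * Real.cos β + 1)
      (2 * t - 2 * Real.cos β) t := by
    have e : (fun y : ℝ => y ^ 2 - 2 * y * Real.cos β + 1)
        = fun y : ℝ => y ^ 2 - (2 * Real.cos β) * y + 1 := by funext y; ring
    rw [e]
    have := ((hasDerivAt_pow 2 t).sub ((hasDerivAt_id t).const_mul (2 * Real.cos β))).add_const 1
    convert this using 1
    · rfl
    · rfl
    · rfl
    simp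
  have h2 : HasDerivAt (fun y : ℝ => 2 * (y - Real.cos β)) 2 t := by
    have := ((hasDerivAt_id t).sub_const (Real.cos β)).const_mul 2
    simpa using this
  have hdiv := h1.div h2 hne
  convert hdiv using 1
  · rfl
  · rfl
  · rfl
  unfold fb'
  rw [div_eq_div_iff (by positivity) (by positivity)]
  linear_combination (-4 * (t - Real.cos β) ^ 2) * Real.sin_sq_add_cos_sq β

lemma hasDerivAt_g (h : Real.cos β < t) :
    HasDerivAt (fun y : ℝ => fbeta β y ^ (-(1 / 2) : ℝ)) (g1 β t) t := by
  have := (hasDerivAt_fbeta h).rpow_const (p := (-(1 / 2) : ℝ)) (Or.inl (fbeta_pos h).ne')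
  convert this using 1
  unfold g1
  norm_num
  ring

lemma deriv_g (h : Real.cos β < t) :
    deriv (fun s : ℝ => fbeta β s ^ (-(1 / 2) : ℝ)) t = g1 β t :=
  (hasDerivAt_g h).deriv

lemma hasDerivAt_fb' (h : Real.cos β < t) :
    HasDerivAt (fb' β) (Real.sin β ^ 2 / (t - Real.cos β) ^ 3) t := by
  have hu : 0 < t - Real.cos β := by linarith
  have hne : 2 * (t - Real.cos β) ^ 2 ≠ 0 := by positivity
  have h1 : HasDerivAt (fun y : ℝ => (y - Real.cos β) ^ 2 - Real.sin β ^ 2)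
      (2 * (t - Real.cos β)) t := by
    have := (((hasDerivAt_id t).sub_const (Real.cos β)).pow 2).sub_const (Real.sin β ^ 2)
    convert this using 1
    · rfl
    · rfl
    · rfl
    simp
  have h2 : HasDerivAt (fun y : ℝ => 2 * (y - Real.cos β) ^ 2)
      (2 * (2 * (t - Real.cos β))) t := by
    have := (((hasDerivAt_id t).sub_const (Real.cos β)).pow 2).const_mul 2
    convert this using 1
    · rfl
    · rfl
    · rfl
    simp
  have hdiv := h1.div h2 hne
  convert hdiv using 1
  · rfl
  · rfl
  · rfl
  rw [eq_div_iff (by positivity)]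
  field_simp
  ring

lemma hasDerivAt_g1 (h : Real.cos β < t) : HasDerivAt (g1 β) (g2 β t) t := by
  have hA := fbeta_pos h
  have h32 : HasDerivAt (fun y : ℝ => fbeta β y ^ (-(3 / 2) : ℝ))
      (fb' β t * (-(3 / 2)) * fbeta β t ^ (-(5 / 2) : ℝ)) t := by
    have h5 : ((-(3 / 2) : ℝ) - 1) = (-(5 / 2) : ℝ) := by norm_num
    have := (hasDerivAt_fbeta h).rpow_const (p := (-(3 / 2) : ℝ)) (Or.inl hA.ne')
    rwa [h5] at this
  have := ((h32.mul (hasDerivAt_fb' h)).const_mul (-(1 / 2) : ℝ))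
  unfold g1 g2
  convert this using 1
  · rfl
  · rfl
  · funext y; simp only [Pi.mul_apply]; ring
  · ring

lemma abs_fb'_le (h : Real.cos β < t) :
    |fb' β t| ≤ fbeta β t / (t - Real.cos β) := by
  have hu : 0 < t - Real.cos β := by linarith
  unfold fb'
  rw [abs_div, abs_of_pos (by positivity : (0:ℝ) < 2 * (t - Real.cos β) ^ 2)]
  rw [fbeta_eq h, div_div, div_le_div_iff₀ (by positivity) (by positivity)]
  have h1 : |(t - Real.cos β) ^ 2 - Real.sin β ^ 2| ≤ (t - Real.cos β) ^ 2 + Real.sin β ^ 2 := by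
    rw [abs_le]
    constructor <;> nlinarith [sq_nonneg (Real.sin β), sq_nonneg (t - Real.cos β)]
  calc |(t - Real.cos β) ^ 2 - Real.sin β ^ 2| * (2 * (t - Real.cos β) * (t - Real.cos β))
      ≤ ((t - Real.cos β) ^ 2 + Real.sin β ^ 2) * (2 * (t - Real.cos β) * (t - Real.cos β)) := by
        apply mul_le_mul_of_nonneg_right h1 (by positivity)
    _ = ((t - Real.cos β) ^ 2 + Real.sin β ^ 2) * (2 * (t - Real.cos β) ^ 2) := by ring

/-- if `b / a ≤ A` with `a, b, A > 0` then `A ^ (-1/2) ≤ a^(1/2) / b^(1/2)`. -/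
lemma aux_rpow {a b A : ℝ} (ha : 0 < a) (hb : 0 < b) (hA : 0 < A) (h : b / a ≤ A) :
    A ^ (-(1 / 2) : ℝ) ≤ a ^ ((1 / 2) : ℝ) / b ^ ((1 / 2) : ℝ) := by
  have h1 : A ^ (-(1 / 2) : ℝ) ≤ (b / a) ^ (-(1 / 2) : ℝ) :=
    Real.rpow_le_rpow_of_nonpos (by positivity) h (by norm_num)
  refine h1.trans_eq ?_
  rw [Real.rpow_neg (by positivity), Real.div_rpow hb.le ha.le, inv_div]

lemma f_ge_u (h : Real.cos β < t) : (t - Real.cos β) / 2 ≤ fbeta β t := by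
  have hu : 0 < t - Real.cos β := by linarith
  rw [fbeta_eq h, div_le_div_iff₀ (by norm_num) (by positivity)]
  nlinarith [sq_nonneg (Real.sin β)]

lemma f_ge_s (h : Real.cos β < t) :
    Real.sin β ^ 2 / (2 * (t - Real.cos β)) ≤ fbeta β t := by
  have hu : 0 < t - Real.cos β := by linarith
  rw [fbeta_eq h, div_le_div_iff₀ (by positivity) (by positivity)]
  nlinarith [sq_nonneg (t - Real.cos β)]

lemma rpow_n32_mul {A : ℝ} (hA : 0 < A) : A ^ (-(3 / 2) : ℝ) * A = A ^ (-(1 / 2) : ℝ) := by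
  calc A ^ (-(3 / 2) : ℝ) * A = A ^ (-(3 / 2) : ℝ) * A ^ (1 : ℝ) := by rw [Real.rpow_one]
    _ = A ^ ((-(3 / 2) : ℝ) + 1) := (Real.rpow_add hA _ _).symm
    _ = A ^ (-(1 / 2) : ℝ) := by norm_num

lemma rpow_n52_mul {A : ℝ} (hA : 0 < A) : A ^ (-(5 / 2) : ℝ) * A ^ 2 = A ^ (-(1 / 2) : ℝ) := by
  calc A ^ (-(5 / 2) : ℝ) * A ^ 2 = A ^ (-(5 / 2) : ℝ) * A ^ ((2 : ℕ) : ℝ) := by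
        rw [Real.rpow_natCast]
    _ = A ^ ((-(5 / 2) : ℝ) + ((2 : ℕ) : ℝ)) := (Real.rpow_add hA _ _).symm
    _ = A ^ (-(1 / 2) : ℝ) := by norm_num

lemma u_half_mul {u : ℝ} (hu : 0 < u) :
    u ^ ((1 / 2) : ℝ) * (u ^ 2)⁻¹ = u ^ (-(3 / 2) : ℝ) := by
  rw [← Real.rpow_natCast u 2, ← Real.rpow_neg hu.le, ← Real.rpow_add hu]
  norm_num

lemma u_half_inv_mul {u : ℝ} (hu : 0 < u) :
    (u ^ ((1 / 2) : ℝ))⁻¹ * u⁻¹ = u ^ (-(3 / 2) : ℝ) := by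
  rw [← Real.rpow_neg hu.le, ← Real.rpow_neg_one u, ← Real.rpow_add hu]
  norm_num

lemma s2_rpow_half (β : ℝ) : (Real.sin β ^ 2) ^ ((1 / 2) : ℝ) = |Real.sin β| := by
  rw [← Real.sqrt_eq_rpow]
  exact Real.sqrt_sq_eq_abs _

lemma abs_g1_le (h : Real.cos β < t) :
    |g1 β t| ≤ 1 / 2 * fbeta β t ^ (-(1 / 2) : ℝ) * (t - Real.cos β)⁻¹ := by
  have hu : 0 < t - Real.cos β := by linarith
  have hA := fbeta_pos h
  have h9 := abs_fb'_le h
  have hr32 : (0 : ℝ) ≤ fbeta β t ^ (-(3 / 2) : ℝ) := Real.rpow_nonneg hA.le _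
  calc |g1 β t| = 1 / 2 * fbeta β t ^ (-(3 / 2) : ℝ) * |fb' β t| := by
        unfold g1
        rw [abs_mul, abs_mul, abs_of_nonneg hr32]
        norm_num
    _ ≤ 1 / 2 * fbeta β t ^ (-(3 / 2) : ℝ) * (fbeta β t / (t - Real.cos β)) := by
        apply mul_le_mul_of_nonneg_left h9 (by positivity)
    _ = 1 / 2 * (fbeta β t ^ (-(3 / 2) : ℝ) * fbeta β t) * (t - Real.cos β)⁻¹ := by
        ring
    _ = 1 / 2 * fbeta β t ^ (-(1 / 2) : ℝ) * (t - Real.cos β)⁻¹ := by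
        rw [rpow_n32_mul hA]

lemma g1_decay (h : Real.cos β < t) :
    |g1 β t| ≤ Real.sqrt 2 / 2 * (t - Real.cos β) ^ (-(3 / 2) : ℝ) := by
  have hu : 0 < t - Real.cos β := by linarith
  have hA := fbeta_pos h
  have h1 : fbeta β t ^ (-(1 / 2) : ℝ) ≤ (2 : ℝ) ^ ((1 / 2) : ℝ) / (t - Real.cos β) ^ ((1 / 2) : ℝ) := by
    apply aux_rpow (by norm_num) hu hA
    simpa [div_eq_mul_inv] using f_ge_u h
  have h2 : (0 : ℝ) < (t - Real.cos β) ^ ((1 / 2) : ℝ) := Real.rpow_pos_of_pos hu _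
  calc |g1 β t| ≤ 1 / 2 * fbeta β t ^ (-(1 / 2) : ℝ) * (t - Real.cos β)⁻¹ := abs_g1_le h
    _ ≤ 1 / 2 * ((2 : ℝ) ^ ((1 / 2) : ℝ) / (t - Real.cos β) ^ ((1 / 2) : ℝ)) * (t - Real.cos β)⁻¹ := by
        apply mul_le_mul_of_nonneg_right (mul_le_mul_of_nonneg_left h1 (by norm_num)) (by positivity)
    _ = (2 : ℝ) ^ ((1 / 2) : ℝ) / 2 * (((t - Real.cos β) ^ ((1 / 2) : ℝ))⁻¹ * (t - Real.cos β)⁻¹) := by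
        ring
    _ = Real.sqrt 2 / 2 * (t - Real.cos β) ^ (-(3 / 2) : ℝ) := by
        rw [u_half_inv_mul hu, Real.sqrt_eq_rpow]

lemma fbeta_one (hs : Real.sin β ≠ 0) : fbeta β 1 = 1 := by
  have hc1 := cos_lt_one hs
  rw [fbeta_eq hc1, div_eq_one_iff_eq (ne_of_gt (by linarith))]
  linear_combination Real.sin_sq_add_cos_sq β

lemma g1_at_one (hs : Real.sin β ≠ 0) : |g1 β 1| ≤ (Real.sin β ^ 2)⁻¹ := by
  have hc1 := cos_lt_one hs
  have hs2 : 0 < Real.sin β ^ 2 := by positivity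
  have h1 := abs_g1_le hc1
  rw [fbeta_one hs, Real.one_rpow] at h1
  have h2 : (1 - Real.cos β)⁻¹ ≤ 2 / Real.sin β ^ 2 := by
    have h3 : (1 - Real.cos β)⁻¹ ≤ (Real.sin β ^ 2 / 2)⁻¹ := by
      apply inv_anti₀ (by positivity) (half_s2_le hs)
    rwa [inv_div] at h3
  calc |g1 β 1| ≤ 1 / 2 * 1 * (1 - Real.cos β)⁻¹ := h1
    _ ≤ 1 / 2 * 1 * (2 / Real.sin β ^ 2) := by
        apply mul_le_mul_of_nonneg_left h2 (by norm_num)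
    _ = (Real.sin β ^ 2)⁻¹ := by ring

lemma g2_decay (hs : Real.sin β ≠ 0) (h : Real.cos β < t) :
    |g2 β t| ≤ 7 / 4 * Real.sqrt 2 / |Real.sin β| * (t - Real.cos β) ^ (-(3 / 2) : ℝ) := by
  have hu : 0 < t - Real.cos β := by linarith
  have hA := fbeta_pos h
  have hs2 : 0 < Real.sin β ^ 2 := by positivity
  have hT1 : fbeta β t ^ (-(5 / 2) : ℝ) * fb' β t ^ 2
      ≤ fbeta β t ^ (-(1 / 2) : ℝ) * ((t - Real.cos β) ^ 2)⁻¹ := by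
    have h9 : fb' β t ^ 2 ≤ (fbeta β t / (t - Real.cos β)) ^ 2 := by
      rw [← sq_abs]
      exact pow_le_pow_left₀ (abs_nonneg _) (abs_fb'_le h) 2
    calc fbeta β t ^ (-(5 / 2) : ℝ) * fb' β t ^ 2
        ≤ fbeta β t ^ (-(5 / 2) : ℝ) * (fbeta β t / (t - Real.cos β)) ^ 2 :=
          mul_le_mul_of_nonneg_left h9 (Real.rpow_nonneg hA.le _)
      _ = fbeta β t ^ (-(5 / 2) : ℝ) * fbeta β t ^ 2 * ((t - Real.cos β) ^ 2)⁻¹ := by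
          rw [div_pow]; ring
      _ = fbeta β t ^ (-(1 / 2) : ℝ) * ((t - Real.cos β) ^ 2)⁻¹ := by
          rw [rpow_n52_mul hA]
  have hT2 : fbeta β t ^ (-(3 / 2) : ℝ) * (Real.sin β ^ 2 / (t - Real.cos β) ^ 3)
      ≤ fbeta β t ^ (-(1 / 2) : ℝ) * (2 * ((t - Real.cos β) ^ 2)⁻¹) := by
    have h9 : Real.sin β ^ 2 / (t - Real.cos β) ^ 3 ≤ 2 * fbeta β t / (t - Real.cos β) ^ 2 := by
      rw [div_le_div_iff₀ (by positivity) (by positivity)]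
      have h10 := two_mul_fbeta h
      nlinarith [sq_nonneg (t - Real.cos β), mul_pos hu (mul_pos hu hu)]
    calc fbeta β t ^ (-(3 / 2) : ℝ) * (Real.sin β ^ 2 / (t - Real.cos β) ^ 3)
        ≤ fbeta β t ^ (-(3 / 2) : ℝ) * (2 * fbeta β t / (t - Real.cos β) ^ 2) :=
          mul_le_mul_of_nonneg_left h9 (Real.rpow_nonneg hA.le _)
      _ = fbeta β t ^ (-(3 / 2) : ℝ) * fbeta β t * (2 * ((t - Real.cos β) ^ 2)⁻¹) := by
          ring
      _ = fbeta β t ^ (-(1 / 2) : ℝ) * (2 * ((t - Real.cos β) ^ 2)⁻¹) := by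
          rw [rpow_n32_mul hA]
  have habs : |g2 β t| ≤ 7 / 4 * (fbeta β t ^ (-(1 / 2) : ℝ) * ((t - Real.cos β) ^ 2)⁻¹) := by
    unfold g2
    have hb1 : (0 : ℝ) ≤ fbeta β t ^ (-(5 / 2) : ℝ) * fb' β t ^ 2 := by positivity
    have hb2 : (0 : ℝ) ≤ fbeta β t ^ (-(3 / 2) : ℝ) * (Real.sin β ^ 2 / (t - Real.cos β) ^ 3) := by
      positivity
    have := abs_sub (3 / 4 * (fbeta β t ^ (-(5 / 2) : ℝ) * fb' β t ^ 2))
      (1 / 2 * (fbeta β t ^ (-(3 / 2) : ℝ) * (Real.sin β ^ 2 / (t - Real.cos β) ^ 3)))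
    calc |3 / 4 * fbeta β t ^ (-(5 / 2) : ℝ) * fb' β t ^ 2
          - 1 / 2 * fbeta β t ^ (-(3 / 2) : ℝ) * (Real.sin β ^ 2 / (t - Real.cos β) ^ 3)|
        ≤ |3 / 4 * fbeta β t ^ (-(5 / 2) : ℝ) * fb' β t ^ 2|
          + |1 / 2 * fbeta β t ^ (-(3 / 2) : ℝ) * (Real.sin β ^ 2 / (t - Real.cos β) ^ 3)| :=
          abs_sub _ _
      _ = 3 / 4 * (fbeta β t ^ (-(5 / 2) : ℝ) * fb' β t ^ 2)
          + 1 / 2 * (fbeta β t ^ (-(3 / 2) : ℝ) * (Real.sin β ^ 2 / (t - Real.cos β) ^ 3)) := by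
          rw [abs_of_nonneg (by positivity), abs_of_nonneg (by positivity)] <;> ring
      _ ≤ 3 / 4 * (fbeta β t ^ (-(1 / 2) : ℝ) * ((t - Real.cos β) ^ 2)⁻¹)
          + 1 / 2 * (fbeta β t ^ (-(1 / 2) : ℝ) * (2 * ((t - Real.cos β) ^ 2)⁻¹)) := by
          have := add_le_add (mul_le_mul_of_nonneg_left hT1 (by norm_num : (0:ℝ) ≤ 3 / 4))
            (mul_le_mul_of_nonneg_left hT2 (by norm_num : (0:ℝ) ≤ 1 / 2))
          linarith
      _ = 7 / 4 * (fbeta β t ^ (-(1 / 2) : ℝ) * ((t - Real.cos β) ^ 2)⁻¹) := by ring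
  have hA12 : fbeta β t ^ (-(1 / 2) : ℝ)
      ≤ (2 * (t - Real.cos β)) ^ ((1 / 2) : ℝ) / (Real.sin β ^ 2) ^ ((1 / 2) : ℝ) :=
    aux_rpow (by positivity) hs2 hA (f_ge_s h)
  have hmulr : (2 * (t - Real.cos β)) ^ ((1 / 2) : ℝ)
      = Real.sqrt 2 * (t - Real.cos β) ^ ((1 / 2) : ℝ) := by
    rw [Real.mul_rpow (by norm_num) hu.le, Real.sqrt_eq_rpow]
  calc |g2 β t| ≤ 7 / 4 * (fbeta β t ^ (-(1 / 2) : ℝ) * ((t - Real.cos β) ^ 2)⁻¹) := habs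
    _ ≤ 7 / 4 * ((Real.sqrt 2 * (t - Real.cos β) ^ ((1 / 2) : ℝ) / |Real.sin β|)
        * ((t - Real.cos β) ^ 2)⁻¹) := by
        rw [hmulr, s2_rpow_half] at hA12
        gcongr
    _ = 7 / 4 * Real.sqrt 2 / |Real.sin β|
        * ((t - Real.cos β) ^ ((1 / 2) : ℝ) * ((t - Real.cos β) ^ 2)⁻¹) := by
        ring
    _ = 7 / 4 * Real.sqrt 2 / |Real.sin β| * (t - Real.cos β) ^ (-(3 / 2) : ℝ) := by
        rw [u_half_mul hu]

lemma u_int_aux {c : ℝ} (hc : c < 1) :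
    (∀ x ∈ Ici (1 : ℝ), HasDerivAt (fun y : ℝ => -2 * (y - c) ^ (-(1 / 2) : ℝ))
      ((x - c) ^ (-(3 / 2) : ℝ)) x) := by
  intro x hx
  have hx1 : (1 : ℝ) ≤ x := hx
  have hu : 0 < x - c := by linarith
  have h5 : ((-(1 / 2) : ℝ) - 1) = (-(3 / 2) : ℝ) := by norm_num
  have := (((hasDerivAt_id x).sub_const c).rpow_const
    (p := (-(1 / 2) : ℝ)) (Or.inl hu.ne')).const_mul (-2 : ℝ)
  rw [h5] at this
  convert this using 1
  · rfl
  · rfl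
  · rfl
  rw [id_eq]
  ring

lemma u_tendsto {c p : ℝ} (hp : 0 < p) :
    Tendsto (fun x : ℝ => (x - c) ^ (-p : ℝ)) atTop (nhds 0) := by
  have h1 : Tendsto (fun x : ℝ => x - c) atTop atTop :=
    tendsto_atTop_add_const_right atTop (-c) tendsto_id |>.congr (by intro x; simp; ring)
  exact (tendsto_rpow_neg_atTop hp).comp h1

lemma u_integrableOn {c : ℝ} (hc : c < 1) :
    IntegrableOn (fun t : ℝ => (t - c) ^ (-(3 / 2) : ℝ)) (Ioi 1) := by
  apply integrableOn_Ioi_deriv_of_nonneg' (u_int_aux hc)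
  · intro x hx
    have hu : 0 < x - c := by simp only [mem_Ioi] at hx; linarith
    positivity
  · have := (u_tendsto (c := c) (p := (1 / 2 : ℝ)) (by norm_num)).const_mul (-2 : ℝ)
    simpa using this

lemma u_integral {c : ℝ} (hc : c < 1) :
    ∫ t in Ioi (1 : ℝ), (t - c) ^ (-(3 / 2) : ℝ) = 2 * (1 - c) ^ (-(1 / 2) : ℝ) := by
  have h := integral_Ioi_of_hasDerivAt_of_tendsto'
    (f := fun y : ℝ => -2 * (y - c) ^ (-(1 / 2) : ℝ))
    (f' := fun y : ℝ => (y - c) ^ (-(3 / 2) : ℝ))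
    (u_int_aux hc) (u_integrableOn hc)
    (by
      have := (u_tendsto (c := c) (p := (1 / 2 : ℝ)) (by norm_num)).const_mul (-2 : ℝ)
      simpa using this)
  rw [h]
  ring

lemma continuousAt_g2 (h : Real.cos β < t) : ContinuousAt (g2 β) t := by
  have hu : 0 < t - Real.cos β := by linarith
  have hA := (fbeta_pos h).ne'
  have h1 := (hasDerivAt_fbeta h).continuousAt
  have h2 := (hasDerivAt_fb' h).continuousAt
  unfold g2
  apply ContinuousAt.sub
  · exact (continuousAt_const.mul (h1.rpow_const (Or.inl hA))).mul (h2.pow 2)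
  · refine (continuousAt_const.mul (h1.rpow_const (Or.inl hA))).mul
      (continuousAt_const.div (((continuousAt_id.sub continuousAt_const)).pow 3) ?_)
    simpa using pow_ne_zero 3 hu.ne'

lemma one_sub_cos_rpow (hs : Real.sin β ≠ 0) :
    (1 - Real.cos β) ^ (-(1 / 2) : ℝ) ≤ Real.sqrt 2 / |Real.sin β| := by
  have hc1 := cos_lt_one hs
  have hs2 : 0 < Real.sin β ^ 2 := by positivity
  have h := aux_rpow (a := 2) (b := Real.sin β ^ 2) (A := 1 - Real.cos β)
    (by norm_num) hs2 (by linarith) (half_s2_le hs)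
  rwa [s2_rpow_half, ← Real.sqrt_eq_rpow] at h

end Stmt2Aux

/-- for `k > 0` there is a constant `C > 0` (depending only on `k`) such that
for all `r ≥ 1` and all `β` with `sin β ≠ 0`, the integral
`∫₁^∞ (d/dt)(f_β(t)^{−1/2})) e^{i k r t} dt` converges absolutely and is bounded by
`C·|sin β|^{−2}·r^{−1}`. -/
theorem stmt2 (k : ℝ) (hk : 0 < k) :
    ∃ C > 0, ∀ r β : ℝ, 1 ≤ r → Real.sin β ≠ 0 →
      MeasureTheory.IntegrableOn
        (fun t : ℝ =>
          ((deriv (fun s : ℝ => fbeta β s ^ (-(1 / 2) : ℝ)) t : ℝ) : ℂ) *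
            Complex.exp (Complex.I * ((k * r * t : ℝ) : ℂ)))
        (Set.Ici 1) ∧
      ‖∫ t in Set.Ici (1 : ℝ),
          ((deriv (fun s : ℝ => fbeta β s ^ (-(1 / 2) : ℝ)) t : ℝ) : ℂ) *
            Complex.exp (Complex.I * ((k * r * t : ℝ) : ℂ))‖ ≤
        C * (|Real.sin β| ^ 2)⁻¹ * r⁻¹ := by
  refine ⟨8 / k, by positivity, ?_⟩
  intro r β hr hs
  have hr0 : (0 : ℝ) < r := by linarith
  have hc1 : Real.cos β < 1 := Stmt2Aux.cos_lt_one hs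
  have hs2 : 0 < Real.sin β ^ 2 := by positivity
  set m : ℂ := Complex.I * (k : ℂ) * (r : ℂ) with hm_def
  have hm : m ≠ 0 := by
    simp [hm_def, Complex.I_ne_zero, Complex.ofReal_ne_zero, hk.ne', hr0.ne']
  have hnorm_m : ‖m‖ = k * r := by
    simp [hm_def, norm_mul, Complex.norm_real, Real.norm_eq_abs,
      abs_of_pos hk, abs_of_pos hr0]
  have he_norm : ∀ t : ℝ, ‖Complex.exp (m * (t : ℂ))‖ = 1 := by
    intro t
    rw [Complex.norm_exp]
    have hre : (m * (t : ℂ)).re = 0 := by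
      simp [hm_def, Complex.mul_re, Complex.mul_im]
    rw [hre, Real.exp_zero]
  have he : ∀ x : ℝ, HasDerivAt (fun t : ℝ => Complex.exp (m * (t : ℂ)))
      (m * Complex.exp (m * (x : ℂ))) x := by
    intro x
    have h1 : HasDerivAt (fun z : ℂ => Complex.exp (m * z))
        (Complex.exp (m * (x : ℂ)) * (m * 1)) (x : ℂ) :=
      ((hasDerivAt_id (x : ℂ)).const_mul m).cexp
    have h2 := h1.comp_ofReal
    simpa [mul_comm] using h2
  set G1 : ℝ → ℂ := fun t => ((Stmt2Aux.g1 β t : ℝ) : ℂ) * Complex.exp (m * (t : ℂ)) with hG1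
  set G2 : ℝ → ℂ := fun t => ((Stmt2Aux.g2 β t : ℝ) : ℂ) * Complex.exp (m * (t : ℂ)) with hG2
  have hct : ∀ {t : ℝ}, t ∈ Set.Ici (1 : ℝ) → Real.cos β < t := fun ht =>
    lt_of_lt_of_le hc1 ht
  have hcontG1 : ContinuousOn G1 (Set.Ici 1) := by
    apply ContinuousOn.mul
    · exact Complex.continuous_ofReal.comp_continuousOn fun x hx =>
        ((Stmt2Aux.hasDerivAt_g1 (hct hx)).continuousAt).continuousWithinAt
    · exact (Complex.continuous_exp.comp (continuous_const.mul Complex.continuous_ofReal)).continuousOn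
  have hcontG2 : ContinuousOn G2 (Set.Ici 1) := by
    apply ContinuousOn.mul
    · exact Complex.continuous_ofReal.comp_continuousOn fun x hx =>
        (Stmt2Aux.continuousAt_g2 (hct hx)).continuousWithinAt
    · exact (Complex.continuous_exp.comp (continuous_const.mul Complex.continuous_ofReal)).continuousOn
  have hIntU := Stmt2Aux.u_integrableOn (c := Real.cos β) hc1
  have hIntG1 : MeasureTheory.IntegrableOn G1 (Set.Ioi 1) := by
    apply MeasureTheory.Integrable.mono'
      (g := fun t => Real.sqrt 2 / 2 * (t - Real.cos β) ^ (-(3 / 2) : ℝ))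
      (hIntU.const_mul _)
      ((hcontG1.mono Set.Ioi_subset_Ici_self).aestronglyMeasurable measurableSet_Ioi)
    filter_upwards [MeasureTheory.ae_restrict_mem measurableSet_Ioi] with t ht
    rw [hG1, norm_mul, he_norm, mul_one, Complex.norm_real, Real.norm_eq_abs]
    exact Stmt2Aux.g1_decay (hct (Set.mem_Ici.mpr (le_of_lt ht)))
  have hIntG2 : MeasureTheory.IntegrableOn G2 (Set.Ioi 1) := by
    apply MeasureTheory.Integrable.mono'
      (g := fun t => 7 / 4 * Real.sqrt 2 / |Real.sin β| * (t - Real.cos β) ^ (-(3 / 2) : ℝ))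
      (hIntU.const_mul _)
      ((hcontG2.mono Set.Ioi_subset_Ici_self).aestronglyMeasurable measurableSet_Ioi)
    filter_upwards [MeasureTheory.ae_restrict_mem measurableSet_Ioi] with t ht
    rw [hG2, norm_mul, he_norm, mul_one, Complex.norm_real, Real.norm_eq_abs]
    exact Stmt2Aux.g2_decay hs (hct (Set.mem_Ici.mpr (le_of_lt ht)))
  set F : ℝ → ℂ := fun t => ((Stmt2Aux.g1 β t : ℝ) : ℂ) * Complex.exp (m * (t : ℂ)) * m⁻¹
    with hF_def
  have hF : ∀ x ∈ Set.Ici (1 : ℝ), HasDerivAt F (G2 x * m⁻¹ + G1 x) x := by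
    intro x hx
    have d1 := (Stmt2Aux.hasDerivAt_g1 (hct hx)).ofReal_comp
    have d2 := (d1.mul (he x)).mul_const m⁻¹
    convert d2 using 1
    · rfl
    · rfl
    rw [hG1, hG2]
    field_simp
  have hFtend : Filter.Tendsto F Filter.atTop (nhds 0) := by
    have hb : ∀ᶠ t in Filter.atTop,
        ‖F t‖ ≤ Real.sqrt 2 / 2 * (t - Real.cos β) ^ (-(3 / 2) : ℝ) * ‖m⁻¹‖ := by
      filter_upwards [Filter.eventually_ge_atTop (1 : ℝ)] with t ht
      simp only [hF_def]
      rw [norm_mul, norm_mul, he_norm, mul_one, Complex.norm_real, Real.norm_eq_abs]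
      exact mul_le_mul_of_nonneg_right (Stmt2Aux.g1_decay (hct ht)) (norm_nonneg _)
    have hg : Filter.Tendsto
        (fun t => Real.sqrt 2 / 2 * (t - Real.cos β) ^ (-(3 / 2) : ℝ) * ‖m⁻¹‖)
        Filter.atTop (nhds 0) := by
      have h0 := ((Stmt2Aux.u_tendsto (c := Real.cos β) (p := (3 / 2 : ℝ))
        (by norm_num)).const_mul (Real.sqrt 2 / 2)).mul_const ‖m⁻¹‖
      simpa using h0
    exact squeeze_zero_norm' hb hg
  have hIntF' : MeasureTheory.IntegrableOn (fun x => G2 x * m⁻¹ + G1 x) (Set.Ioi 1) :=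
    (hIntG2.mul_const _).add hIntG1
  have hkey := MeasureTheory.integral_Ioi_of_hasDerivAt_of_tendsto' hF hIntF' hFtend
  have hsplit : ∫ x in Set.Ioi (1 : ℝ), G1 x
      = (0 - F 1) - ∫ x in Set.Ioi (1 : ℝ), G2 x * m⁻¹ := by
    have h1 : ∫ x in Set.Ioi (1 : ℝ), G1 x
        = ∫ x in Set.Ioi (1 : ℝ), ((G2 x * m⁻¹ + G1 x) - G2 x * m⁻¹) := by
      congr 1
      funext x
      ring
    rw [h1, MeasureTheory.integral_sub hIntF' (hIntG2.mul_const _), hkey]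
  have hnormF1 : ‖F 1‖ ≤ (Real.sin β ^ 2)⁻¹ * (k * r)⁻¹ := by
    simp only [hF_def]
    rw [norm_mul, norm_mul, he_norm 1, mul_one, norm_inv, hnorm_m,
      Complex.norm_real, Real.norm_eq_abs]
    apply mul_le_mul_of_nonneg_right _ (by positivity)
    exact Stmt2Aux.g1_at_one hs
  have hnormI2 : ‖∫ x in Set.Ioi (1 : ℝ), G2 x‖
      ≤ 7 / 4 * Real.sqrt 2 / |Real.sin β| * (2 * (1 - Real.cos β) ^ (-(1 / 2) : ℝ)) := by
    have hb := MeasureTheory.norm_integral_le_of_norm_le (f := G2) (hIntU.const_mul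
      (7 / 4 * Real.sqrt 2 / |Real.sin β|))
      (by
        filter_upwards [MeasureTheory.ae_restrict_mem measurableSet_Ioi] with t ht
        rw [hG2, norm_mul, he_norm, mul_one, Complex.norm_real, Real.norm_eq_abs]
        exact Stmt2Aux.g2_decay hs (hct (Set.mem_Ici.mpr (le_of_lt ht))))
    rw [MeasureTheory.integral_const_mul, Stmt2Aux.u_integral hc1] at hb
    exact hb
  have habs2 : |Real.sin β| ≠ 0 := abs_ne_zero.mpr hs
  have hnormG2m : ‖∫ x in Set.Ioi (1 : ℝ), G2 x * m⁻¹‖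
      ≤ 7 * (Real.sin β ^ 2)⁻¹ * (k * r)⁻¹ := by
    rw [MeasureTheory.integral_mul_const, norm_mul, norm_inv, hnorm_m]
    apply mul_le_mul_of_nonneg_right _ (by positivity)
    refine hnormI2.trans ?_
    have h9 := Stmt2Aux.one_sub_cos_rpow hs
    calc 7 / 4 * Real.sqrt 2 / |Real.sin β| * (2 * (1 - Real.cos β) ^ (-(1 / 2) : ℝ))
        ≤ 7 / 4 * Real.sqrt 2 / |Real.sin β| * (2 * (Real.sqrt 2 / |Real.sin β|)) := by
          gcongr
      _ = 7 * (Real.sqrt 2 * Real.sqrt 2) / (2 * (|Real.sin β| * |Real.sin β|)) := by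
          ring
      _ = 7 * (Real.sin β ^ 2)⁻¹ := by
          rw [Real.mul_self_sqrt (by norm_num : (0:ℝ) ≤ 2), abs_mul_abs_self, ← sq]
          field_simp
  -- total bound on ∫ G1
  have htotal : ‖∫ x in Set.Ioi (1 : ℝ), G1 x‖ ≤ 8 / k * (Real.sin β ^ 2)⁻¹ * r⁻¹ := by
    rw [hsplit]
    calc ‖0 - F 1 - ∫ x in Set.Ioi (1 : ℝ), G2 x * m⁻¹‖
        ≤ ‖0 - F 1‖ + ‖∫ x in Set.Ioi (1 : ℝ), G2 x * m⁻¹‖ := norm_sub_le _ _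
      _ = ‖F 1‖ + ‖∫ x in Set.Ioi (1 : ℝ), G2 x * m⁻¹‖ := by rw [zero_sub, norm_neg]
      _ ≤ (Real.sin β ^ 2)⁻¹ * (k * r)⁻¹ + 7 * (Real.sin β ^ 2)⁻¹ * (k * r)⁻¹ :=
          add_le_add hnormF1 hnormG2m
      _ = 8 / k * (Real.sin β ^ 2)⁻¹ * r⁻¹ := by
          rw [mul_inv]
          ring
  -- identify the statement integrand with G1 on Ici 1
  have hEq : Set.EqOn
      (fun t : ℝ =>
        ((deriv (fun s : ℝ => fbeta β s ^ (-(1 / 2) : ℝ)) t : ℝ) : ℂ) *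
          Complex.exp (Complex.I * ((k * r * t : ℝ) : ℂ)))
      G1 (Set.Ici 1) := by
    intro t ht
    have h1 := Stmt2Aux.deriv_g (hct ht)
    simp only [hG1]
    rw [h1]
    congr 1
    rw [hm_def]
    push_cast
    ring
  constructor
  · rw [integrableOn_Ici_iff_integrableOn_Ioi]
    exact (hIntG1.congr_fun (hEq.symm.mono Set.Ioi_subset_Ici_self) measurableSet_Ioi)
  · rw [MeasureTheory.integral_Ici_eq_integral_Ioi,
      MeasureTheory.setIntegral_congr_fun measurableSet_Ioi
        (hEq.mono Set.Ioi_subset_Ici_self)]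
    rw [show |Real.sin β| ^ 2 = Real.sin β ^ 2 from sq_abs _]
    exact htotal
end

section
/- Let k > 0. There exists a constant C > 0, independent of r and β, such that for every r > 0 and every β ∈ ℝ with sin β ≠ 0, the improper integral ∫₁^∞ (d/dt)( f_β(t)^{−3/2}/(t − cos β) ) · e^{i k r t} dt converges absolutely and satisfies |∫₁^∞ (d/dt)( f_β(t)^{−3/2}/(t − cos β) ) e^{i k r t} dt| ≤ C·|sin β|^{−5/2}. -/
open Real MeasureTheory Set Filter


noncomputable def Hf (β t : ℝ) : ℝ :=
  2 ^ ((3:ℝ)/2) * (t - Real.cos β) ^ ((1:ℝ)/2) *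
    ((t - Real.cos β) ^ 2 + Real.sin β ^ 2) ^ (-(3/2) : ℝ)

noncomputable def Df (β t : ℝ) : ℝ :=
  2 ^ ((1:ℝ)/2) * (t - Real.cos β) ^ (-(1/2) : ℝ) *
    ((t - Real.cos β) ^ 2 + Real.sin β ^ 2) ^ (-(5/2) : ℝ) *
    (Real.sin β ^ 2 - 5 * (t - Real.cos β) ^ 2)

lemma cos_lt_one' {β : ℝ} (hβ : Real.sin β ≠ 0) : Real.cos β < 1 := by
  rcases lt_or_eq_of_le (Real.cos_le_one β) with h | h
  · exact h
  · exfalso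
    have h2 := Real.sin_sq_add_cos_sq β
    rw [h] at h2
    exact hβ (by nlinarith [sq_nonneg (Real.sin β)])

lemma P_pos {β : ℝ} (hβ : Real.sin β ≠ 0) (t : ℝ) :
    0 < (t - Real.cos β) ^ 2 + Real.sin β ^ 2 := by
  have : 0 < Real.sin β ^ 2 := by positivity
  nlinarith [sq_nonneg (t - Real.cos β)]

lemma hasDerivAt_Hf {β t : ℝ} (hβ : Real.sin β ≠ 0) (ht : Real.cos β < t) :
    HasDerivAt (Hf β) (Df β t) t := by
  have hu : 0 < t - Real.cos β := by linarith
  have hP := P_pos hβ t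
  have h1 : HasDerivAt (fun s : ℝ => s - Real.cos β) 1 t :=
    (hasDerivAt_id t).sub_const _
  have h2 : HasDerivAt (fun s : ℝ => (s - Real.cos β) ^ ((1:ℝ)/2))
      (1 * ((1:ℝ)/2) * (t - Real.cos β) ^ ((1:ℝ)/2 - 1)) t :=
    h1.rpow_const (Or.inl hu.ne')
  have h3 : HasDerivAt (fun s : ℝ => (s - Real.cos β) ^ 2 + Real.sin β ^ 2)
      (2 * (t - Real.cos β) ^ 1 * 1) t := (h1.pow 2).add_const _
  have h4 : HasDerivAt (fun s : ℝ => ((s - Real.cos β) ^ 2 + Real.sin β ^ 2) ^ (-(3/2):ℝ))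
      ((2 * (t - Real.cos β) ^ 1 * 1) * (-(3/2):ℝ) *
        ((t - Real.cos β) ^ 2 + Real.sin β ^ 2) ^ ((-(3/2):ℝ) - 1)) t :=
    h3.rpow_const (Or.inl hP.ne')
  have h5 := (h2.mul h4).const_mul (2 ^ ((3:ℝ)/2) : ℝ)
  convert h5 using 1
  · rfl
  · rfl
  · funext s; simp only [Hf, Pi.mul_apply]; ring
  · have e1 : ((1:ℝ)/2 - 1) = (-(1/2):ℝ) := by norm_num
    have e2 : ((-(3/2):ℝ) - 1) = (-(5/2):ℝ) := by norm_num
    have e3 : ((t - Real.cos β) ^ 2 + Real.sin β ^ 2) ^ (-(3/2):ℝ)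
        = ((t - Real.cos β) ^ 2 + Real.sin β ^ 2) ^ (-(5/2):ℝ)
          * ((t - Real.cos β) ^ 2 + Real.sin β ^ 2) := by
      have h := Real.rpow_add hP (-(5/2)) 1
      rw [Real.rpow_one] at h
      norm_num at h ⊢
      rw [← h]
    have e4 : (t - Real.cos β) ^ ((1:ℝ)/2)
        = (t - Real.cos β) ^ (-(1/2):ℝ) * (t - Real.cos β) := by
      have h := Real.rpow_add hu (-(1/2)) 1
      rw [Real.rpow_one] at h
      norm_num at h ⊢
      rw [← h]
    have e5 : (2:ℝ) ^ ((3:ℝ)/2) = 2 ^ ((1:ℝ)/2) * 2 := by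
      have h := Real.rpow_add (two_pos (α := ℝ)) (1/2) 1
      rw [Real.rpow_one] at h
      norm_num at h ⊢
      rw [← h]
    rw [Df, e1, e2, e3, e4, e5]
    ring

lemma fbeta_eq (β t : ℝ) :
    fbeta β t = ((t - Real.cos β) ^ 2 + Real.sin β ^ 2) / (2 * (t - Real.cos β)) := by
  unfold fbeta
  have h : t ^ 2 - 2 * t * Real.cos β + 1 = (t - Real.cos β) ^ 2 + Real.sin β ^ 2 := by
    linear_combination -Real.sin_sq_add_cos_sq β
  rw [h]

lemma orig_eq_Hf {β t : ℝ} (hβ : Real.sin β ≠ 0) (ht : Real.cos β < t) :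
    fbeta β t ^ (-(3/2) : ℝ) / (t - Real.cos β) = Hf β t := by
  have hu : 0 < t - Real.cos β := by linarith
  have hP := P_pos hβ t
  rw [fbeta_eq]
  have key : (((t - Real.cos β) ^ 2 + Real.sin β ^ 2) / (2 * (t - Real.cos β))) ^ (-(3/2) : ℝ)
      = (2 * (t - Real.cos β)) ^ ((3:ℝ)/2)
        * ((t - Real.cos β) ^ 2 + Real.sin β ^ 2) ^ (-(3/2) : ℝ) := by
    have h1 : (-(3/2) : ℝ) = -((3:ℝ)/2) := by norm_num
    rw [h1, Real.rpow_neg (by positivity), Real.div_rpow hP.le (by positivity),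
      Real.rpow_neg hP.le]
    field_simp
  rw [key, Real.mul_rpow (by norm_num) hu.le, Hf]
  have e4 : (t - Real.cos β) ^ ((3:ℝ)/2)
      = (t - Real.cos β) ^ ((1:ℝ)/2) * (t - Real.cos β) := by
    have h := Real.rpow_add hu (1/2) 1
    rw [Real.rpow_one] at h
    norm_num at h ⊢
    rw [← h]
  rw [e4]
  field_simp

lemma deriv_eq_Df {β t : ℝ} (hβ : Real.sin β ≠ 0) (ht : Real.cos β < t) :
    deriv (fun s : ℝ => fbeta β s ^ (-(3 / 2) : ℝ) / (s - Real.cos β)) t = Df β t := by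
  have heq : (fun s : ℝ => fbeta β s ^ (-(3 / 2) : ℝ) / (s - Real.cos β)) =ᶠ[nhds t] Hf β :=
    eventually_of_mem (Ioi_mem_nhds ht) (fun s hs => orig_eq_Hf hβ hs)
  rw [heq.deriv_eq, (hasDerivAt_Hf hβ ht).deriv]

lemma Hf_nonneg {β t : ℝ} (ht : Real.cos β ≤ t) : 0 ≤ Hf β t := by
  have hu : 0 ≤ t - Real.cos β := by linarith
  unfold Hf
  positivity

lemma Hf_le {β t : ℝ} (hβ : Real.sin β ≠ 0) (ht : Real.cos β < t) :
    Hf β t ≤ 2 * |Real.sin β| ^ (-(5/2) : ℝ) := by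
  set b := |Real.sin β| with hb
  have hb0 : 0 < b := abs_pos.mpr hβ
  have hu : 0 < t - Real.cos β := by linarith
  set u := t - Real.cos β with hudef
  have hs2 : Real.sin β ^ 2 = b ^ 2 := (sq_abs _).symm
  have hP : 0 < u ^ 2 + Real.sin β ^ 2 := P_pos hβ t
  set P := u ^ 2 + Real.sin β ^ 2 with hPdef
  have key : 2 * u * b ^ 5 ≤ P ^ 3 := by
    rw [hPdef, hs2]
    nlinarith [mul_nonneg (pow_nonneg hb0.le 4) (sq_nonneg (u - b)),
      pow_nonneg hu.le 6, mul_nonneg (pow_nonneg hu.le 4) (sq_nonneg b),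
      mul_nonneg (sq_nonneg u) (pow_nonneg hb0.le 4)]
  have key2 : (2 * u * b ^ 5) ^ ((1:ℝ)/2) ≤ (P ^ 3) ^ ((1:ℝ)/2) :=
    Real.rpow_le_rpow (by positivity) key (by norm_num)
  have lhs_eq : (2 * u * b ^ 5) ^ ((1:ℝ)/2)
      = 2 ^ ((1:ℝ)/2) * u ^ ((1:ℝ)/2) * b ^ ((5:ℝ)/2) := by
    rw [Real.mul_rpow (by positivity) (by positivity),
      Real.mul_rpow (by norm_num) hu.le]
    congr 1
    rw [← Real.rpow_natCast b 5, ← Real.rpow_mul hb0.le]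
    norm_num
  have rhs_eq : (P ^ 3) ^ ((1:ℝ)/2) = P ^ ((3:ℝ)/2) := by
    rw [← Real.rpow_natCast P 3, ← Real.rpow_mul hP.le]
    norm_num
  rw [lhs_eq, rhs_eq] at key2
  have hinvs : |Real.sin β| ^ (-(5/2) : ℝ) = (b ^ ((5:ℝ)/2))⁻¹ := by
    rw [← hb, show (-(5/2) : ℝ) = -((5:ℝ)/2) by norm_num, Real.rpow_neg hb0.le]
  have hinvP : P ^ (-(3/2) : ℝ) = (P ^ ((3:ℝ)/2))⁻¹ := by
    rw [show (-(3/2) : ℝ) = -((3:ℝ)/2) by norm_num, Real.rpow_neg hP.le]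
  rw [Hf, hinvs, ← hudef, ← hPdef, hinvP]
  have e5 : (2:ℝ) ^ ((3:ℝ)/2) = 2 ^ ((1:ℝ)/2) * 2 := by
    have h := Real.rpow_add (two_pos (α := ℝ)) (1/2) 1
    rw [Real.rpow_one] at h
    norm_num at h ⊢
    rw [← h]
  have h1 : 0 < P ^ ((3:ℝ)/2) := Real.rpow_pos_of_pos hP _
  have h2 : 0 < b ^ ((5:ℝ)/2) := Real.rpow_pos_of_pos hb0 _
  rw [← div_eq_mul_inv, ← div_eq_mul_inv, div_le_div_iff₀ h1 h2, e5]
  nlinarith [key2, Real.rpow_nonneg hu.le ((1:ℝ)/2), h2.le]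

lemma tendsto_Hf {β : ℝ} (hβ : Real.sin β ≠ 0) :
    Tendsto (Hf β) atTop (nhds 0) := by
  have hmaj : Tendsto (fun t : ℝ => 2 ^ ((3:ℝ)/2) * (t - Real.cos β) ^ (-(5/2) : ℝ))
      atTop (nhds 0) := by
    have h1 : Tendsto (fun t : ℝ => t - Real.cos β) atTop atTop :=
      tendsto_atTop_add_const_right _ _ tendsto_id
    have h2 : Tendsto (fun x : ℝ => x ^ (-(5/2) : ℝ)) atTop (nhds 0) :=
      tendsto_rpow_neg_atTop (by norm_num)
    have := (h2.comp h1).const_mul (2 ^ ((3:ℝ)/2) : ℝ)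
    simpa using this
  apply squeeze_zero' (t₀ := atTop)
  · filter_upwards [eventually_gt_atTop (Real.cos β)] with t ht
    have hu : 0 ≤ t - Real.cos β := by linarith
    unfold Hf; positivity
  · filter_upwards [eventually_gt_atTop (Real.cos β)] with t ht
    have hu : 0 < t - Real.cos β := by linarith
    have hP := P_pos hβ t
    unfold Hf
    have hle : ((t - Real.cos β) ^ 2 + Real.sin β ^ 2) ^ (-(3/2) : ℝ)
        ≤ ((t - Real.cos β) ^ 2) ^ (-(3/2) : ℝ) := by
      apply Real.rpow_le_rpow_of_nonpos (by positivity) (by nlinarith [sq_nonneg (Real.sin β)])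
      norm_num
    have heq : ((t - Real.cos β) ^ 2) ^ (-(3/2) : ℝ) = (t - Real.cos β) ^ (-(3:ℝ)) := by
      rw [← Real.rpow_natCast (t - Real.cos β) 2, ← Real.rpow_mul hu.le]
      norm_num
    calc 2 ^ ((3:ℝ)/2) * (t - Real.cos β) ^ ((1:ℝ)/2) *
          ((t - Real.cos β) ^ 2 + Real.sin β ^ 2) ^ (-(3/2) : ℝ)
        ≤ 2 ^ ((3:ℝ)/2) * (t - Real.cos β) ^ ((1:ℝ)/2) * (t - Real.cos β) ^ (-(3:ℝ)) := by
          rw [← heq]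
          apply mul_le_mul_of_nonneg_left hle (by positivity)
      _ = 2 ^ ((3:ℝ)/2) * (t - Real.cos β) ^ (-(5/2) : ℝ) := by
          rw [mul_assoc, ← Real.rpow_add hu]
          norm_num
  · exact hmaj

lemma abs_Df_le {β t : ℝ} (hβ : Real.sin β ≠ 0) (ht : 1 ≤ t) :
    |Df β t| ≤ (5 * 2 ^ ((1:ℝ)/2) * (min 1 (1 - Real.cos β)) ^ (-(7/2) : ℝ))
      * t ^ (-(7/2) : ℝ) := by
  have hc1 : Real.cos β < 1 := cos_lt_one' hβ
  have hu : 0 < t - Real.cos β := by linarith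
  have hP := P_pos hβ t
  set u := t - Real.cos β with hudef
  set P := u ^ 2 + Real.sin β ^ 2 with hPdef
  set m := min 1 (1 - Real.cos β) with hm
  have hm0 : 0 < m := lt_min one_pos (by linarith)
  have hmt : m * t ≤ u := by
    rcases le_or_gt 0 (Real.cos β) with hc | hc
    · have : m ≤ 1 - Real.cos β := min_le_right _ _
      nlinarith
    · have : m ≤ 1 := min_le_left _ _
      nlinarith
  -- |Df| = prefix * |s² - 5u²|
  have habs : |Df β t| = 2 ^ ((1:ℝ)/2) * u ^ (-(1/2) : ℝ) * P ^ (-(5/2) : ℝ)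
      * |Real.sin β ^ 2 - 5 * u ^ 2| := by
    rw [Df, ← hudef, ← hPdef, abs_mul]
    congr 1
    rw [abs_of_nonneg (by positivity)]
  have hfac : |Real.sin β ^ 2 - 5 * u ^ 2| ≤ 5 * P := by
    rw [abs_le]
    constructor <;> nlinarith [sq_nonneg (Real.sin β), sq_nonneg u]
  have step1 : |Df β t| ≤ 5 * 2 ^ ((1:ℝ)/2) * u ^ (-(1/2) : ℝ) * (P ^ (-(5/2) : ℝ) * P) := by
    rw [habs]
    have hpre : (0:ℝ) ≤ 2 ^ ((1:ℝ)/2) * u ^ (-(1/2) : ℝ) * P ^ (-(5/2) : ℝ) := by positivity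
    calc 2 ^ ((1:ℝ)/2) * u ^ (-(1/2) : ℝ) * P ^ (-(5/2) : ℝ) * |Real.sin β ^ 2 - 5 * u ^ 2|
        ≤ 2 ^ ((1:ℝ)/2) * u ^ (-(1/2) : ℝ) * P ^ (-(5/2) : ℝ) * (5 * P) :=
          mul_le_mul_of_nonneg_left hfac hpre
      _ = 5 * 2 ^ ((1:ℝ)/2) * u ^ (-(1/2) : ℝ) * (P ^ (-(5/2) : ℝ) * P) := by ring
  have e3 : P ^ (-(5/2) : ℝ) * P = P ^ (-(3/2) : ℝ) := by
    have h := Real.rpow_add hP (-(5/2)) 1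
    rw [Real.rpow_one] at h
    norm_num at h ⊢
    rw [← h]
  have hPu : P ^ (-(3/2) : ℝ) ≤ u ^ (-(3:ℝ)) := by
    have hle : P ^ (-(3/2) : ℝ) ≤ (u ^ 2) ^ (-(3/2) : ℝ) := by
      apply Real.rpow_le_rpow_of_nonpos (by positivity)
        (by rw [hPdef]; nlinarith [sq_nonneg (Real.sin β)]) (by norm_num)
    have heq : (u ^ 2) ^ (-(3/2) : ℝ) = u ^ (-(3:ℝ)) := by
      rw [← Real.rpow_natCast u 2, ← Real.rpow_mul hu.le]
      norm_num
    rw [← heq]; exact hle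
  have step2 : |Df β t| ≤ 5 * 2 ^ ((1:ℝ)/2) * u ^ (-(7/2) : ℝ) := by
    have e6 : u ^ (-(1/2) : ℝ) * u ^ (-(3:ℝ)) = u ^ (-(7/2) : ℝ) := by
      rw [← Real.rpow_add hu]
      norm_num
    calc |Df β t| ≤ 5 * 2 ^ ((1:ℝ)/2) * u ^ (-(1/2) : ℝ) * (P ^ (-(5/2) : ℝ) * P) := step1
      _ = 5 * 2 ^ ((1:ℝ)/2) * u ^ (-(1/2) : ℝ) * P ^ (-(3/2) : ℝ) := by rw [e3]
      _ ≤ 5 * 2 ^ ((1:ℝ)/2) * u ^ (-(1/2) : ℝ) * u ^ (-(3:ℝ)) := by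
          apply mul_le_mul_of_nonneg_left hPu (by positivity)
      _ = 5 * 2 ^ ((1:ℝ)/2) * u ^ (-(7/2) : ℝ) := by rw [mul_assoc, e6]
  have hut : u ^ (-(7/2) : ℝ) ≤ m ^ (-(7/2) : ℝ) * t ^ (-(7/2) : ℝ) := by
    have h1 : u ^ (-(7/2) : ℝ) ≤ (m * t) ^ (-(7/2) : ℝ) :=
      Real.rpow_le_rpow_of_nonpos (by positivity) hmt (by norm_num)
    have h2 : (m * t) ^ (-(7/2) : ℝ) = m ^ (-(7/2) : ℝ) * t ^ (-(7/2) : ℝ) :=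
      Real.mul_rpow hm0.le (by linarith)
    rw [← h2]; exact h1
  calc |Df β t| ≤ 5 * 2 ^ ((1:ℝ)/2) * u ^ (-(7/2) : ℝ) := step2
    _ ≤ 5 * 2 ^ ((1:ℝ)/2) * (m ^ (-(7/2) : ℝ) * t ^ (-(7/2) : ℝ)) := by
        apply mul_le_mul_of_nonneg_left hut (by positivity)
    _ = 5 * 2 ^ ((1:ℝ)/2) * m ^ (-(7/2) : ℝ) * t ^ (-(7/2) : ℝ) := by ring

lemma continuousOn_Df {β : ℝ} (hβ : Real.sin β ≠ 0) : ContinuousOn (Df β) (Ici 1) := by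
  intro t ht
  have hc1 : Real.cos β < 1 := cos_lt_one' hβ
  have hu : 0 < t - Real.cos β := by
    have : (1:ℝ) ≤ t := ht
    linarith
  have hP := P_pos hβ t
  apply ContinuousAt.continuousWithinAt
  have c1 : ContinuousAt (fun s : ℝ => s - Real.cos β) t := by fun_prop
  have c2 := c1.rpow_const (p := (-(1/2):ℝ)) (Or.inl hu.ne')
  have c3 : ContinuousAt (fun s : ℝ => (s - Real.cos β) ^ 2 + Real.sin β ^ 2) t := by fun_prop
  have c4 := c3.rpow_const (p := (-(5/2):ℝ)) (Or.inl hP.ne')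
  exact ((continuousAt_const.mul c2).mul c4).mul (by fun_prop)

lemma integrableOn_Df {β : ℝ} (hβ : Real.sin β ≠ 0) :
    IntegrableOn (Df β) (Ici 1) := by
  have hrp : IntegrableOn (fun t : ℝ => t ^ (-(7/2) : ℝ)) (Ioi 1) :=
    integrableOn_Ioi_rpow_of_lt (by norm_num) one_pos
  have hmaj : IntegrableOn
      (fun t : ℝ => (5 * 2 ^ ((1:ℝ)/2) * (min 1 (1 - Real.cos β)) ^ (-(7/2) : ℝ))
        * t ^ (-(7/2) : ℝ)) (Ici 1) := by
    rw [integrableOn_Ici_iff_integrableOn_Ioi]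
    exact hrp.const_mul _
  apply Integrable.mono' hmaj
    ((continuousOn_Df hβ).aestronglyMeasurable measurableSet_Ici)
  rw [ae_restrict_iff' measurableSet_Ici]
  exact ae_of_all _ fun t ht => by
    rw [Real.norm_eq_abs]
    exact abs_Df_le hβ ht

lemma key_est {β : ℝ} (hβ : Real.sin β ≠ 0) :
    ∫ t in Ioi (1:ℝ), |Df β t| ≤ 4 * |Real.sin β| ^ (-(5/2) : ℝ) := by
  have hc1 : Real.cos β < 1 := cos_lt_one' hβ
  have hb0 : 0 < |Real.sin β| := abs_pos.mpr hβ
  have hbpow : 0 < |Real.sin β| ^ (-(5/2) : ℝ) := Real.rpow_pos_of_pos hb0 _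
  have hDint : IntegrableOn (Df β) (Ioi 1) :=
    (integrableOn_Df hβ).mono_set Ioi_subset_Ici_self
  have hderiv : ∀ x ∈ Ici (1:ℝ), HasDerivAt (Hf β) (Df β x) x := fun x hx =>
    hasDerivAt_Hf hβ (lt_of_lt_of_le hc1 hx)
  rcases le_or_gt (Real.sin β ^ 2) (5 * (1 - Real.cos β) ^ 2) with hA | hB
  · -- monotone decreasing case
    have hsign : ∀ t ∈ Ioi (1:ℝ), Df β t ≤ 0 := by
      intro t ht
      have ht1 : (1:ℝ) < t := ht
      have hu : 0 < t - Real.cos β := by linarith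
      have : Df β t = (2 ^ ((1:ℝ)/2) * (t - Real.cos β) ^ (-(1/2) : ℝ)
          * ((t - Real.cos β) ^ 2 + Real.sin β ^ 2) ^ (-(5/2) : ℝ))
          * (Real.sin β ^ 2 - 5 * (t - Real.cos β) ^ 2) := by rw [Df]
      rw [this]
      apply mul_nonpos_of_nonneg_of_nonpos (by positivity)
      nlinarith
    have h1 : ∫ t in Ioi (1:ℝ), |Df β t| = ∫ t in Ioi (1:ℝ), -Df β t :=
      setIntegral_congr_fun measurableSet_Ioi fun t ht => abs_of_nonpos (hsign t ht)
    have h2 : ∫ t in Ioi (1:ℝ), Df β t = 0 - Hf β 1 :=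
      integral_Ioi_of_hasDerivAt_of_tendsto' hderiv hDint (tendsto_Hf hβ)
    rw [h1, integral_neg, h2]
    have := Hf_le hβ hc1
    linarith
  · -- bump case: split at T
    set b := |Real.sin β| with hbdef
    set T := Real.cos β + b / Real.sqrt 5 with hT
    have hs5 : (0:ℝ) < Real.sqrt 5 := Real.sqrt_pos.mpr (by norm_num)
    have hs5sq : Real.sqrt 5 ^ 2 = 5 := Real.sq_sqrt (by norm_num)
    have hbsq : b ^ 2 = Real.sin β ^ 2 := sq_abs _
    have hT1 : 1 < T := by
      have h5 : Real.sqrt 5 * (1 - Real.cos β) < b := by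
        apply lt_of_pow_lt_pow_left₀ 2 hb0.le
        rw [mul_pow, hs5sq, hbsq]
        nlinarith
      have h5' : 1 - Real.cos β < b / Real.sqrt 5 := by
        rw [lt_div_iff₀ hs5]
        nlinarith
      rw [hT]
      linarith
    have hTc : Real.cos β < T := by
      rw [hT]
      have : 0 < b / Real.sqrt 5 := by positivity
      linarith
    have hunion : Ioc (1:ℝ) T ∪ Ioi T = Ioi 1 := Ioc_union_Ioi_eq_Ioi hT1.le
    have hint1 : IntegrableOn (fun t => |Df β t|) (Ioc 1 T) :=
      (hDint.mono_set Ioc_subset_Ioi_self).abs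
    have hint2 : IntegrableOn (fun t => |Df β t|) (Ioi T) :=
      (hDint.mono_set (Ioi_subset_Ioi hT1.le)).abs
    have hsplit : ∫ t in Ioi (1:ℝ), |Df β t|
        = (∫ t in Ioc (1:ℝ) T, |Df β t|) + ∫ t in Ioi T, |Df β t| := by
      rw [← hunion, setIntegral_union (Ioc_disjoint_Ioi le_rfl) measurableSet_Ioi hint1 hint2]
    -- signs
    have hsignpos : ∀ t ∈ Ioc (1:ℝ) T, 0 ≤ Df β t := by
      intro t ht
      have hu : 0 < t - Real.cos β := by have := ht.1; linarith
      have hule : (t - Real.cos β) * Real.sqrt 5 ≤ b := by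
        rw [← le_div_iff₀ hs5]
        have := ht.2; rw [hT] at this; linarith
      have h5u : 5 * (t - Real.cos β) ^ 2 ≤ Real.sin β ^ 2 := by
        have h0 : 0 ≤ (t - Real.cos β) * Real.sqrt 5 := by positivity
        have := mul_self_le_mul_self h0 hule
        nlinarith [hs5sq, hbsq]
      have : Df β t = (2 ^ ((1:ℝ)/2) * (t - Real.cos β) ^ (-(1/2) : ℝ)
          * ((t - Real.cos β) ^ 2 + Real.sin β ^ 2) ^ (-(5/2) : ℝ))
          * (Real.sin β ^ 2 - 5 * (t - Real.cos β) ^ 2) := by rw [Df]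
      rw [this]
      apply mul_nonneg (by positivity)
      linarith
    have hsignneg : ∀ t ∈ Ioi T, Df β t ≤ 0 := by
      intro t ht
      have htT : T < t := ht
      have hu : 0 < t - Real.cos β := by linarith
      have huge : b ≤ (t - Real.cos β) * Real.sqrt 5 := by
        rw [← div_le_iff₀ hs5]
        rw [hT] at htT; linarith
      have h5u : Real.sin β ^ 2 ≤ 5 * (t - Real.cos β) ^ 2 := by
        have := mul_self_le_mul_self hb0.le huge
        nlinarith [hs5sq, hbsq]
      have : Df β t = (2 ^ ((1:ℝ)/2) * (t - Real.cos β) ^ (-(1/2) : ℝ)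
          * ((t - Real.cos β) ^ 2 + Real.sin β ^ 2) ^ (-(5/2) : ℝ))
          * (Real.sin β ^ 2 - 5 * (t - Real.cos β) ^ 2) := by rw [Df]
      rw [this]
      apply mul_nonpos_of_nonneg_of_nonpos (by positivity)
      linarith
    -- first piece
    have hp1 : ∫ t in Ioc (1:ℝ) T, |Df β t| = Hf β T - Hf β 1 := by
      have e : ∫ t in Ioc (1:ℝ) T, |Df β t| = ∫ t in Ioc (1:ℝ) T, Df β t :=
        setIntegral_congr_fun measurableSet_Ioc fun t ht => abs_of_nonneg (hsignpos t ht)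
      rw [e, ← intervalIntegral.integral_of_le hT1.le]
      apply intervalIntegral.integral_eq_sub_of_hasDerivAt
      · intro t ht
        rw [uIcc_of_le hT1.le] at ht
        exact hderiv t ht.1
      · rw [intervalIntegrable_iff_integrableOn_Ioc_of_le hT1.le]
        exact hDint.mono_set Ioc_subset_Ioi_self
    -- second piece
    have hp2 : ∫ t in Ioi T, |Df β t| = Hf β T := by
      have e : ∫ t in Ioi T, |Df β t| = ∫ t in Ioi T, -Df β t :=
        setIntegral_congr_fun measurableSet_Ioi fun t ht => abs_of_nonpos (hsignneg t ht)
      have h2 : ∫ t in Ioi T, Df β t = 0 - Hf β T :=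
        integral_Ioi_of_hasDerivAt_of_tendsto'
          (fun x hx => hderiv x (le_trans hT1.le hx))
          (hDint.mono_set (Ioi_subset_Ioi hT1.le)) (tendsto_Hf hβ)
      rw [e, integral_neg, h2]
      ring
    have hHT := Hf_le hβ hTc
    have hH1 := Hf_nonneg (β := β) (t := 1) hc1.le
    rw [hsplit, hp1, hp2]
    linarith

/-- for `k > 0` there is a constant `C > 0` (independent of `r` and `β`) such
that for all `r > 0` and all `β` with `sin β ≠ 0`, the integral
`∫₁^∞ (d/dt)(f_β(t)^{−3/2}/(t − cos β)) e^{i k r t} dt` converges absolutely and is bounded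
by `C·|sin β|^{−5/2}`. -/
theorem stmt3 (k : ℝ) (hk : 0 < k) :
    ∃ C > 0, ∀ r β : ℝ, 0 < r → Real.sin β ≠ 0 →
      MeasureTheory.IntegrableOn
        (fun t : ℝ =>
          ((deriv (fun s : ℝ => fbeta β s ^ (-(3 / 2) : ℝ) / (s - Real.cos β)) t : ℝ) : ℂ) *
            Complex.exp (Complex.I * ((k * r * t : ℝ) : ℂ)))
        (Set.Ici 1) ∧
      ‖∫ t in Set.Ici (1 : ℝ),
          ((deriv (fun s : ℝ => fbeta β s ^ (-(3 / 2) : ℝ) / (s - Real.cos β)) t : ℝ) : ℂ) *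
            Complex.exp (Complex.I * ((k * r * t : ℝ) : ℂ))‖ ≤
        C * |Real.sin β| ^ (-(5 / 2) : ℝ) := by
  refine ⟨4, by norm_num, fun r β hr hβ => ?_⟩
  have hc1 : Real.cos β < 1 := cos_lt_one' hβ
  set F : ℝ → ℂ := fun t =>
    ((deriv (fun s : ℝ => fbeta β s ^ (-(3 / 2) : ℝ) / (s - Real.cos β)) t : ℝ) : ℂ) *
      Complex.exp (Complex.I * ((k * r * t : ℝ) : ℂ)) with hF
  set G : ℝ → ℂ := fun t =>
    ((Df β t : ℝ) : ℂ) * Complex.exp (Complex.I * ((k * r * t : ℝ) : ℂ)) with hG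
  have hEq : EqOn F G (Ici 1) := by
    intro t ht
    have : Real.cos β < t := lt_of_lt_of_le hc1 ht
    simp only [hF, hG, deriv_eq_Df hβ this]
  have hnorm : ∀ t : ℝ, ‖G t‖ = |Df β t| := by
    intro t
    rw [hG]
    simp only
    rw [norm_mul, Complex.norm_real]
    have : ‖Complex.exp (Complex.I * ((k * r * t : ℝ) : ℂ))‖ = 1 := by
      rw [Complex.norm_exp]
      simp
    rw [this, mul_one, Real.norm_eq_abs]
  -- integrability of G
  have hGcont : ContinuousOn G (Ici 1) := by
    apply ContinuousOn.mul
    · exact Complex.continuous_ofReal.comp_continuousOn (continuousOn_Df hβ)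
    · apply Continuous.continuousOn
      fun_prop
  have hGint : IntegrableOn G (Ici 1) := by
    have hmaj : IntegrableOn
        (fun t : ℝ => (5 * 2 ^ ((1:ℝ)/2) * (min 1 (1 - Real.cos β)) ^ (-(7/2) : ℝ))
          * t ^ (-(7/2) : ℝ)) (Ici 1) := by
      rw [integrableOn_Ici_iff_integrableOn_Ioi]
      exact (integrableOn_Ioi_rpow_of_lt (by norm_num) one_pos).const_mul _
    apply Integrable.mono' hmaj (hGcont.aestronglyMeasurable measurableSet_Ici)
    rw [ae_restrict_iff' measurableSet_Ici]
    exact ae_of_all _ fun t ht => by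
      rw [hnorm t]
      exact abs_Df_le hβ ht
  have hFint : IntegrableOn F (Ici 1) :=
    hGint.congr_fun (fun t ht => (hEq ht).symm) measurableSet_Ici
  refine ⟨hFint, ?_⟩
  have hFG : ∫ t in Ici (1:ℝ), F t = ∫ t in Ici (1:ℝ), G t :=
    setIntegral_congr_fun measurableSet_Ici hEq
  have hstep : ‖∫ t in Ici (1:ℝ), G t‖ ≤ ∫ t in Ioi (1:ℝ), |Df β t| := by
    calc ‖∫ t in Ici (1:ℝ), G t‖ ≤ ∫ t in Ici (1:ℝ), ‖G t‖ :=
        norm_integral_le_integral_norm G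
      _ = ∫ t in Ici (1:ℝ), |Df β t| := by simp only [hnorm]
      _ = ∫ t in Ioi (1:ℝ), |Df β t| := integral_Ici_eq_integral_Ioi
  have hkey := key_est hβ
  calc ‖∫ t in Ici (1:ℝ), F t‖ = ‖∫ t in Ici (1:ℝ), G t‖ := by rw [hFG]
    _ ≤ ∫ t in Ioi (1:ℝ), |Df β t| := hstep
    _ ≤ 4 * |Real.sin β| ^ (-(5/2) : ℝ) := hkey
    _ = 4 * |Real.sin β| ^ (-(5 / 2) : ℝ) := by norm_num
end

section
/- Let β ∈ ℝ with sin β ≠ 0 and set a_β = (1 − cos β)/|sin β|. Then the substitution s = (t − cos β)/|sin β| yields the identity ∫₁^∞ f_β(t)^{−5/2} · (|sin β|/(t − cos β)) dt = 2^{5/2} · |sin β|^{−3/2} · ∫_{a_β}^∞ s^{3/2}/(s² + 1)^{5/2} ds; in particular, with C = 2^{5/2} ∫₀^∞ s^{3/2}(s² + 1)^{−5/2} ds < ∞, one has ∫₁^∞ f_β(t)^{−5/2} (|sin β|/(t − cos β)) dt ≤ C·|sin β|^{−3/2}. -/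
open MeasureTheory Set Real

/-- Translation change of variables on `Ioi`. -/
lemma integral_comp_add_right_Ioi' (g : ℝ → ℝ) (a b : ℝ) :
    (∫ x in Set.Ioi a, g (x + b)) = ∫ x in Set.Ioi (a + b), g x := by
  have h₁ : MeasurePreserving (fun x : ℝ => x + b) volume volume :=
    measurePreserving_add_right volume b
  have h₂ : MeasurableEmbedding (fun x : ℝ => x + b) := measurableEmbedding_addRight b
  have := h₁.setIntegral_preimage_emb h₂ g (Set.Ioi (a + b))
  rw [preimage_add_const_Ioi, add_sub_cancel_right] at this
  exact this

/-- The target integrand. -/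
noncomputable def gint (s : ℝ) : ℝ := s ^ ((3 : ℝ) / 2) * (s ^ 2 + 1) ^ (-(5 / 2) : ℝ)

lemma gint_cont : Continuous gint := by
  apply Continuous.mul
  · exact Real.continuous_rpow_const (by norm_num)
  · apply Continuous.rpow_const (by continuity)
    intro x
    left
    positivity

lemma gint_nonneg {s : ℝ} (hs : 0 ≤ s) : 0 ≤ gint s := by
  unfold gint; positivity

lemma gint_integrable : MeasureTheory.IntegrableOn gint (Set.Ioi 0) := by
  have h01 : IntegrableOn gint (Ioc 0 1) := by
    exact (gint_cont.integrableOn_Icc (a := 0) (b := 1)).mono_set Ioc_subset_Icc_self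
  have h1 : IntegrableOn gint (Ioi 1) := by
    have hb : IntegrableOn (fun s : ℝ => s ^ (-(7 / 2) : ℝ)) (Ioi 1) :=
      integrableOn_Ioi_rpow_of_lt (by norm_num) one_pos
    apply hb.mono' (gint_cont.aestronglyMeasurable.restrict)
    filter_upwards [ae_restrict_mem measurableSet_Ioi] with s hs
    have hs1 : (1 : ℝ) < s := hs
    have hs0 : (0 : ℝ) < s := lt_trans one_pos hs1
    rw [Real.norm_eq_abs, abs_of_nonneg (gint_nonneg hs0.le)]
    unfold gint
    have h2 : (s ^ 2 + 1) ^ (-(5 / 2) : ℝ) ≤ (s ^ 2) ^ (-(5 / 2) : ℝ) :=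
      Real.rpow_le_rpow_of_nonpos (by positivity) (by linarith) (by norm_num)
    have h3 : (s ^ 2) ^ (-(5 / 2) : ℝ) = s ^ (-5 : ℝ) := by
      rw [← Real.rpow_natCast s 2, ← Real.rpow_mul hs0.le]
      norm_num
    calc s ^ ((3 : ℝ) / 2) * (s ^ 2 + 1) ^ (-(5 / 2) : ℝ)
        ≤ s ^ ((3 : ℝ) / 2) * (s ^ 2) ^ (-(5 / 2) : ℝ) := by
          apply mul_le_mul_of_nonneg_left h2 (by positivity)
      _ = s ^ (-(7 / 2) : ℝ) := by
          rw [h3, ← Real.rpow_add hs0]; norm_num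
  have : IntegrableOn gint (Ioc 0 1 ∪ Ioi 1) := h01.union h1
  apply this.mono_set
  intro x hx
  rcases le_or_gt x 1 with h | h
  · exact Or.inl ⟨hx, h⟩
  · exact Or.inr h

/-- with `a_β = (1 − cos β)/|sin β|`, the substitution
`s = (t − cos β)/|sin β|` gives
`∫₁^∞ f_β(t)^{−5/2}(|sin β|/(t − cos β)) dt
  = 2^{5/2}|sin β|^{−3/2} ∫_{a_β}^∞ s^{3/2}(s²+1)^{−5/2} ds`;
with `C = 2^{5/2}∫₀^∞ s^{3/2}(s²+1)^{−5/2} ds < ∞` (i.e. the integrand is integrable on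
`(0,∞)`), the left-hand side is `≤ C·|sin β|^{−3/2}`. -/
theorem stmt4 (β : ℝ) (hβ : Real.sin β ≠ 0) :
    (∫ t in Set.Ioi (1 : ℝ),
        fbeta β t ^ (-(5 / 2) : ℝ) * (|Real.sin β| / (t - Real.cos β))) =
      2 ^ ((5 : ℝ) / 2) * |Real.sin β| ^ (-(3 / 2) : ℝ) *
        ∫ s in Set.Ioi ((1 - Real.cos β) / |Real.sin β|),
          s ^ ((3 : ℝ) / 2) * (s ^ 2 + 1) ^ (-(5 / 2) : ℝ) ∧
    MeasureTheory.IntegrableOn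
      (fun s : ℝ => s ^ ((3 : ℝ) / 2) * (s ^ 2 + 1) ^ (-(5 / 2) : ℝ)) (Set.Ioi 0) ∧
    (∫ t in Set.Ioi (1 : ℝ),
        fbeta β t ^ (-(5 / 2) : ℝ) * (|Real.sin β| / (t - Real.cos β))) ≤
      (2 ^ ((5 : ℝ) / 2) *
          ∫ s in Set.Ioi (0 : ℝ), s ^ ((3 : ℝ) / 2) * (s ^ 2 + 1) ^ (-(5 / 2) : ℝ)) *
        |Real.sin β| ^ (-(3 / 2) : ℝ) := by
  set σ := |Real.sin β| with hσdef
  set c := Real.cos β with hcdef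
  have hσ : 0 < σ := abs_pos.mpr hβ
  have hc : c < 1 := by
    by_contra h
    push_neg at h
    have hc1 : c = 1 := le_antisymm (Real.cos_le_one β) h
    have := Real.sin_sq_add_cos_sq β
    rw [← hcdef, hc1] at this
    have : Real.sin β ^ 2 = 0 := by nlinarith
    exact hβ (by nlinarith [sq_nonneg (Real.sin β)])
  have hσsq : σ ^ 2 = 1 - c ^ 2 := by
    rw [hσdef, sq_abs]
    have := Real.sin_sq_add_cos_sq β
    rw [← hcdef] at this; linarith
  -- key pointwise identity
  have key : ∀ t ∈ Ioi (1 : ℝ),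
      fbeta β t ^ (-(5 / 2) : ℝ) * (σ / (t - c)) =
        2 ^ ((5 : ℝ) / 2) * σ ^ (-(5 / 2) : ℝ) * gint ((t - c) / σ) := by
    intro t ht
    have ht1 : (1 : ℝ) < t := ht
    have hu : 0 < t - c := by linarith
    set s := (t - c) / σ with hsdef
    have hs : 0 < s := div_pos hu hσ
    have e1 : fbeta β t = σ * (s ^ 2 + 1) / (2 * s) := by
      unfold fbeta
      rw [← hcdef, hsdef]
      rw [show t ^ 2 - 2 * t * c + 1 = (t - c) ^ 2 + σ ^ 2 by rw [hσsq]; ring]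
      rw [div_eq_div_iff (by positivity) (by positivity)]
      field_simp
    rw [e1]
    have hX : σ * (s ^ 2 + 1) / (2 * s) = (σ * (s ^ 2 + 1)) * (2 * s)⁻¹ := by
      ring
    have h2s : (0 : ℝ) < 2 * s := by positivity
    have hsp : (0 : ℝ) < s ^ 2 + 1 := by positivity
    have hrw : (σ * (s ^ 2 + 1) / (2 * s)) ^ (-(5 / 2) : ℝ)
        = σ ^ (-(5 / 2) : ℝ) * (s ^ 2 + 1) ^ (-(5 / 2) : ℝ) * (2 * s) ^ ((5 : ℝ) / 2) := by
      rw [Real.div_rpow (by positivity) h2s.le,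
        Real.mul_rpow hσ.le hsp.le,
        Real.rpow_neg h2s.le]
      rw [div_eq_mul_inv, inv_inv]
    rw [hrw, Real.mul_rpow (by norm_num) hs.le]
    have hσu : σ / (t - c) = s⁻¹ := by
      rw [hsdef]
      field_simp
    rw [hσu]
    unfold gint
    have hs32 : s ^ ((5 : ℝ) / 2) * s⁻¹ = s ^ ((3 : ℝ) / 2) := by
      rw [← Real.rpow_neg_one s, ← Real.rpow_add hs]
      norm_num
    calc σ ^ (-(5 / 2) : ℝ) * (s ^ 2 + 1) ^ (-(5 / 2) : ℝ) *
          (2 ^ ((5 : ℝ) / 2) * s ^ ((5 : ℝ) / 2)) * s⁻¹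
        = 2 ^ ((5 : ℝ) / 2) * σ ^ (-(5 / 2) : ℝ) *
            ((s ^ ((5 : ℝ) / 2) * s⁻¹) * (s ^ 2 + 1) ^ (-(5 / 2) : ℝ)) := by ring
      _ = 2 ^ ((5 : ℝ) / 2) * σ ^ (-(5 / 2) : ℝ) *
            (s ^ ((3 : ℝ) / 2) * (s ^ 2 + 1) ^ (-(5 / 2) : ℝ)) := by rw [hs32]
  -- the main change-of-variables computation
  have main : (∫ t in Set.Ioi (1 : ℝ),
      fbeta β t ^ (-(5 / 2) : ℝ) * (σ / (t - c))) =
      2 ^ ((5 : ℝ) / 2) * σ ^ (-(3 / 2) : ℝ) * ∫ s in Set.Ioi ((1 - c) / σ), gint s := by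
    rw [setIntegral_congr_fun measurableSet_Ioi key]
    rw [integral_const_mul]
    have step1 : (∫ t in Set.Ioi (1 : ℝ), gint ((t - c) / σ))
        = ∫ u in Set.Ioi (1 - c), gint (u / σ) := by
      have := integral_comp_add_right_Ioi' (fun u => gint (u / σ)) 1 (-c)
      simp only [← sub_eq_add_neg] at this
      exact this
    have step2 : (∫ u in Set.Ioi (1 - c), gint (u / σ))
        = σ * ∫ s in Set.Ioi ((1 - c) / σ), gint s := by
      have := integral_comp_mul_right_Ioi gint (1 - c) (b := σ⁻¹) (inv_pos.mpr hσ)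
      simp only [div_eq_mul_inv, inv_inv, smul_eq_mul] at this ⊢
      rw [this]
    rw [step1, step2]
    have hσpow : σ ^ (-(5 / 2) : ℝ) * σ = σ ^ (-(3 / 2) : ℝ) := by
      nth_rewrite 2 [← Real.rpow_one σ]
      rw [← Real.rpow_add hσ]
      norm_num
    calc 2 ^ ((5 : ℝ) / 2) * σ ^ (-(5 / 2) : ℝ) * (σ * ∫ s in Set.Ioi ((1 - c) / σ), gint s)
        = 2 ^ ((5 : ℝ) / 2) * (σ ^ (-(5 / 2) : ℝ) * σ) *
            ∫ s in Set.Ioi ((1 - c) / σ), gint s := by ring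
      _ = _ := by rw [hσpow]
  refine ⟨main, gint_integrable, ?_⟩
  rw [main]
  have ha : 0 < (1 - c) / σ := div_pos (by linarith) hσ
  have hmono : (∫ s in Set.Ioi ((1 - c) / σ), gint s) ≤ ∫ s in Set.Ioi (0 : ℝ), gint s := by
    apply setIntegral_mono_set gint_integrable
    · filter_upwards [ae_restrict_mem measurableSet_Ioi] with s hs
      exact gint_nonneg (le_of_lt hs)
    · exact Filter.Eventually.of_forall fun x hx => lt_trans ha hx
  calc 2 ^ ((5 : ℝ) / 2) * σ ^ (-(3 / 2) : ℝ) * ∫ s in Set.Ioi ((1 - c) / σ), gint s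
      ≤ 2 ^ ((5 : ℝ) / 2) * σ ^ (-(3 / 2) : ℝ) * ∫ s in Set.Ioi (0 : ℝ), gint s := by
        apply mul_le_mul_of_nonneg_left hmono (by positivity)
    _ = (2 ^ ((5 : ℝ) / 2) * ∫ s in Set.Ioi (0 : ℝ), gint s) * σ ^ (-(3 / 2) : ℝ) := by ring
end

section
/- Let h > 0 and suppose k = Mπ/h for a positive integer M (equivalently e^{2 i k h} = 1), and let x₂ ∈ ℝ. Then ξ = 0 is a zero of order exactly two of the function D(ξ) = 1 − e^{2 i μ(ξ) h}: precisely, lim_{ξ → 0} (1 − e^{2 i μ(ξ) h})/ξ² = i h/k ≠ 0. Consequently the quotient F(ξ) = (e^{−i μ(ξ) x₂} − e^{i μ(ξ)(x₂ + 2h)})/(1 − e^{2 i μ(ξ) h}) satisfies lim_{ξ → 0} ξ²·F(ξ) = −(2k/h)·sin(k x₂). -/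
open Complex Filter

lemma cpow_half_sq (z : ℂ) : (z ^ ((1:ℂ)/2)) ^ 2 = z := by
  by_cases hz : z = 0
  · rw [hz, Complex.zero_cpow (by norm_num : (1:ℂ)/2 ≠ 0)]; ring
  · rw [sq, ← Complex.cpow_add _ _ hz]; norm_num

/-- in the cutoff case `k = Mπ/h` (so `e^{2ikh} = 1`), `ξ = 0` is a zero of
order exactly two of `D(ξ) = 1 − e^{2iμ(ξ)h}` (with `μ(ξ) = (k² − ξ²)^{1/2}` the principal
branch): `D(ξ)/ξ² → ih/k ≠ 0` as `ξ → 0`, `ξ ≠ 0`, and consequently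
`ξ²·F(ξ) → −(2k/h)·sin(k x₂)`. -/
theorem stmt6 (k h x₂ : ℝ) (hh : 0 < h) (M : ℕ) (hM : 0 < M)
    (hkM : k = M * Real.pi / h)
    (μ D F : ℂ → ℂ)
    (hμ : ∀ ξ : ℂ, μ ξ = ((k : ℂ) ^ 2 - ξ ^ 2) ^ ((1 : ℂ) / 2))
    (hD : ∀ ξ : ℂ, D ξ = 1 - Complex.exp (2 * Complex.I * μ ξ * (h : ℂ)))
    (hF : ∀ ξ : ℂ, F ξ =
      (Complex.exp (-Complex.I * μ ξ * (x₂ : ℂ)) -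
        Complex.exp (Complex.I * μ ξ * ((x₂ : ℂ) + 2 * (h : ℂ)))) / D ξ) :
    Filter.Tendsto (fun ξ : ℂ => D ξ / ξ ^ 2)
      (nhdsWithin (0 : ℂ) {(0 : ℂ)}ᶜ)
      (nhds (Complex.I * (h : ℂ) / (k : ℂ))) ∧
    (Complex.I * (h : ℂ) / (k : ℂ)) ≠ 0 ∧
    Filter.Tendsto (fun ξ : ℂ => ξ ^ 2 * F ξ)
      (nhdsWithin (0 : ℂ) {(0 : ℂ)}ᶜ)
      (nhds (-((2 * k / h : ℝ) : ℂ) * ((Real.sin (k * x₂) : ℝ) : ℂ))) := by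
  have hπ := Real.pi_pos
  have hk : 0 < k := by
    rw [hkM]
    have : (0:ℝ) < M := by exact_mod_cast hM
    positivity
  have hkc : (k:ℂ) ≠ 0 := by exact_mod_cast hk.ne'
  have hhc : (h:ℂ) ≠ 0 := by exact_mod_cast hh.ne'
  -- μ squared
  have μsq : ∀ ξ : ℂ, (μ ξ) ^ 2 = (k:ℂ)^2 - ξ^2 := fun ξ => by
    rw [hμ ξ]; exact cpow_half_sq _
  -- μ 0 = k
  have μ0 : μ 0 = (k:ℂ) := by
    rw [hμ 0]
    have h1 : ((k:ℂ)^2 - 0^2) = ((k^2 : ℝ) : ℂ) := by push_cast; ring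
    rw [h1, show ((1:ℂ)/2) = ((1/2 : ℝ) : ℂ) by norm_num,
      ← Complex.ofReal_cpow (by positivity) (1/2)]
    norm_cast
    rw [show (1/2 : ℝ) = ((2:ℕ):ℝ)⁻¹ by norm_num]
    exact Real.pow_rpow_inv_natCast hk.le two_ne_zero
  -- μ ξ + k ≠ 0 always
  have μadd : ∀ ξ : ℂ, μ ξ + (k:ℂ) ≠ 0 := by
    intro ξ hc
    have hmk : μ ξ = -(k:ℂ) := by linear_combination hc
    have hξ : ξ ^ 2 = 0 := by
      have := μsq ξ; rw [hmk] at this; linear_combination this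
    have hξ0 : ξ = 0 := by exact pow_eq_zero_iff two_ne_zero |>.mp hξ
    rw [hξ0, μ0] at hmk
    have : (k:ℂ) = 0 := by linear_combination hmk/2
    exact hkc this
  -- μ ξ ≠ k for ξ ≠ 0
  have μne : ∀ ξ : ℂ, ξ ≠ 0 → μ ξ - (k:ℂ) ≠ 0 := by
    intro ξ hξ hc
    have : ξ ^ 2 = 0 := by
      have h1 := μsq ξ
      have hmk : μ ξ = (k:ℂ) := by linear_combination hc
      rw [hmk] at h1; linear_combination h1
    exact hξ (pow_eq_zero_iff two_ne_zero |>.mp this)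
  -- continuity of μ at 0
  have μcont : ContinuousAt μ 0 := by
    have hbase : ContinuousAt (fun ξ : ℂ => (k:ℂ)^2 - ξ^2) 0 := by fun_prop
    have hmem : (0:ℝ) < ((k:ℂ)^2 - (0:ℂ)^2).re ∨ ((k:ℂ)^2 - (0:ℂ)^2).im ≠ 0 := by
      have he : ((k:ℂ)^2 - (0:ℂ)^2) = ((k^2:ℝ):ℂ) := by push_cast; ring
      rw [he]; left; rw [Complex.ofReal_re]; positivity
    have := hbase.cpow (continuousAt_const (y := (1:ℂ)/2)) hmem
    exact ContinuousAt.congr this (by filter_upwards with ξ using (hμ ξ).symm)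
  -- e^{2ikh} = 1
  have hkh : (k:ℂ) * (h:ℂ) = (M:ℂ) * (Real.pi : ℂ) := by
    have : k * h = M * Real.pi := by
      rw [hkM]; field_simp
    exact_mod_cast this
  have hexp1 : Complex.exp (2 * Complex.I * (k:ℂ) * (h:ℂ)) = 1 := by
    have : 2 * Complex.I * (k:ℂ) * (h:ℂ) = (M:ℤ) * (2 * (Real.pi:ℂ) * Complex.I) := by
      push_cast
      rw [show 2 * Complex.I * (k:ℂ) * (h:ℂ) = ((k:ℂ) * (h:ℂ)) * (2 * Complex.I) by ring, hkh]
      ring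
    rw [this, Complex.exp_int_mul_two_pi_mul_I]
  set w : ℂ → ℂ := fun ξ => 2 * Complex.I * (h:ℂ) * (μ ξ - (k:ℂ)) with hw
  have hwne : ∀ ξ : ℂ, ξ ≠ 0 → w ξ ≠ 0 := by
    intro ξ hξ
    simp only [hw]
    exact mul_ne_zero (by simp [Complex.I_ne_zero, hhc]) (μne ξ hξ)
  have hDw : ∀ ξ : ℂ, D ξ = 1 - Complex.exp (w ξ) := by
    intro ξ
    rw [hD ξ, hw]
    congr 1
    rw [show 2 * Complex.I * μ ξ * (h:ℂ)
        = 2 * Complex.I * (h:ℂ) * (μ ξ - (k:ℂ)) + 2 * Complex.I * (k:ℂ) * (h:ℂ) by ring,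
      Complex.exp_add, hexp1, mul_one]
  -- limit of (1 - exp w)/w at 0 (punctured) is -1
  have hslope : Tendsto (fun z : ℂ => (1 - Complex.exp z) / z) (nhdsWithin 0 {0}ᶜ) (nhds (-1)) := by
    have h1 : Tendsto (slope Complex.exp 0) (nhdsWithin 0 {0}ᶜ) (nhds 1) := by
      have := hasDerivAt_iff_tendsto_slope.mp (Complex.hasDerivAt_exp 0)
      rwa [Complex.exp_zero] at this
    have h2 := h1.neg
    rw [show -(1:ℂ) = -1 from rfl] at h2
    refine h2.congr' ?_
    filter_upwards [self_mem_nhdsWithin] with z hz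
    simp only [slope, Complex.exp_zero, sub_zero, vsub_eq_sub]
    rw [smul_eq_mul]; ring
  -- w tends to 0 within punctured
  have hwt : Tendsto w (nhdsWithin 0 {0}ᶜ) (nhdsWithin 0 {0}ᶜ) := by
    rw [tendsto_nhdsWithin_iff]
    constructor
    · have hcw : ContinuousAt w 0 := by
        apply ContinuousAt.mul continuousAt_const
        exact μcont.sub continuousAt_const
      have : w 0 = 0 := by simp [hw, μ0]
      simpa [this] using hcw.tendsto.mono_left nhdsWithin_le_nhds
    · filter_upwards [self_mem_nhdsWithin] with ξ hξ
      exact hwne ξ hξ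
  have hA : Tendsto (fun ξ : ℂ => (1 - Complex.exp (w ξ)) / w ξ)
      (nhdsWithin 0 {0}ᶜ) (nhds (-1)) := hslope.comp hwt
  have hB : Tendsto (fun ξ : ℂ => -1 / (μ ξ + (k:ℂ))) (nhdsWithin 0 {0}ᶜ)
      (nhds (-1 / (2*(k:ℂ)))) := by
    have : ContinuousAt (fun ξ : ℂ => -1 / (μ ξ + (k:ℂ))) 0 := by
      apply ContinuousAt.div continuousAt_const (μcont.add continuousAt_const)
      exact μadd 0
    have h0 : (fun ξ : ℂ => -1 / (μ ξ + (k:ℂ))) 0 = -1 / (2*(k:ℂ)) := by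
      simp only [μ0]; ring_nf
    simpa [h0] using this.tendsto.mono_left nhdsWithin_le_nhds
  have L1 : Tendsto (fun ξ : ℂ => D ξ / ξ ^ 2) (nhdsWithin (0:ℂ) {(0:ℂ)}ᶜ)
      (nhds (Complex.I * (h:ℂ) / (k:ℂ))) := by
    have hprod := (hA.mul_const (2 * Complex.I * (h:ℂ))).mul hB
    have hval : -1 * (2 * Complex.I * (h:ℂ)) * (-1 / (2*(k:ℂ)))
        = Complex.I * (h:ℂ) / (k:ℂ) := by field_simp
    rw [hval] at hprod
    refine hprod.congr' ?_
    filter_upwards [self_mem_nhdsWithin] with ξ hξ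
    have hξ0 : ξ ≠ (0:ℂ) := hξ
    have key : (μ ξ - (k:ℂ)) * (μ ξ + (k:ℂ)) = -ξ^2 := by
      linear_combination μsq ξ
    have hwnz := hwne ξ hξ0
    have haz := μadd ξ
    have hξ2 : ξ ^ 2 ≠ 0 := pow_ne_zero 2 hξ0
    have hw' : w ξ = 2 * Complex.I * (h:ℂ) * (μ ξ - (k:ℂ)) := rfl
    set E := Complex.exp (w ξ) with hE
    rw [hDw ξ, ← hE]
    rw [hw'] at hwnz ⊢
    rw [div_mul_eq_mul_div, div_mul_div_comm,
      div_eq_div_iff (mul_ne_zero hwnz haz) hξ2]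
    linear_combination (-(1-E) * 2 * Complex.I * (h:ℂ)) * key
  have hne : (Complex.I * (h:ℂ) / (k:ℂ)) ≠ 0 := by
    apply div_ne_zero (mul_ne_zero Complex.I_ne_zero hhc) hkc
  refine ⟨L1, hne, ?_⟩
  -- numerator
  set N : ℂ → ℂ := fun ξ => Complex.exp (-Complex.I * μ ξ * (x₂:ℂ)) -
      Complex.exp (Complex.I * μ ξ * ((x₂:ℂ) + 2*(h:ℂ))) with hN
  have hNcont : ContinuousAt N 0 := by
    apply ContinuousAt.sub
    · exact Complex.continuous_exp.continuousAt.comp (by fun_prop)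
    · exact Complex.continuous_exp.continuousAt.comp (by fun_prop)
  have hN0 : N 0 = -2 * Complex.I * Complex.sin ((k:ℂ) * (x₂:ℂ)) := by
    simp only [hN, μ0]
    have h2 : Complex.exp (Complex.I * (k:ℂ) * ((x₂:ℂ) + 2*(h:ℂ)))
        = Complex.exp (Complex.I * (k:ℂ) * (x₂:ℂ)) := by
      rw [show Complex.I * (k:ℂ) * ((x₂:ℂ) + 2*(h:ℂ))
          = Complex.I * (k:ℂ) * (x₂:ℂ) + 2 * Complex.I * (k:ℂ) * (h:ℂ) by ring,
        Complex.exp_add, hexp1, mul_one]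
    rw [h2, Complex.sin]
    rw [show -Complex.I * (k:ℂ) * (x₂:ℂ) = -((k:ℂ)*(x₂:ℂ)) * Complex.I by ring,
      show Complex.I * (k:ℂ) * (x₂:ℂ) = ((k:ℂ)*(x₂:ℂ)) * Complex.I by ring]
    have hI := Complex.I_sq
    linear_combination (Complex.exp (-((k:ℂ)*(x₂:ℂ)) * Complex.I)
      - Complex.exp (((k:ℂ)*(x₂:ℂ)) * Complex.I)) * hI
  have hNt : Tendsto N (nhdsWithin (0:ℂ) {(0:ℂ)}ᶜ) (nhds (N 0)) :=
    hNcont.tendsto.mono_left nhdsWithin_le_nhds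
  have L3 := hNt.div L1 hne
  have hval : N 0 / (Complex.I * (h:ℂ) / (k:ℂ))
      = -((2 * k / h : ℝ) : ℂ) * ((Real.sin (k * x₂) : ℝ) : ℂ) := by
    rw [hN0]
    rw [div_eq_iff hne]
    push_cast
    field_simp
  rw [hval] at L3
  refine L3.congr' ?_
  filter_upwards [self_mem_nhdsWithin] with ξ hξ
  rw [hF ξ]
  simp only [Pi.div_apply]
  rw [div_div_eq_mul_div]
  ring
end

section
/- Let k > 0 and let P : [−π/2, π/2] → ℂ be three times continuously differentiable with P(−π/2) = P(π/2) = 0. Define u(r, α) = ∫_{−π/2}^{π/2} P(φ) e^{i r k sin(α − φ)} dφ. Then there exists a constant C > 0 such that for all r ≥ 1 and all α ∈ [π/4, 3π/4], |∂_r u(r, α) − i k u(r, α)| ≤ C·r^{−3/2}, with C independent of r and α; that is, u satisfies the Sommerfeld radiation condition with rate r^{−3/2}, uniformly in the direction α. -/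
open Real MeasureTheory Set intervalIntegral

noncomputable section

namespace Stmt8Aux

/-- Jordan-type bound on `[0, 3π/4]`. -/
lemma sin_ge_quarter {s : ℝ} (h0 : 0 ≤ s) (h1 : s ≤ 3 * π / 4) : s / 4 ≤ Real.sin s := by
  rcases le_total s (π / 2) with h | h
  · have hm := Real.mul_le_sin h0 h
    have hπ : π ≤ 4 := by linarith [Real.pi_le_four]
    have : s / 4 ≤ 2 / π * s := by
      rw [div_mul_eq_mul_div, div_le_div_iff₀ (by norm_num) Real.pi_pos]
      nlinarith
    linarith
  · have h2 : Real.sin s = Real.cos (s - π / 2) := (Real.cos_sub_pi_div_two s).symm ▸ rfl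
    have h3 : Real.cos (π / 4) ≤ Real.cos (s - π / 2) := by
      apply Real.cos_le_cos_of_nonneg_of_le_pi (by linarith) (by linarith [Real.pi_pos])
      linarith
    rw [Real.cos_pi_div_four] at h3
    have hs2 : (1.4 : ℝ) ≤ Real.sqrt 2 := by
      nlinarith [Real.sq_sqrt (by norm_num : (0:ℝ) ≤ 2), Real.sqrt_nonneg 2]
    have hπ : π < 3.15 := Real.pi_lt_d2
    rw [Real.cos_sub_pi_div_two] at h3
    linarith

/-- Key algebraic identity: `1 - sin θ = tan (π/4 - θ/2) * cos θ`. -/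
lemma one_sub_sin_eq {θ : ℝ} (h : |π / 4 - θ / 2| < π / 2) :
    1 - Real.sin θ = Real.tan (π / 4 - θ / 2) * Real.cos θ := by
  set t := π / 4 - θ / 2 with ht
  have habs := abs_lt.mp h
  have hc : 0 < Real.cos t := Real.cos_pos_of_mem_Ioo ⟨habs.1, habs.2⟩
  have hθ : θ = π / 2 - 2 * t := by rw [ht]; ring
  rw [hθ, Real.sin_pi_div_two_sub, Real.cos_pi_div_two_sub, Real.tan_eq_sin_div_cos,
    Real.cos_two_mul, Real.sin_two_mul]
  field_simp
  nlinarith [Real.sin_sq_add_cos_sq t]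


def w (θ : ℝ) : ℝ := Real.tan (π / 4 - θ / 2)
def w1 (θ : ℝ) : ℝ := -(1 / 2) * (1 / Real.cos (π / 4 - θ / 2) ^ 2)
def w2 (θ : ℝ) : ℝ := 1 / 2 * (Real.sin (π / 4 - θ / 2) / Real.cos (π / 4 - θ / 2) ^ 3)

lemma hasDerivAt_inner (θ : ℝ) : HasDerivAt (fun θ : ℝ => π / 4 - θ / 2) (-(1 / 2)) θ := by
  simpa using ((hasDerivAt_id θ).div_const 2).const_sub (π / 4)

lemma hasDerivAt_w {θ : ℝ} (hc : Real.cos (π / 4 - θ / 2) ≠ 0) :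
    HasDerivAt w (w1 θ) θ := by
  have := (Real.hasDerivAt_tan hc).comp θ (hasDerivAt_inner θ)
  exact this.congr_deriv (by unfold w1; ring)

lemma hasDerivAt_w1 {θ : ℝ} (hc : Real.cos (π / 4 - θ / 2) ≠ 0) :
    HasDerivAt w1 (w2 θ) θ := by
  have hcos : HasDerivAt (fun θ : ℝ => Real.cos (π / 4 - θ / 2))
      (1 / 2 * Real.sin (π / 4 - θ / 2)) θ := by
    have := (Real.hasDerivAt_cos (π / 4 - θ / 2)).comp θ (hasDerivAt_inner θ)
    exact this.congr_deriv (by ring)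
  have hpow : HasDerivAt (fun θ : ℝ => Real.cos (π / 4 - θ / 2) ^ 2)
      (2 * Real.cos (π / 4 - θ / 2) ^ 1 * (1 / 2 * Real.sin (π / 4 - θ / 2))) θ := hcos.pow 2
  have hinv := ((hpow.inv (pow_ne_zero 2 hc)).const_mul (-(1 / 2) : ℝ))
  have : HasDerivAt w1 (-(1/2) * -((2 * Real.cos (π / 4 - θ / 2) ^ 1 *
      (1 / 2 * Real.sin (π / 4 - θ / 2))) / (Real.cos (π / 4 - θ / 2) ^ 2) ^ 2)) θ := by
    have e : w1 = fun y => -(1 / 2) * (fun θ : ℝ => Real.cos (π / 4 - θ / 2) ^ 2)⁻¹ y := by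
      funext y; unfold w1; simp [one_div]
    rw [e]; exact hinv.congr_deriv (by ring)
  convert this using 1
  unfold w2
  set c := Real.cos (π / 4 - θ / 2) with hcdef
  field_simp

def c0 : ℝ := Real.cos (3 * π / 8)

lemma c0_pos : 0 < c0 := by
  apply Real.cos_pos_of_mem_Ioo
  constructor <;> [linarith [Real.pi_pos]; linarith [Real.pi_pos]]

lemma cos_ge_c0 {t : ℝ} (h : |t| ≤ 3 * π / 8) : c0 ≤ Real.cos t := by
  rw [← Real.cos_abs t]
  apply Real.cos_le_cos_of_nonneg_of_le_pi (abs_nonneg t) _ h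
  linarith [Real.pi_pos]

lemma range_t {θ α φ : ℝ} (hα : α ∈ Icc (π / 4) (3 * π / 4))
    (hφ : φ ∈ Icc (-(π / 2)) (π / 2)) (hθ : θ = α - φ) :
    |π / 4 - θ / 2| ≤ 3 * π / 8 := by
  obtain ⟨h1, h2⟩ := hα; obtain ⟨h3, h4⟩ := hφ
  subst hθ; rw [abs_le]; constructor <;> linarith



lemma w_bounds {θ : ℝ} (h : |π / 4 - θ / 2| ≤ 3 * π / 8) :
    |w θ| ≤ 1 / c0 ∧ |w1 θ| ≤ 1 / (2 * c0 ^ 2) ∧ |w2 θ| ≤ 1 / (2 * c0 ^ 3) := by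
  set t := π / 4 - θ / 2 with ht
  have hc : c0 ≤ Real.cos t := cos_ge_c0 h
  have hc0 := c0_pos
  have hcabs : c0 ≤ |Real.cos t| := le_trans hc (le_abs_self _)
  have hs : |Real.sin t| ≤ 1 := Real.abs_sin_le_one t
  refine ⟨?_, ?_, ?_⟩
  · rw [w, Real.tan_eq_sin_div_cos, abs_div]
    exact div_le_div₀ (by positivity) hs hc0 hcabs
  · rw [w1, abs_mul, abs_div, abs_one, abs_pow]
    rw [show |(-(1/2) : ℝ)| = 1/2 by norm_num, show (1:ℝ)/(2*c0^2) = 1/2 * (1/c0^2) by ring]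
    gcongr
  · rw [w2, abs_mul, abs_of_pos (by norm_num : (0:ℝ) < 1/2), abs_div, abs_pow]
    rw [show (1:ℝ)/(2*c0^3) = 1/2 * (1/c0^3) by ring]
    gcongr

lemma cos_t_pos {θ : ℝ} (h : |π / 4 - θ / 2| ≤ 3 * π / 8) : 0 < Real.cos (π / 4 - θ / 2) :=
  lt_of_lt_of_le c0_pos (cos_ge_c0 h)


lemma norm_exp_I_mul (x : ℝ) : ‖Complex.exp (Complex.I * (x : ℂ))‖ = 1 := by
  rw [mul_comm]
  exact Complex.norm_exp_ofReal_mul_I x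

lemma osc (c p q : ℝ) (hc : 0 < c) (hp : 0 < p) (hpq : p ≤ q) (hq : q ≤ 3 * π / 4)
    (A A' : ℝ → ℂ) (MA MA' : ℝ)
    (hAc : ContinuousOn A (Icc p q))
    (hA'c : ContinuousOn A' (Icc p q))
    (hA : ∀ s ∈ Ioo p q, HasDerivAt A (A' s) s)
    (hMA : ∀ s ∈ Icc p q, ‖A s‖ ≤ MA)
    (hMA' : ∀ s ∈ Icc p q, ‖A' s‖ ≤ MA') :
    ‖∫ s in p..q, A s * Complex.exp (Complex.I * ((c * Real.cos s : ℝ) : ℂ))‖ ≤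
      (24 * MA + 3 * π * MA') / (c * p) := by
  have hMA0 : 0 ≤ MA := le_trans (norm_nonneg _) (hMA p ⟨le_refl p, hpq⟩)
  have hMA'0 : 0 ≤ MA' := le_trans (norm_nonneg _) (hMA' p ⟨le_refl p, hpq⟩)
  set K : ℝ := 3 * π * MA' + 16 * MA with hK
  have hK0 : 0 ≤ K := by positivity
  set E : ℝ → ℂ := fun s => Complex.exp (Complex.I * ((c * Real.cos s : ℝ) : ℂ)) with hE
  set den : ℝ → ℂ := fun s => -(Complex.I * (c : ℂ) * (Real.sin s : ℂ)) with hden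
  set den' : ℝ → ℂ := fun s => -(Complex.I * (c : ℂ) * (Real.cos s : ℂ)) with hden'
  have hsin : ∀ s ∈ Icc p q, s / 4 ≤ Real.sin s := fun s hs =>
    sin_ge_quarter (le_trans hp.le hs.1) (le_trans hs.2 hq)
  have hsinpos : ∀ s ∈ Icc p q, 0 < Real.sin s := fun s hs =>
    lt_of_lt_of_le (by linarith [hs.1, hp] : (0:ℝ) < s / 4) (hsin s hs)
  have hdenne : ∀ s ∈ Icc p q, den s ≠ 0 := by
    intro s hs
    simp only [hden, neg_ne_zero, mul_ne_zero_iff, Complex.ofReal_ne_zero]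
    exact ⟨⟨Complex.I_ne_zero, hc.ne'⟩, (hsinpos s hs).ne'⟩
  have hdennorm : ∀ s, ‖den s‖ = c * |Real.sin s| := by
    intro s
    simp only [hden, norm_neg, norm_mul, Complex.norm_I, Complex.norm_real, Real.norm_eq_abs,
      one_mul, abs_of_pos hc]
  have hden'norm : ∀ s, ‖den' s‖ ≤ c := by
    intro s
    simp only [hden', norm_neg, norm_mul, Complex.norm_I, Complex.norm_real, Real.norm_eq_abs,
      one_mul, abs_of_pos hc]
    nlinarith [Real.abs_cos_le_one s, hc]
  -- derivatives
  have hEder : ∀ s, HasDerivAt E (den s * E s) s := by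
    intro s
    have h1 : HasDerivAt (fun s : ℝ => c * Real.cos s) (c * -Real.sin s) s :=
      (Real.hasDerivAt_cos s).const_mul c
    have h2 := (h1.ofReal_comp.const_mul Complex.I).cexp
    convert h2 using 1
    simp only [hden, hE]
    push_cast
    ring
  have hdender : ∀ s, HasDerivAt den (den' s) s := by
    intro s
    have h1 := ((Real.hasDerivAt_sin s).ofReal_comp.const_mul (Complex.I * (c : ℂ))).neg
    convert h1 using 1
    rfl
    rfl
  set h : ℝ → ℂ := fun s => A s / den s with hh
  set h' : ℝ → ℂ := fun s => (A' s * den s - A s * den' s) / (den s) ^ 2 with hh'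
  have hhder : ∀ s ∈ Ioo p q, HasDerivAt h (h' s) s := fun s hs =>
    (hA s hs).div (hdender s) (hdenne s (Ioo_subset_Icc_self hs))
  -- continuity facts
  have hdenc : Continuous den := by fun_prop
  have hden'c : Continuous den' := by fun_prop
  have hEc : Continuous E := by fun_prop
  have hhc : ContinuousOn h (Icc p q) := hAc.div hdenc.continuousOn hdenne
  have hh'c : ContinuousOn h' (Icc p q) := by
    apply ContinuousOn.div ((hA'c.mul hdenc.continuousOn).sub (hAc.mul hden'c.continuousOn))
      ((hdenc.pow 2).continuousOn)
    intro s hs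
    exact pow_ne_zero 2 (hdenne s hs)
  -- integration by parts
  have hibp := intervalIntegral.integral_mul_deriv_eq_deriv_mul_of_hasDerivAt
    (a := p) (b := q) (u := h) (v := E) (u' := h') (v' := fun s => den s * E s)
    (by rw [uIcc_of_le hpq]; exact hhc)
    (hEc.continuousOn)
    (by rw [min_eq_left hpq, max_eq_right hpq]; exact hhder)
    (by intro x _; exact hEder x)
    (by apply ContinuousOn.intervalIntegrable; rw [uIcc_of_le hpq]; exact hh'c)
    (by apply Continuous.intervalIntegrable; fun_prop)
  have heq : ∀ s ∈ Set.uIcc p q, A s * E s = h s * (den s * E s) := by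
    intro s hs
    rw [uIcc_of_le hpq] at hs
    have hne := hdenne s hs
    simp only [hh]
    field_simp
  rw [intervalIntegral.integral_congr heq, hibp]
  -- bound the boundary terms
  have hnormE : ∀ s, ‖E s‖ = 1 := fun s => norm_exp_I_mul _
  have hbdry : ∀ s ∈ Icc p q, ‖h s * E s‖ ≤ 4 * MA / (c * p) := by
    intro s hs
    have hsp : 0 < s := lt_of_lt_of_le hp hs.1
    rw [norm_mul, hnormE, mul_one, hh]
    simp only [norm_div, hdennorm, abs_of_pos (hsinpos s hs)]
    have h1 : c * (s / 4) ≤ c * Real.sin s := by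
      have := hsin s hs; nlinarith
    have h2 : 0 < c * Real.sin s := mul_pos hc (hsinpos s hs)
    have h25 : 0 < c * (s / 4) := mul_pos hc (by linarith)
    calc ‖A s‖ / (c * Real.sin s) ≤ MA / (c * (s / 4)) :=
          div_le_div₀ hMA0 (hMA s hs) h25 h1
      _ = 4 * MA / (c * s) := by
          rw [div_eq_div_iff h25.ne' (mul_pos hc hsp).ne']; ring
      _ ≤ 4 * MA / (c * p) := by
          apply div_le_div_of_nonneg_left (by positivity) (by positivity)
          nlinarith [hs.1]
  -- bound the remaining integrand
  have hh'bound : ∀ s ∈ Icc p q, ‖h' s * E s‖ ≤ K / c * (s ^ 2)⁻¹ := by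
    intro s hs
    have hsp : 0 < s := lt_of_lt_of_le hp hs.1
    have hsinp := hsinpos s hs
    have hsins := hsin s hs
    rw [norm_mul, hnormE, mul_one, hh', norm_div, norm_pow, hdennorm, abs_of_pos hsinp]
    have hnum : ‖A' s * den s - A s * den' s‖ ≤ MA' * (c * Real.sin s) + MA * c := by
      calc ‖A' s * den s - A s * den' s‖ ≤ ‖A' s * den s‖ + ‖A s * den' s‖ := norm_sub_le _ _
        _ ≤ MA' * (c * Real.sin s) + MA * c := by
            rw [norm_mul, norm_mul, hdennorm, abs_of_pos hsinp]
            gcongr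
            · exact hMA' s hs
            · exact hMA s hs
            · exact hden'norm s
    have hden2 : 0 < (c * Real.sin s) ^ 2 := by positivity
    have e1 : s ^ 2 ≤ 3 * π * Real.sin s := by
      nlinarith [mul_nonneg (by linarith [hs.2, hq] : (0:ℝ) ≤ 3 * π / 4 - s) hsp.le,
        mul_nonneg (by positivity : (0:ℝ) ≤ 3 * π) (by linarith : (0:ℝ) ≤ Real.sin s - s / 4)]
    have e2 : s ^ 2 ≤ 16 * Real.sin s ^ 2 := by
      nlinarith [mul_nonneg (by linarith : (0:ℝ) ≤ Real.sin s - s / 4)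
        (by linarith : (0:ℝ) ≤ Real.sin s + s / 4)]
    have aux : MA' * Real.sin s * s ^ 2 + MA * s ^ 2 ≤ K * Real.sin s ^ 2 := by
      have e3 := mul_le_mul_of_nonneg_left e1 (mul_nonneg hMA'0 hsinp.le)
      have e4 := mul_le_mul_of_nonneg_left e2 hMA0
      rw [hK]; nlinarith [e3, e4]
    calc ‖A' s * den s - A s * den' s‖ / (c * Real.sin s) ^ 2
        ≤ (MA' * (c * Real.sin s) + MA * c) / (c * Real.sin s) ^ 2 := by gcongr
      _ ≤ K / c * (s ^ 2)⁻¹ := by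
          rw [show K / c * (s ^ 2)⁻¹ = K / (c * s ^ 2) by ring,
            div_le_div_iff₀ hden2 (by positivity)]
          have := mul_le_mul_of_nonneg_left aux (mul_pos hc hc).le
          nlinarith [this]
  -- compute the integral of the bound
  have hftc : (∫ s in p..q, (s ^ 2)⁻¹) = -q⁻¹ - -p⁻¹ := by
    apply integral_eq_sub_of_hasDerivAt_of_le hpq
    · apply ContinuousOn.neg
      apply ContinuousOn.inv₀ continuousOn_id
      intro s hs; exact (lt_of_lt_of_le hp hs.1).ne'
    · intro s hs
      have hsne : s ≠ 0 := (lt_of_lt_of_le hp hs.1.le).ne'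
      exact (hasDerivAt_inv hsne).neg.congr_deriv (by ring)
    · apply ContinuousOn.intervalIntegrable
      rw [uIcc_of_le hpq]
      apply ContinuousOn.inv₀ (continuousOn_pow 2)
      intro s hs; exact pow_ne_zero 2 (lt_of_lt_of_le hp hs.1).ne'
  have hintbound : ‖∫ s in p..q, h' s * E s‖ ≤ K / (c * p) := by
    have hgint : IntervalIntegrable (fun s => K / c * (s ^ 2)⁻¹) volume p q := by
      apply ContinuousOn.intervalIntegrable
      rw [uIcc_of_le hpq]
      apply ContinuousOn.mul continuousOn_const
      apply ContinuousOn.inv₀ (continuousOn_pow 2)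
      intro s hs; exact pow_ne_zero 2 (lt_of_lt_of_le hp hs.1).ne'
    have h1 := intervalIntegral.norm_integral_le_abs_of_norm_le (f := fun s => h' s * E s)
      (g := fun s => K / c * (s ^ 2)⁻¹) (μ := volume) (a := p) (b := q) ?_ hgint
    · refine le_trans h1 ?_
      rw [intervalIntegral.integral_const_mul, hftc]
      have hq0 : 0 < q := lt_of_lt_of_le hp hpq
      have : K / c * (-q⁻¹ - -p⁻¹) ≤ K / (c * p) := by
        rw [show K / (c * p) = K / c * p⁻¹ by rw [div_mul_eq_div_div]; ring_nf]
        have : -q⁻¹ - -p⁻¹ ≤ p⁻¹ := by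
          have : 0 < q⁻¹ := by positivity
          linarith
        apply mul_le_mul_of_nonneg_left this (by positivity)
      have hXnn : 0 ≤ K / c * (-q⁻¹ - -p⁻¹) := by
        have h2 : q⁻¹ ≤ p⁻¹ := inv_anti₀ hp hpq
        have h3 : (0:ℝ) ≤ -q⁻¹ - -p⁻¹ := by linarith
        exact mul_nonneg (by positivity) h3
      rw [abs_of_nonneg hXnn]
      exact this
    · rw [ae_restrict_iff' measurableSet_uIoc]
      apply ae_of_all
      intro s hs
      rw [uIoc_of_le hpq] at hs
      exact hh'bound s ⟨hs.1.le, hs.2⟩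
  -- final assembly
  have hq0 : 0 < q := lt_of_lt_of_le hp hpq
  calc ‖h q * E q - h p * E p - ∫ s in p..q, h' s * E s‖
      ≤ ‖h q * E q - h p * E p‖ + ‖∫ s in p..q, h' s * E s‖ := norm_sub_le _ _
    _ ≤ ‖h q * E q‖ + ‖h p * E p‖ + ‖∫ s in p..q, h' s * E s‖ := by
        have := norm_sub_le (h q * E q) (h p * E p); linarith
    _ ≤ 4 * MA / (c * p) + 4 * MA / (c * p) + K / (c * p) := by
        have b1 := hbdry q ⟨hpq, le_refl q⟩
        have b2 := hbdry p ⟨le_refl p, hpq⟩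
        linarith [hintbound]
    _ = (24 * MA + 3 * π * MA') / (c * p) := by
        rw [hK]; field_simp; ring


lemma core (k r : ℝ) (hk : 0 < k) (hr : 1 ≤ r) (α : ℝ) (hα : α ∈ Icc (π / 4) (3 * π / 4))
    (B B' : ℝ → ℂ) (MB MB' : ℝ)
    (hBc : ContinuousOn B (Icc (-(π / 2)) (π / 2)))
    (hB'c : ContinuousOn B' (Icc (-(π / 2)) (π / 2)))
    (hB : ∀ φ ∈ Ioo (-(π / 2)) (π / 2), HasDerivAt B (B' φ) φ)
    (hMB : ∀ φ ∈ Icc (-(π / 2)) (π / 2), ‖B φ‖ ≤ MB)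
    (hMB' : ∀ φ ∈ Icc (-(π / 2)) (π / 2), ‖B' φ‖ ≤ MB') :
    ‖∫ φ in (-(π / 2))..(π / 2),
        B φ * Complex.exp (Complex.I * ((r * k * Real.sin (α - φ) : ℝ) : ℂ))‖ ≤
      (π / 2 * MB + 8 / (π * k) * (24 * MB + 3 * π * MB')) * r ^ (-(1 / 2) : ℝ) := by
  have hπ := Real.pi_pos
  have hrpos : (0 : ℝ) < r := lt_of_lt_of_le one_pos hr
  have hMB0 : 0 ≤ MB := le_trans (norm_nonneg _) (hMB 0 (by constructor <;> linarith))
  have hMB'0 : 0 ≤ MB' := le_trans (norm_nonneg _) (hMB' 0 (by constructor <;> linarith))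
  set rr : ℝ := r ^ (-(1 / 2) : ℝ) with hrr
  have hrrpos : 0 < rr := Real.rpow_pos_of_pos hrpos _
  have hrrle : rr ≤ 1 := Real.rpow_le_one_of_one_le_of_nonpos hr (by norm_num)
  have hrr2 : r * (rr * rr) = 1 := by
    rw [hrr, ← Real.rpow_add hrpos]
    norm_num
    rw [Real.rpow_neg_one]
    field_simp
  set δ : ℝ := π / 4 * rr with hδ
  have hδpos : 0 < δ := by positivity
  have hδle : δ ≤ π / 4 := by
    rw [hδ]; nlinarith
  set φ₀ : ℝ := α - π / 2 with hφ₀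
  have hφ₀mem : -(π / 4) ≤ φ₀ ∧ φ₀ ≤ π / 4 := ⟨by simp [hφ₀]; linarith [hα.1], by
    simp [hφ₀]; linarith [hα.2]⟩
  set a : ℝ := φ₀ - δ with ha
  set b : ℝ := φ₀ + δ with hb
  have hab : -(π / 2) ≤ a ∧ b ≤ π / 2 := ⟨by rw [ha]; linarith [hφ₀mem.1],
    by rw [hb]; linarith [hφ₀mem.2]⟩
  set f : ℝ → ℂ := fun φ => B φ * Complex.exp (Complex.I * ((r * k * Real.sin (α - φ) : ℝ) : ℂ))
    with hf
  have hfc : ContinuousOn f (Icc (-(π / 2)) (π / 2)) := by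
    apply hBc.mul
    apply Continuous.continuousOn
    fun_prop
  have hfint : ∀ p q : ℝ, -(π / 2) ≤ p → p ≤ q → q ≤ π / 2 → IntervalIntegrable f volume p q := by
    intro p q hp hpq hq
    apply (hfc.mono _).intervalIntegrable
    intro x hx
    rw [uIcc_of_le hpq] at hx
    exact ⟨le_trans hp hx.1, le_trans hx.2 hq⟩
  have hord : -(π / 2) ≤ a ∧ a ≤ b ∧ b ≤ π / 2 := ⟨hab.1, by rw [ha, hb]; linarith, hab.2⟩
  obtain ⟨ho1, ho2, ho3⟩ := hord
  have hsplit : (∫ φ in (-(π / 2))..(π / 2), f φ) =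
      (∫ φ in (-(π / 2))..a, f φ) + (∫ φ in a..b, f φ) + (∫ φ in b..(π / 2), f φ) := by
    have h1 := intervalIntegral.integral_add_adjacent_intervals
      (hfint a b (by linarith) ho2 (by linarith)) (hfint b (π / 2) (by linarith) ho3 le_rfl)
    have h2 := intervalIntegral.integral_add_adjacent_intervals
      (hfint (-(π / 2)) a le_rfl ho1 (by linarith)) (hfint a (π / 2) (by linarith) (by linarith) le_rfl)
    rw [← h2, ← h1]
    ring
  -- middle piece
  have hmid : ‖∫ φ in a..b, f φ‖ ≤ MB * (2 * δ) := by
    have hb1 := intervalIntegral.norm_integral_le_of_norm_le_const (a := a) (b := b) (C := MB)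
      (f := f) ?_
    · refine le_trans hb1 ?_
      rw [show b - a = 2 * δ by rw [ha, hb]; ring, abs_of_nonneg (by positivity)]
    · intro x hx
      rw [uIoc_of_le ho2] at hx
      simp only [hf]
      rw [norm_mul, norm_exp_I_mul, mul_one]
      exact hMB x ⟨by linarith [hx.1.le], by linarith [hx.2]⟩
  -- right piece
  have hco : ∀ x : ℝ, f (x + φ₀) =
      B (x + φ₀) * Complex.exp (Complex.I * ((r * k * Real.cos x : ℝ) : ℂ)) := by
    intro x
    simp only [hf]
    have h5 : α - (x + φ₀) = π / 2 - x := by rw [hφ₀]; ring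
    rw [h5, Real.sin_pi_div_two_sub]
  have hright' : (∫ φ in b..(π / 2), f φ) =
      ∫ x in δ..(π / 2 - φ₀), B (x + φ₀) * Complex.exp (Complex.I * ((r * k * Real.cos x : ℝ) : ℂ)) := by
    have h3 := intervalIntegral.integral_comp_add_right (a := δ) (b := π / 2 - φ₀) (d := φ₀) f
    rw [show δ + φ₀ = b by rw [hb]; ring, show π / 2 - φ₀ + φ₀ = π / 2 by ring] at h3
    rw [← h3]
    apply intervalIntegral.integral_congr
    intro x _
    exact hco x
  have hmapsR : ∀ x ∈ Icc δ (π / 2 - φ₀), x + φ₀ ∈ Icc (-(π / 2)) (π / 2) := by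
    intro x hx
    exact ⟨by linarith [hx.1, hφ₀mem.1, hδpos], by linarith [hx.2]⟩
  have hoscR := osc (r * k) δ (π / 2 - φ₀) (by positivity) hδpos
    (by linarith [hφ₀mem.2, hδle]) (by linarith [hφ₀mem.1])
    (fun x => B (x + φ₀)) (fun x => B' (x + φ₀)) MB MB'
    (hBc.comp ((continuous_id.add continuous_const).continuousOn) hmapsR)
    (hB'c.comp ((continuous_id.add continuous_const).continuousOn) hmapsR)
    (by
      intro x hx
      have h4 : x + φ₀ ∈ Ioo (-(π / 2)) (π / 2) :=
        ⟨by linarith [hx.1, hφ₀mem.1, hδpos], by linarith [hx.2]⟩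
      exact HasDerivAt.comp_add_const x φ₀ (hB _ h4))
    (fun x hx => hMB _ (hmapsR x hx))
    (fun x hx => hMB' _ (hmapsR x hx))
  rw [← hright'] at hoscR
  -- left piece
  have hcoL : ∀ x : ℝ, f (-x + φ₀) =
      B (φ₀ - x) * Complex.exp (Complex.I * ((r * k * Real.cos x : ℝ) : ℂ)) := by
    intro x
    rw [show -x + φ₀ = φ₀ - x by ring]
    simp only [hf]
    have h5 : α - (φ₀ - x) = π / 2 + x := by rw [hφ₀]; ring
    rw [h5, Real.sin_add]
    norm_num
  have hleft' : (∫ φ in (-(π / 2))..a, f φ) =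
      ∫ x in δ..(π / 2 + φ₀), B (φ₀ - x) * Complex.exp (Complex.I * ((r * k * Real.cos x : ℝ) : ℂ)) := by
    have h3 := intervalIntegral.integral_comp_add_right (a := -(π / 2) - φ₀) (b := a - φ₀)
      (d := φ₀) f
    rw [show -(π / 2) - φ₀ + φ₀ = -(π / 2) by ring, show a - φ₀ + φ₀ = a by ring] at h3
    have h6 := intervalIntegral.integral_comp_neg (a := δ) (b := π / 2 + φ₀)
      (f := fun x => f (x + φ₀))
    rw [show -(π / 2 + φ₀) = -(π / 2) - φ₀ by ring, show -δ = a - φ₀ by rw [ha]; ring] at h6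
    rw [← h3, ← h6]
    apply intervalIntegral.integral_congr
    intro x _
    exact hcoL x
  have hmapsL : ∀ x ∈ Icc δ (π / 2 + φ₀), φ₀ - x ∈ Icc (-(π / 2)) (π / 2) := by
    intro x hx
    exact ⟨by linarith [hx.2], by linarith [hx.1, hδpos, hφ₀mem.2]⟩
  have hoscL := osc (r * k) δ (π / 2 + φ₀) (by positivity) hδpos
    (by linarith [hφ₀mem.1, hδle]) (by linarith [hφ₀mem.2])
    (fun x => B (φ₀ - x)) (fun x => -B' (φ₀ - x)) MB MB'
    (hBc.comp ((continuous_const.sub continuous_id).continuousOn) hmapsL)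
    ((hB'c.comp ((continuous_const.sub continuous_id).continuousOn) hmapsL).neg)
    (by
      intro x hx
      have h4 : φ₀ - x ∈ Ioo (-(π / 2)) (π / 2) :=
        ⟨by linarith [hx.2], by linarith [hx.1, hδpos, hφ₀mem.2]⟩
      exact HasDerivAt.comp_const_sub φ₀ x (hB _ h4))
    (fun x hx => hMB _ (hmapsL x hx))
    (fun x hx => by rw [norm_neg]; exact hMB' _ (hmapsL x hx))
  rw [← hleft'] at hoscL
  -- assemble
  have hS : (24 * MB + 3 * π * MB') / (r * k * δ) = 4 / (π * k) * (24 * MB + 3 * π * MB') * rr := by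
    rw [hδ, div_eq_iff (by positivity : r * k * (π / 4 * rr) ≠ 0)]
    field_simp
    linear_combination (-(24 * MB + 3 * π * MB')) * hrr2
  rw [hsplit]
  calc ‖(∫ φ in (-(π / 2))..a, f φ) + (∫ φ in a..b, f φ) + (∫ φ in b..(π / 2), f φ)‖
      ≤ ‖(∫ φ in (-(π / 2))..a, f φ)‖ + ‖(∫ φ in a..b, f φ)‖ + ‖(∫ φ in b..(π / 2), f φ)‖ := by
        refine le_trans (norm_add_le _ _) ?_
        linarith [norm_add_le (∫ φ in (-(π / 2))..a, f φ) (∫ φ in a..b, f φ)]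
    _ ≤ (24 * MB + 3 * π * MB') / (r * k * δ) + MB * (2 * δ) +
          (24 * MB + 3 * π * MB') / (r * k * δ) := by linarith [hoscR, hoscL, hmid]
    _ = (π / 2 * MB + 8 / (π * k) * (24 * MB + 3 * π * MB')) * rr := by
        rw [hS, hδ]; ring


end Stmt8Aux

open Stmt8Aux

set_option maxHeartbeats 1000000 in
/-- Sommerfeld radiation condition for the stationary-phase integral. For
`P ∈ C³([−π/2, π/2])` with `P(±π/2) = 0` and
`u(r,α) = ∫_{−π/2}^{π/2} P(φ) e^{i r k sin(α−φ)} dφ`, there is `C > 0` with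
`|∂_r u(r,α) − i k u(r,α)| ≤ C r^{−3/2}` for all `r ≥ 1`, uniformly in
`α ∈ [π/4, 3π/4]`. -/
theorem stmt8 (k : ℝ) (hk : 0 < k) (P : ℝ → ℂ)
    (hP : ContDiffOn ℝ 3 P (Set.Icc (-(Real.pi / 2)) (Real.pi / 2)))
    (hP1 : P (-(Real.pi / 2)) = 0) (hP2 : P (Real.pi / 2) = 0)
    (u : ℝ → ℝ → ℂ)
    (hu : ∀ r α : ℝ, u r α =
      ∫ φ in (-(Real.pi / 2))..(Real.pi / 2),
        P φ * Complex.exp (Complex.I * ((r * k * Real.sin (α - φ) : ℝ) : ℂ))) :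
    ∃ C > 0, ∀ r α : ℝ, 1 ≤ r → α ∈ Set.Icc (Real.pi / 4) (3 * Real.pi / 4) →
      ‖deriv (fun s : ℝ => u s α) r - Complex.I * (k : ℂ) * u r α‖ ≤
        C * r ^ (-(3 / 2) : ℝ) := by
  have hπ := Real.pi_pos
  set S : Set ℝ := Icc (-(π / 2)) (π / 2) with hS
  have hUD : UniqueDiffOn ℝ S := uniqueDiffOn_Icc (by linarith)
  set Pd1 : ℝ → ℂ := derivWithin P S with hPd1
  set Pd2 : ℝ → ℂ := derivWithin Pd1 S with hPd2
  have hP1cd : ContDiffOn ℝ 2 Pd1 S := hP.derivWithin hUD (by norm_num)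
  have hP2cd : ContDiffOn ℝ 1 Pd2 S := hP1cd.derivWithin hUD (by norm_num)
  have hPc : ContinuousOn P S := hP.continuousOn
  have hP1c : ContinuousOn Pd1 S := hP1cd.continuousOn
  have hP2c : ContinuousOn Pd2 S := hP2cd.continuousOn
  have hPder : ∀ φ ∈ Ioo (-(π / 2)) (π / 2), HasDerivAt P (Pd1 φ) φ := by
    intro φ hφ
    have h1 := (hP.differentiableOn (by norm_num)) φ (Ioo_subset_Icc_self hφ)
    exact h1.hasDerivWithinAt.hasDerivAt (Icc_mem_nhds hφ.1 hφ.2)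
  have hP1der : ∀ φ ∈ Ioo (-(π / 2)) (π / 2), HasDerivAt Pd1 (Pd2 φ) φ := by
    intro φ hφ
    have h1 := (hP1cd.differentiableOn (by norm_num)) φ (Ioo_subset_Icc_self hφ)
    exact h1.hasDerivWithinAt.hasDerivAt (Icc_mem_nhds hφ.1 hφ.2)
  obtain ⟨M0, hM0⟩ := isCompact_Icc.exists_bound_of_continuousOn hPc
  obtain ⟨M1, hM1⟩ := isCompact_Icc.exists_bound_of_continuousOn hP1c
  obtain ⟨M2, hM2⟩ := isCompact_Icc.exists_bound_of_continuousOn hP2c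
  have hmem0 : (0 : ℝ) ∈ S := ⟨by linarith, by linarith⟩
  have hM0nn : 0 ≤ M0 := le_trans (norm_nonneg _) (hM0 0 hmem0)
  have hM1nn : 0 ≤ M1 := le_trans (norm_nonneg _) (hM1 0 hmem0)
  have hM2nn : 0 ≤ M2 := le_trans (norm_nonneg _) (hM2 0 hmem0)
  have hc0 := c0_pos
  set MB : ℝ := M1 * (1 / c0) + M0 * (1 / (2 * c0 ^ 2)) with hMBdef
  set MB' : ℝ := M2 * (1 / c0) + 2 * (M1 * (1 / (2 * c0 ^ 2))) + M0 * (1 / (2 * c0 ^ 3))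
    with hMB'def
  have hMBnn : 0 ≤ MB := by positivity
  have hMB'nn : 0 ≤ MB' := by positivity
  set CC : ℝ := π / 2 * MB + 8 / (π * k) * (24 * MB + 3 * π * MB') with hCC
  have hCCnn : 0 ≤ CC := by positivity
  refine ⟨CC + 1, by positivity, ?_⟩
  intro r α hr hα
  have hrpos : (0 : ℝ) < r := lt_of_lt_of_le one_pos hr
  -- abbreviations for fixed r, α
  set E : ℝ → ℂ := fun φ => Complex.exp (Complex.I * ((r * k * Real.sin (α - φ) : ℝ) : ℂ)) with hE
  set E' : ℝ → ℂ := fun φ =>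
    Complex.exp (Complex.I * ((r * k * Real.sin (α - φ) : ℝ) : ℂ)) *
      (Complex.I * ((r * k * -Real.cos (α - φ) : ℝ) : ℂ)) with hE'
  have hEder : ∀ φ : ℝ, HasDerivAt E (E' φ) φ := by
    intro φ
    have h1 : HasDerivAt (fun φ : ℝ => Real.sin (α - φ)) (-Real.cos (α - φ)) φ :=
      HasDerivAt.comp_const_sub α φ (Real.hasDerivAt_sin (α - φ))
    have h2 : HasDerivAt (fun φ : ℝ => r * k * Real.sin (α - φ)) (r * k * -Real.cos (α - φ)) φ :=
      h1.const_mul (r * k)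
    exact (h2.ofReal_comp.const_mul Complex.I).cexp
  have hEc : Continuous E := by fun_prop
  have hE'c : Continuous E' := by fun_prop
  have hnormE : ∀ φ, ‖E φ‖ = 1 := fun φ => norm_exp_I_mul _
  -- Step 1: differentiation under the integral sign
  set F : ℝ → ℝ → ℂ := fun s φ =>
    P φ * Complex.exp (Complex.I * ((s * k * Real.sin (α - φ) : ℝ) : ℂ)) with hF
  set F' : ℝ → ℝ → ℂ := fun s φ =>
    P φ * (Complex.exp (Complex.I * ((s * k * Real.sin (α - φ) : ℝ) : ℂ)) *
      (Complex.I * ((k * Real.sin (α - φ) : ℝ) : ℂ))) with hF'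
  have hFder : ∀ (x : ℝ) (φ : ℝ), HasDerivAt (fun s => F s φ) (F' x φ) x := by
    intro x φ
    have hg : HasDerivAt (fun s : ℝ => s * k * Real.sin (α - φ)) (k * Real.sin (α - φ)) x := by
      simpa using ((hasDerivAt_id x).mul_const k).mul_const (Real.sin (α - φ))
    exact ((hg.ofReal_comp.const_mul Complex.I).cexp).const_mul (P φ)
  have hmeas : ∀ x : ℝ, AEStronglyMeasurable (F x) (volume.restrict (Set.uIoc (-(π / 2)) (π / 2))) := by
    intro x
    rw [uIoc_of_le (by linarith : -(π / 2) ≤ π / 2)]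
    apply ContinuousOn.aestronglyMeasurable _ measurableSet_Ioc
    apply ContinuousOn.mul (hPc.mono Ioc_subset_Icc_self)
    apply Continuous.continuousOn; fun_prop
  have hmeas' : AEStronglyMeasurable (F' r) (volume.restrict (Set.uIoc (-(π / 2)) (π / 2))) := by
    rw [uIoc_of_le (by linarith : -(π / 2) ≤ π / 2)]
    apply ContinuousOn.aestronglyMeasurable _ measurableSet_Ioc
    apply ContinuousOn.mul (hPc.mono Ioc_subset_Icc_self)
    apply Continuous.continuousOn; fun_prop
  have hFint : IntervalIntegrable (F r) volume (-(π / 2)) (π / 2) := by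
    apply ContinuousOn.intervalIntegrable
    rw [uIcc_of_le (by linarith : -(π / 2) ≤ π / 2)]
    apply ContinuousOn.mul hPc
    apply Continuous.continuousOn; fun_prop
  have hbound : ∀ t ∈ Set.uIoc (-(π / 2)) (π / 2), ∀ x ∈ Metric.ball r 1, ‖F' x t‖ ≤ M0 * k := by
    intro t ht x _
    rw [uIoc_of_le (by linarith : -(π / 2) ≤ π / 2)] at ht
    have htS : t ∈ S := Ioc_subset_Icc_self ht
    simp only [hF']
    rw [norm_mul, norm_mul, norm_mul, norm_exp_I_mul, Complex.norm_I, one_mul, one_mul,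
      Complex.norm_real, Real.norm_eq_abs]
    have h3 : |k * Real.sin (α - t)| ≤ k := by
      rw [abs_mul, abs_of_pos hk]
      nlinarith [Real.abs_sin_le_one (α - t), hk]
    exact mul_le_mul (hM0 t htS) h3 (abs_nonneg _) hM0nn
  have hdiff : ∀ t ∈ Set.uIoc (-(π / 2)) (π / 2), ∀ x ∈ Metric.ball r 1,
      HasDerivAt (fun s => F s t) (F' x t) x := fun t _ x _ => hFder x t
  have hder := (intervalIntegral.hasDerivAt_integral_of_dominated_loc_of_deriv_le
    (F := F) (F' := F') (x₀ := r) (s := Metric.ball r 1) (bound := fun _ => M0 * k) (a := -(π / 2)) (b := π / 2)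
    (μ := volume) (Metric.ball_mem_nhds r one_pos)
    (Filter.Eventually.of_forall hmeas) hFint hmeas'
    (Filter.Eventually.of_forall hbound) intervalIntegrable_const
    (Filter.Eventually.of_forall hdiff)).2
  have hderiv : deriv (fun s : ℝ => u s α) r = ∫ φ in (-(π / 2))..(π / 2), F' r φ := by
    have hfun : (fun s : ℝ => u s α) = fun s => ∫ φ in (-(π / 2))..(π / 2), F s φ :=
      funext fun s => hu s α
    rw [hfun]
    exact hder.deriv
  -- the function w(α−φ) and friends
  have hcosne : ∀ φ ∈ S, Real.cos (π / 4 - (α - φ) / 2) ≠ 0 := fun φ hφ =>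
    (lt_of_lt_of_le c0_pos (cos_ge_c0 (range_t hα hφ rfl))).ne'
  set ψ : ℝ → ℂ := fun φ => P φ * ((w (α - φ) : ℝ) : ℂ) with hψdef
  set Bf : ℝ → ℂ := fun φ => Pd1 φ * ((w (α - φ) : ℝ) : ℂ) + P φ * ((-w1 (α - φ) : ℝ) : ℂ)
    with hBfdef
  set Bf' : ℝ → ℂ := fun φ =>
    (Pd2 φ * ((w (α - φ) : ℝ) : ℂ) + Pd1 φ * ((-w1 (α - φ) : ℝ) : ℂ)) +
      (Pd1 φ * ((-w1 (α - φ) : ℝ) : ℂ) + P φ * ((w2 (α - φ) : ℝ) : ℂ)) with hBf'def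
  have hwder : ∀ φ ∈ S, HasDerivAt (fun φ : ℝ => ((w (α - φ) : ℝ) : ℂ))
      ((-w1 (α - φ) : ℝ) : ℂ) φ := by
    intro φ hφ
    exact (HasDerivAt.comp_const_sub α φ (hasDerivAt_w (hcosne φ hφ))).ofReal_comp
  have hw1der : ∀ φ ∈ S, HasDerivAt (fun φ : ℝ => ((-w1 (α - φ) : ℝ) : ℂ))
      ((w2 (α - φ) : ℝ) : ℂ) φ := by
    intro φ hφ
    have h1 := (HasDerivAt.comp_const_sub α φ (hasDerivAt_w1 (hcosne φ hφ))).neg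
    have h2 : HasDerivAt (fun φ : ℝ => -w1 (α - φ)) (w2 (α - φ)) φ := by exact h1.congr_deriv (by ring)
    exact h2.ofReal_comp
  have hψder : ∀ φ ∈ Ioo (-(π / 2)) (π / 2), HasDerivAt ψ (Bf φ) φ := fun φ hφ =>
    (hPder φ hφ).mul (hwder φ (Ioo_subset_Icc_self hφ))
  have hBder : ∀ φ ∈ Ioo (-(π / 2)) (π / 2), HasDerivAt Bf (Bf' φ) φ := fun φ hφ =>
    ((hP1der φ hφ).mul (hwder φ (Ioo_subset_Icc_self hφ))).add
      ((hPder φ hφ).mul (hw1der φ (Ioo_subset_Icc_self hφ)))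
  -- continuity of the w-factors
  have hinnerc : Continuous (fun φ : ℝ => π / 4 - (α - φ) / 2) := by fun_prop
  have hwC : ContinuousOn (fun φ : ℝ => ((w (α - φ) : ℝ) : ℂ)) S := by
    apply Complex.continuous_ofReal.comp_continuousOn
    intro φ hφ
    apply ContinuousAt.continuousWithinAt
    exact ContinuousAt.comp (g := Real.tan) (f := fun φ : ℝ => π / 4 - (α - φ) / 2)
      (Real.continuousAt_tan.mpr (hcosne φ hφ)) hinnerc.continuousAt
  have hw1C : ContinuousOn (fun φ : ℝ => ((-w1 (α - φ) : ℝ) : ℂ)) S := by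
    apply Complex.continuous_ofReal.comp_continuousOn
    intro φ hφ
    apply ContinuousAt.continuousWithinAt
    apply ContinuousAt.neg
    simp only [w1]
    apply ContinuousAt.mul continuousAt_const
    apply ContinuousAt.div continuousAt_const
    · exact ((Real.continuous_cos.comp hinnerc).pow 2).continuousAt
    · exact pow_ne_zero 2 (hcosne φ hφ)
  have hw2C : ContinuousOn (fun φ : ℝ => ((w2 (α - φ) : ℝ) : ℂ)) S := by
    apply Complex.continuous_ofReal.comp_continuousOn
    intro φ hφ
    apply ContinuousAt.continuousWithinAt
    simp only [w2]
    apply ContinuousAt.mul continuousAt_const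
    apply ContinuousAt.div (Real.continuous_sin.comp hinnerc).continuousAt
    · exact ((Real.continuous_cos.comp hinnerc).pow 3).continuousAt
    · exact pow_ne_zero 3 (hcosne φ hφ)
  have hψc : ContinuousOn ψ S := hPc.mul hwC
  have hBc : ContinuousOn Bf S := (hP1c.mul hwC).add (hPc.mul hw1C)
  have hB'c : ContinuousOn Bf' S :=
    ((hP2c.mul hwC).add (hP1c.mul hw1C)).add ((hP1c.mul hw1C).add (hPc.mul hw2C))
  -- norm bounds on Bf, Bf'
  have hMBb : ∀ φ ∈ S, ‖Bf φ‖ ≤ MB := by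
    intro φ hφ
    have hw := w_bounds (range_t hα hφ rfl)
    simp only [hBfdef]
    refine le_trans (norm_add_le _ _) ?_
    rw [norm_mul, norm_mul, Complex.norm_real, Complex.norm_real, Real.norm_eq_abs,
      Real.norm_eq_abs, abs_neg, hMBdef]
    exact add_le_add (mul_le_mul (hM1 φ hφ) hw.1 (abs_nonneg _) hM1nn)
      (mul_le_mul (hM0 φ hφ) hw.2.1 (abs_nonneg _) hM0nn)
  have hMB'b : ∀ φ ∈ S, ‖Bf' φ‖ ≤ MB' := by
    intro φ hφ
    have hw := w_bounds (range_t hα hφ rfl)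
    simp only [hBf'def]
    refine le_trans (norm_add_le _ _) ?_
    have e1 : ‖Pd2 φ * ((w (α - φ) : ℝ) : ℂ) + Pd1 φ * ((-w1 (α - φ) : ℝ) : ℂ)‖ ≤
        M2 * (1 / c0) + M1 * (1 / (2 * c0 ^ 2)) := by
      refine le_trans (norm_add_le _ _) ?_
      rw [norm_mul, norm_mul, Complex.norm_real, Complex.norm_real, Real.norm_eq_abs,
        Real.norm_eq_abs, abs_neg]
      exact add_le_add (mul_le_mul (hM2 φ hφ) hw.1 (abs_nonneg _) hM2nn)
        (mul_le_mul (hM1 φ hφ) hw.2.1 (abs_nonneg _) hM1nn)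
    have e2 : ‖Pd1 φ * ((-w1 (α - φ) : ℝ) : ℂ) + P φ * ((w2 (α - φ) : ℝ) : ℂ)‖ ≤
        M1 * (1 / (2 * c0 ^ 2)) + M0 * (1 / (2 * c0 ^ 3)) := by
      refine le_trans (norm_add_le _ _) ?_
      rw [norm_mul, norm_mul, Complex.norm_real, Complex.norm_real, Real.norm_eq_abs,
        Real.norm_eq_abs, abs_neg]
      exact add_le_add (mul_le_mul (hM1 φ hφ) hw.2.1 (abs_nonneg _) hM1nn)
        (mul_le_mul (hM0 φ hφ) hw.2.2 (abs_nonneg _) hM0nn)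
    rw [hMB'def]
    linarith
  -- integration by parts
  have hle2 : -(π / 2) ≤ π / 2 := by linarith
  have hibp := intervalIntegral.integral_mul_deriv_eq_deriv_mul_of_hasDerivAt
    (a := -(π / 2)) (b := π / 2) (u := ψ) (v := E) (u' := Bf) (v' := E')
    (by rw [uIcc_of_le hle2]; exact hψc)
    hEc.continuousOn
    (by rw [min_eq_left hle2, max_eq_right hle2]; exact hψder)
    (fun x _ => hEder x)
    (by apply ContinuousOn.intervalIntegrable; rw [uIcc_of_le hle2]; exact hBc)
    (hE'c.intervalIntegrable _ _)
  have hψ0a : ψ (π / 2) = 0 := by simp only [hψdef]; rw [hP2, zero_mul]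
  have hψ0b : ψ (-(π / 2)) = 0 := by simp only [hψdef]; rw [hP1, zero_mul]
  rw [hψ0a, hψ0b, zero_mul, zero_mul] at hibp
  -- pointwise identity
  have hpt : ∀ φ ∈ uIcc (-(π / 2)) (π / 2),
      F' r φ - Complex.I * (k : ℂ) *
        (P φ * Complex.exp (Complex.I * ((r * k * Real.sin (α - φ) : ℝ) : ℂ))) =
      (r : ℂ)⁻¹ * (ψ φ * E' φ) := by
    intro φ hφ'
    rw [uIcc_of_le hle2] at hφ'
    have hid : (1 : ℝ) - Real.sin (α - φ) = w (α - φ) * Real.cos (α - φ) :=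
      one_sub_sin_eq (lt_of_le_of_lt (range_t hα hφ' rfl) (by linarith))
    have hidC : ((1 : ℝ) : ℂ) - (Real.sin (α - φ) : ℂ) =
        (w (α - φ) : ℂ) * (Real.cos (α - φ) : ℂ) := by exact_mod_cast congrArg Complex.ofReal hid
    have hrne : (r : ℂ) ≠ 0 := by exact_mod_cast hrpos.ne'
    simp only [hF', hψdef, hE']
    push_cast at hidC ⊢
    field_simp
    linear_combination (-(P φ * (k : ℂ))) * hidC
  -- assemble the derivative identity
  have hint1 : IntervalIntegrable (fun φ => F' r φ) volume (-(π / 2)) (π / 2) := by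
    apply ContinuousOn.intervalIntegrable
    rw [uIcc_of_le hle2]
    simp only [hF']
    apply ContinuousOn.mul hPc
    apply Continuous.continuousOn; fun_prop
  have hint2 : IntervalIntegrable (fun φ => Complex.I * (k : ℂ) *
      (P φ * Complex.exp (Complex.I * ((r * k * Real.sin (α - φ) : ℝ) : ℂ))))
      volume (-(π / 2)) (π / 2) := by
    apply ContinuousOn.intervalIntegrable
    rw [uIcc_of_le hle2]
    apply ContinuousOn.mul continuousOn_const
    apply ContinuousOn.mul hPc
    apply Continuous.continuousOn; fun_prop
  have hDeq : deriv (fun s : ℝ => u s α) r - Complex.I * (k : ℂ) * u r α =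
      (r : ℂ)⁻¹ * (0 - ∫ φ in (-(π / 2))..(π / 2), Bf φ * E φ) := by
    rw [hderiv, hu r α]
    rw [← intervalIntegral.integral_const_mul, ← intervalIntegral.integral_sub hint1 hint2]
    rw [intervalIntegral.integral_congr hpt, intervalIntegral.integral_const_mul, hibp]
    ring
  rw [hDeq]
  rw [norm_mul, zero_sub, norm_neg, norm_inv, Complex.norm_real, Real.norm_eq_abs,
    abs_of_pos hrpos]
  have hcore := core k r hk hr α hα Bf Bf' MB MB' hBc hB'c hBder hMBb hMB'b
  have hfold : (∫ φ in (-(π / 2))..(π / 2),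
      Bf φ * Complex.exp (Complex.I * ((r * k * Real.sin (α - φ) : ℝ) : ℂ))) =
      ∫ φ in (-(π / 2))..(π / 2), Bf φ * E φ := rfl
  rw [hfold] at hcore
  have hrpow : r ^ (-(3 / 2) : ℝ) = r⁻¹ * r ^ (-(1 / 2) : ℝ) := by
    rw [← Real.rpow_neg_one r, ← Real.rpow_add hrpos]
    norm_num
  have hrpow_pos : 0 < r ^ (-(1 / 2) : ℝ) := Real.rpow_pos_of_pos hrpos _
  calc r⁻¹ * ‖∫ φ in (-(π / 2))..(π / 2), Bf φ * E φ‖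
      ≤ r⁻¹ * (CC * r ^ (-(1 / 2) : ℝ)) := by
        apply mul_le_mul_of_nonneg_left _ (by positivity)
        rw [hCC]
        exact hcore
    _ = CC * r ^ (-(3 / 2) : ℝ) := by rw [hrpow]; ring
    _ ≤ (CC + 1) * r ^ (-(3 / 2) : ℝ) := by
        apply mul_le_mul_of_nonneg_right (by linarith) (le_of_lt (Real.rpow_pos_of_pos hrpos _))



end
end

section
/- Let k > 0 and let P : [−π/2, π/2] → ℂ be three times continuously differentiable with P(−π/2) = P(π/2) = 0. Define u(r, α) = ∫_{−π/2}^{π/2} P(φ) e^{i r k sin(α − φ)} dφ. Then there exists a constant C > 0 such that for all r ≥ 1 and all α ∈ [π/4, 3π/4], |∂_α u(r, α)| ≤ C·r^{−1/2}, with C independent of r and α; equivalently, the tangential derivative r^{−1} ∂_α u is O(r^{−3/2}) uniformly in α ∈ [π/4, 3π/4]. -/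
open Real Set MeasureTheory intervalIntegral
open scoped Interval

lemma sin_lb {x : ℝ} (h : |x| ≤ 3*π/4) : |x|/4 ≤ |Real.sin x| := by
  have hπ := Real.pi_gt_three
  -- reduce to 0 ≤ x
  have key : ∀ y : ℝ, 0 ≤ y → y ≤ 3*π/4 → y/4 ≤ Real.sin y := by
    intro y hy hy'
    have hπ' := Real.pi_lt_d2
    rcases le_or_gt y (π/2) with h1 | h1
    · have h0 := Real.mul_le_sin hy h1
      have h4 : (1:ℝ)/4 ≤ 2/π := by
        rw [div_le_div_iff₀ (by norm_num) Real.pi_pos]; nlinarith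
      calc y/4 = 1/4 * y := by ring
        _ ≤ 2/π * y := mul_le_mul_of_nonneg_right h4 hy
        _ ≤ Real.sin y := h0
    · have h2 : Real.cos (y - π/2) = Real.sin y := Real.cos_sub_pi_div_two y
      have h3 : Real.cos (π/4) ≤ Real.cos (y - π/2) := by
        apply Real.cos_le_cos_of_nonneg_of_le_pi (by linarith) (by linarith) (by linarith)
      rw [Real.cos_pi_div_four] at h3
      have hs2 : (1.4:ℝ) ≤ Real.sqrt 2 := by
        nlinarith [Real.sq_sqrt (by norm_num : (2:ℝ) ≥ 0), Real.sqrt_nonneg 2]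
      rw [← h2]
      nlinarith
  rcases abs_cases x with ⟨hx1, hx2⟩ | ⟨hx1, hx2⟩
  · rw [hx1] at h ⊢
    have := key x hx2 h
    calc x/4 ≤ Real.sin x := this
      _ ≤ |Real.sin x| := le_abs_self _
  · rw [hx1] at h ⊢
    have := key (-x) (by linarith) h
    calc (-x)/4 ≤ Real.sin (-x) := this
      _ = -Real.sin x := Real.sin_neg x
      _ ≤ |Real.sin x| := neg_le_abs _

lemma norm_exp_I_real (t : ℝ) : ‖Complex.exp (Complex.I * (t:ℂ))‖ = 1 := by
  rw [mul_comm, Complex.norm_exp_ofReal_mul_I]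

lemma hasDerivAt_cexp_I {θ : ℝ → ℝ} {θ' : ℝ} {x : ℝ} (h : HasDerivAt θ θ' x) :
    HasDerivAt (fun y => Complex.exp (Complex.I * ((θ y : ℝ) : ℂ)))
      (Complex.exp (Complex.I * ((θ x : ℝ) : ℂ)) * (Complex.I * (θ' : ℂ))) x := by
  exact (h.ofReal_comp.const_mul Complex.I).cexp

lemma hasDerivAt_phase (lam a x : ℝ) :
    HasDerivAt (fun y : ℝ => lam * Real.sin (a - y)) (-(lam * Real.cos (a - x))) x := by
  have h1 : HasDerivAt (fun y : ℝ => a - y) (-1) x := (hasDerivAt_id x).const_sub a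
  have h2 := (Real.hasDerivAt_sin (a - x)).comp x h1
  have := h2.const_mul lam
  exact this.congr_deriv (by ring)

lemma hasDerivAt_phase' (lam φ a : ℝ) :
    HasDerivAt (fun y : ℝ => lam * Real.sin (y - φ)) (lam * Real.cos (a - φ)) a := by
  have h1 : HasDerivAt (fun y : ℝ => y - φ) 1 a := (hasDerivAt_id a).sub_const φ
  have h2 := (Real.hasDerivAt_sin (a - φ)).comp a h1
  have := h2.const_mul lam
  exact this.congr_deriv (by ring)

lemma hasDerivAt_cosphase (lam a x : ℝ) :
    HasDerivAt (fun y : ℝ => lam * Real.cos (a - y)) (lam * Real.sin (a - x)) x := by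
  have h1 : HasDerivAt (fun y : ℝ => a - y) (-1) x := (hasDerivAt_id x).const_sub a
  have h2 := (Real.hasDerivAt_cos (a - x)).comp x h1
  have := h2.const_mul lam
  exact this.congr_deriv (by ring)

set_option maxHeartbeats 1000000 in
private lemma piece (lam δ M₀ M₁ α c d : ℝ) (Q Q' : ℝ → ℂ)
    (hlam : 0 < lam) (hδ : 0 < δ)
    (hQ : ∀ x ∈ Icc (-(π/2)) (π/2), HasDerivWithinAt Q (Q' x) (Icc (-(π/2)) (π/2)) x)
    (hQ'c : ContinuousOn Q' (Icc (-(π/2)) (π/2)))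
    (hM₀ : 0 ≤ M₀) (hM₁ : 0 ≤ M₁)
    (hbQ : ∀ x ∈ Icc (-(π/2)) (π/2), ‖Q x‖ ≤ M₀)
    (hbQ' : ∀ x ∈ Icc (-(π/2)) (π/2), ‖Q' x‖ ≤ M₁)
    (hc : -(π/2) ≤ c) (hcd : c ≤ d) (hd : d ≤ π/2)
    (hside : α - π/2 + δ ≤ c ∨ d ≤ α - π/2 - δ)
    (hα : π/4 ≤ α) (hα' : α ≤ 3*π/4) :
    ‖∫ φ in c..d, Q φ * Complex.exp (Complex.I * ((lam * Real.sin (α - φ) : ℝ) : ℂ))‖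
      ≤ (24*M₀ + 16*M₁)/(lam*δ) := by
  have hπ := Real.pi_gt_three
  have hπ' := Real.pi_lt_d2
  have hsub : Icc c d ⊆ Icc (-(π/2)) (π/2) := Icc_subset_Icc hc hd
  have hIcc : uIcc c d = Icc c d := uIcc_of_le hcd
  have hfar : ∀ x ∈ Icc c d, δ ≤ |x - (α - π/2)| := by
    intro x hx; rcases hside with h | h
    · rw [abs_of_nonneg (by linarith [hx.1])]; linarith [hx.1]
    · rw [abs_of_nonpos (by linarith [hx.2])]; linarith [hx.2]
  have hnear : ∀ x ∈ Icc c d, |x - (α - π/2)| ≤ 3*π/4 := by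
    intro x hx
    have h1 := (hsub hx).1; have h2 := (hsub hx).2
    rw [abs_le]; constructor <;> [linarith; linarith]
  have hcos2 : ∀ x ∈ Icc c d, |x - (α - π/2)|/4 ≤ |Real.cos (α - x)| := by
    intro x hx
    have h1 : α - x = π/2 - (x - (α - π/2)) := by ring
    rw [h1, Real.cos_pi_div_two_sub]
    exact sin_lb (hnear x hx)
  have hcos : ∀ x ∈ Icc c d, δ/4 ≤ |Real.cos (α - x)| := by
    intro x hx
    calc δ/4 ≤ |x - (α - π/2)|/4 := by linarith [hfar x hx]
      _ ≤ _ := hcos2 x hx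
  have hcosne : ∀ x ∈ Icc c d, lam * Real.cos (α - x) ≠ 0 := by
    intro x hx
    have h1 : (0:ℝ) < |lam * Real.cos (α - x)| := by
      rw [abs_mul, abs_of_pos hlam]
      exact mul_pos hlam (lt_of_lt_of_le (by positivity) (hcos x hx))
    exact abs_pos.mp h1
  -- abbreviations
  set E : ℝ → ℂ := fun x => Complex.exp (Complex.I * ((lam * Real.sin (α - x) : ℝ) : ℂ)) with hE
  set H : ℝ → ℂ := fun x => Complex.I * ((lam * Real.cos (α - x) : ℝ) : ℂ) with hH
  set E' : ℝ → ℂ := fun x => -(E x * H x) with hE'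
  set W : ℝ → ℂ := fun x => -Complex.I * ((((lam * Real.cos (α - x))⁻¹ : ℝ)) : ℂ) with hW
  set W' : ℝ → ℂ :=
    fun x => -Complex.I * (((-(lam * Real.sin (α - x)) / (lam * Real.cos (α - x))^2 : ℝ)) : ℂ) with hW'
  set U : ℝ → ℂ := fun x => Q x * W x with hU
  set U' : ℝ → ℂ := fun x => Q' x * W x + Q x * W' x with hU'
  -- derivative facts
  have hEderiv : ∀ x : ℝ, HasDerivAt E (E' x) x := by
    intro x
    have := hasDerivAt_cexp_I (hasDerivAt_phase lam α x)
    convert this using 1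
    rw [hE', hH, hE]
    push_cast; ring
  have hWderiv : ∀ x ∈ Icc c d, HasDerivAt W (W' x) x := by
    intro x hx
    have h1 := ((hasDerivAt_cosphase lam α x).inv (hcosne x hx)).ofReal_comp.const_mul (-Complex.I)
    exact h1
  -- key algebraic identity
  have hWH : ∀ x ∈ Icc c d, W x * H x = 1 := by
    intro x hx
    have htc : ((lam * Real.cos (α - x) : ℝ) : ℂ) ≠ 0 :=
      Complex.ofReal_ne_zero.mpr (hcosne x hx)
    show -Complex.I * ((((lam * Real.cos (α - x))⁻¹ : ℝ)) : ℂ) *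
        (Complex.I * ((lam * Real.cos (α - x) : ℝ) : ℂ)) = 1
    rw [Complex.ofReal_inv]
    calc -Complex.I * (((lam * Real.cos (α - x) : ℝ) : ℂ))⁻¹ *
          (Complex.I * ((lam * Real.cos (α - x) : ℝ) : ℂ))
        = -(Complex.I * Complex.I) *
            ((((lam * Real.cos (α - x) : ℝ) : ℂ))⁻¹ * ((lam * Real.cos (α - x) : ℝ) : ℂ)) := by
          ring
      _ = 1 := by rw [Complex.I_mul_I, inv_mul_cancel₀ htc]; ring
  -- norm bounds
  have hnW : ∀ x ∈ Icc c d, ‖W x‖ ≤ 4/(lam*δ) := by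
    intro x hx
    rw [hW, norm_mul, norm_neg, Complex.norm_I, one_mul, Complex.norm_real,
      Real.norm_eq_abs, abs_inv, abs_mul, abs_of_pos hlam]
    have h1 : lam * δ/4 ≤ lam * |Real.cos (α - x)| := by
      have := hcos x hx; nlinarith
    rw [inv_le_comm₀ (lt_of_lt_of_le (by positivity) h1) (by positivity)]
    calc (4/(lam*δ))⁻¹ = lam * δ/4 := by field_simp
      _ ≤ lam * |Real.cos (α - x)| := h1
  have hnW' : ∀ x ∈ Icc c d, ‖W' x‖ ≤ 16/(lam * (x - (α - π/2))^2) := by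
    intro x hx
    have hxpos : (0:ℝ) < |x - (α - π/2)| := lt_of_lt_of_le hδ (hfar x hx)
    rw [hW', norm_mul, norm_neg, Complex.norm_I, one_mul, Complex.norm_real,
      Real.norm_eq_abs, abs_div]
    have hnum : |-(lam * Real.sin (α - x))| ≤ lam := by
      rw [abs_neg, abs_mul, abs_of_pos hlam]
      nlinarith [Real.abs_sin_le_one (α - x)]
    have hden : (lam * |x - (α - π/2)|/4)^2 ≤ |(lam * Real.cos (α - x))^2| := by
      rw [abs_of_nonneg (sq_nonneg (lam * Real.cos (α - x))), ← sq_abs (lam * Real.cos (α - x))]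
      have h2 : lam * |x - (α - π/2)|/4 ≤ |lam * Real.cos (α - x)| := by
        rw [abs_mul, abs_of_pos hlam]
        have := hcos2 x hx; nlinarith
      exact pow_le_pow_left₀ (by positivity) h2 2
    have hdenpos : (0:ℝ) < (lam * |x - (α - π/2)|/4)^2 := by positivity
    calc |-(lam * Real.sin (α - x))| / |(lam * Real.cos (α - x))^2|
        ≤ lam / (lam * |x - (α - π/2)|/4)^2 := by
          apply div_le_div₀ hlam.le hnum hdenpos hden
      _ = 16/(lam * (x - (α - π/2))^2) := by
          rw [← sq_abs (x - (α - π/2)),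
            div_eq_div_iff hdenpos.ne' (mul_pos hlam (pow_pos hxpos 2)).ne']
          ring
  -- continuity
  have hQcont : ContinuousOn Q (Icc (-(π/2)) (π/2)) := fun x hx => (hQ x hx).continuousWithinAt
  have hEcont : Continuous E := by rw [hE]; fun_prop
  have hE'cont : Continuous E' := by rw [hE', hE, hH]; fun_prop
  have hWcont : ContinuousOn W (Icc c d) := by
    rw [hW]
    apply ContinuousOn.mul continuousOn_const
    apply Complex.continuous_ofReal.comp_continuousOn
    exact ContinuousOn.inv₀ (by fun_prop) hcosne
  have hW'cont : ContinuousOn W' (Icc c d) := by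
    rw [hW']
    apply ContinuousOn.mul continuousOn_const
    apply Complex.continuous_ofReal.comp_continuousOn
    apply ContinuousOn.div (by fun_prop) (by fun_prop)
    exact fun x hx => pow_ne_zero 2 (hcosne x hx)
  have hU'cont : ContinuousOn U' (Icc c d) := by
    rw [hU']
    exact ((hQ'c.mono hsub).mul hWcont).add ((hQcont.mono hsub).mul hW'cont)
  have hU'int : IntervalIntegrable U' volume c d :=
    (by rw [hIcc]; exact hU'cont : ContinuousOn U' (uIcc c d)).intervalIntegrable
  have hE'int : IntervalIntegrable E' volume c d := hE'cont.intervalIntegrable _ _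
  -- IBP
  have hUd : ∀ x ∈ uIcc c d, HasDerivWithinAt U (U' x) (uIcc c d) x := by
    rw [hIcc]; intro x hx
    exact ((hQ x (hsub hx)).mono hsub).mul ((hWderiv x hx).hasDerivWithinAt)
  have hVd : ∀ x ∈ uIcc c d, HasDerivWithinAt E (E' x) (uIcc c d) x :=
    fun x _ => (hEderiv x).hasDerivWithinAt
  have key := intervalIntegral.integral_mul_deriv_eq_deriv_mul_of_hasDerivWithinAt hUd hVd hU'int hE'int
  have hident : EqOn (fun x => U x * E' x) (fun x => -(Q x * E x)) (uIcc c d) := by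
    rw [hIcc]; intro x hx
    show U x * E' x = -(Q x * E x)
    rw [hU, hE']
    calc Q x * W x * -(E x * H x) = -(Q x * E x * (W x * H x)) := by ring
      _ = -(Q x * E x) := by rw [hWH x hx, mul_one]
  have heq : (∫ x in c..d, Q x * E x) = U c * E c - U d * E d + ∫ x in c..d, U' x * E x := by
    have h2 : (∫ x in c..d, U x * E' x) = ∫ x in c..d, -(Q x * E x) :=
      intervalIntegral.integral_congr hident
    rw [intervalIntegral.integral_neg] at h2
    rw [h2] at key
    linear_combination -key
  -- bounding
  have hbd : ∀ y ∈ Icc c d, ‖U y * E y‖ ≤ M₀ * (4/(lam*δ)) := by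
    intro y hy
    rw [hU]
    calc ‖Q y * W y * E y‖ = ‖Q y‖ * ‖W y‖ * ‖E y‖ := by rw [norm_mul, norm_mul]
      _ = ‖Q y‖ * ‖W y‖ := by rw [hE]; rw [norm_exp_I_real]; ring
      _ ≤ M₀ * (4/(lam*δ)) :=
          mul_le_mul (hbQ y (hsub hy)) (hnW y hy) (norm_nonneg _) hM₀
  have hInt2 : ‖∫ x in c..d, U' x * E x‖ ≤ (16*M₁ + 16*M₀)/(lam*δ) := by
    have hB : ∀ x ∈ Icc c d, ‖U' x * E x‖ ≤ 4*M₁/(lam*δ) + 16*M₀/lam * ((x - (α - π/2))^2)⁻¹ := by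
      intro x hx
      have h1 : ‖U' x * E x‖ = ‖U' x‖ := by
        rw [norm_mul, hE, norm_exp_I_real, mul_one]
      rw [h1, hU']
      have hxpos : (0:ℝ) < |x - (α - π/2)| := lt_of_lt_of_le hδ (hfar x hx)
      calc ‖Q' x * W x + Q x * W' x‖ ≤ ‖Q' x‖ * ‖W x‖ + ‖Q x‖ * ‖W' x‖ := by
            refine (norm_add_le _ _).trans ?_
            simp only [norm_mul]
            exact le_rfl
        _ ≤ M₁ * (4/(lam*δ)) + M₀ * (16/(lam * (x - (α - π/2))^2)) := by
            apply add_le_add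
            · exact mul_le_mul (hbQ' x (hsub hx)) (hnW x hx) (norm_nonneg _) hM₁
            · exact mul_le_mul (hbQ x (hsub hx)) (hnW' x hx) (norm_nonneg _) hM₀
        _ = 4*M₁/(lam*δ) + 16*M₀/lam * ((x - (α - π/2))^2)⁻¹ := by
            have hs : (x - (α - π/2)) ≠ 0 := by
              intro h0; rw [h0, abs_zero] at hxpos; exact lt_irrefl 0 hxpos
            field_simp
    have hxne : ∀ x ∈ Icc c d, x - (α - π/2) ≠ 0 := by
      intro x hx h0
      have := hfar x hx
      rw [h0, abs_zero] at this; linarith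
    have hBint : IntervalIntegrable (fun x => 4*M₁/(lam*δ) + 16*M₀/lam * ((x - (α - π/2))^2)⁻¹) volume c d := by
      apply ContinuousOn.intervalIntegrable
      apply ContinuousOn.add continuousOn_const
      apply ContinuousOn.mul continuousOn_const
      apply ContinuousOn.inv₀ (by fun_prop)
      rw [hIcc]
      exact fun x hx => pow_ne_zero 2 (hxne x hx)
    have hnint : IntervalIntegrable (fun x => ‖U' x * E x‖) volume c d := by
      apply ContinuousOn.intervalIntegrable
      rw [hIcc]
      exact (hU'cont.mul hEcont.continuousOn).norm
    have step1 : ‖∫ x in c..d, U' x * E x‖ ≤ ∫ x in c..d, ‖U' x * E x‖ :=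
      intervalIntegral.norm_integral_le_integral_norm hcd
    have step2 : (∫ x in c..d, ‖U' x * E x‖) ≤
        ∫ x in c..d, (4*M₁/(lam*δ) + 16*M₀/lam * ((x - (α - π/2))^2)⁻¹) :=
      intervalIntegral.integral_mono_on hcd hnint hBint hB
    have hanti : ∀ x ∈ uIcc c d, HasDerivAt (fun y => -(y - (α - π/2))⁻¹) (((x - (α - π/2))^2)⁻¹) x := by
      rw [hIcc]; intro x hx
      have h1 : HasDerivAt (fun y : ℝ => y - (α - π/2)) 1 x := (hasDerivAt_id x).sub_const _
      have h2 := (h1.inv (hxne x hx)).neg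
      exact h2.congr_deriv (by ring)
    have hinvint : IntervalIntegrable (fun x => ((x - (α - π/2))^2)⁻¹) volume c d := by
      apply ContinuousOn.intervalIntegrable
      apply ContinuousOn.inv₀ (by fun_prop)
      rw [hIcc]
      exact fun x hx => pow_ne_zero 2 (hxne x hx)
    have hcomp : (∫ x in c..d, ((x - (α - π/2))^2)⁻¹) =
        (c - (α - π/2))⁻¹ - (d - (α - π/2))⁻¹ := by
      rw [intervalIntegral.integral_eq_sub_of_hasDerivAt hanti hinvint]
      ring
    have hcompbd : (∫ x in c..d, ((x - (α - π/2))^2)⁻¹) ≤ 1/δ := by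
      rw [hcomp]
      rcases hside with h | h
      · have h1 : δ ≤ c - (α - π/2) := by linarith
        have h3 : 0 < (d - (α - π/2))⁻¹ := inv_pos.mpr (by linarith)
        have h4 := one_div_le_one_div_of_le hδ h1
        rw [one_div, one_div] at h4
        rw [one_div]
        linarith
      · have h1 : δ ≤ -(d - (α - π/2)) := by linarith
        have h2 : δ ≤ -(c - (α - π/2)) := by linarith
        have h5 : (d - (α - π/2))⁻¹ = -(-(d - (α - π/2)))⁻¹ := by
          rw [inv_neg]; ring
        have h6 : (c - (α - π/2))⁻¹ = -(-(c - (α - π/2)))⁻¹ := by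
          rw [inv_neg]; ring
        have h3 : 0 < (-(c - (α - π/2)))⁻¹ := inv_pos.mpr (by linarith)
        have h4 := one_div_le_one_div_of_le hδ h1
        rw [one_div, one_div] at h4
        rw [h5, h6, one_div]
        linarith
    have hsplit : (∫ x in c..d, (4*M₁/(lam*δ) + 16*M₀/lam * ((x - (α - π/2))^2)⁻¹)) =
        (d - c) * (4*M₁/(lam*δ)) + 16*M₀/lam * ∫ x in c..d, ((x - (α - π/2))^2)⁻¹ := by
      rw [intervalIntegral.integral_add intervalIntegrable_const (hinvint.const_mul _)]
      rw [intervalIntegral.integral_const, intervalIntegral.integral_const_mul]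
      rw [smul_eq_mul]
    have hdc : d - c ≤ 4 := by linarith
    calc ‖∫ x in c..d, U' x * E x‖
        ≤ (d - c) * (4*M₁/(lam*δ)) + 16*M₀/lam * ∫ x in c..d, ((x - (α - π/2))^2)⁻¹ := by
          rw [← hsplit]; exact step1.trans step2
      _ ≤ 4 * (4*M₁/(lam*δ)) + 16*M₀/lam * (1/δ) := by
          apply add_le_add
          · apply mul_le_mul_of_nonneg_right hdc (by positivity)
          · apply mul_le_mul_of_nonneg_left hcompbd (by positivity)
      _ = (16*M₁ + 16*M₀)/(lam*δ) := by field_simp; ring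
  -- conclude
  show ‖∫ x in c..d, Q x * E x‖ ≤ (24*M₀ + 16*M₁)/(lam*δ)
  rw [heq]
  have hcmem : c ∈ Icc c d := ⟨le_refl c, hcd⟩
  have hdmem : d ∈ Icc c d := ⟨hcd, le_refl d⟩
  calc ‖U c * E c - U d * E d + ∫ x in c..d, U' x * E x‖
      ≤ ‖U c * E c - U d * E d‖ + ‖∫ x in c..d, U' x * E x‖ := norm_add_le _ _
    _ ≤ (‖U c * E c‖ + ‖U d * E d‖) + ‖∫ x in c..d, U' x * E x‖ := by
        apply add_le_add_left (norm_sub_le _ _)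
    _ ≤ (M₀ * (4/(lam*δ)) + M₀ * (4/(lam*δ))) + (16*M₁ + 16*M₀)/(lam*δ) := by
        apply add_le_add (add_le_add (hbd c hcmem) (hbd d hdmem)) hInt2
    _ = (24*M₀ + 16*M₁)/(lam*δ) := by field_simp; ring

lemma osc (lam δ M₀ M₁ α : ℝ) (Q Q' : ℝ → ℂ)
    (hlam : 0 < lam) (hδ : 0 < δ) (hδ' : δ ≤ π/4)
    (hQ : ∀ x ∈ Icc (-(π/2)) (π/2), HasDerivWithinAt Q (Q' x) (Icc (-(π/2)) (π/2)) x)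
    (hQ'c : ContinuousOn Q' (Icc (-(π/2)) (π/2)))
    (hM₀ : 0 ≤ M₀) (hM₁ : 0 ≤ M₁)
    (hbQ : ∀ x ∈ Icc (-(π/2)) (π/2), ‖Q x‖ ≤ M₀)
    (hbQ' : ∀ x ∈ Icc (-(π/2)) (π/2), ‖Q' x‖ ≤ M₁)
    (hα : π/4 ≤ α) (hα' : α ≤ 3*π/4) :
    ‖∫ φ in (-(π/2))..(π/2), Q φ * Complex.exp (Complex.I * ((lam * Real.sin (α - φ) : ℝ) : ℂ))‖
      ≤ 2*M₀*δ + (48*M₀ + 32*M₁)/(lam*δ) := by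
  have hπ := Real.pi_gt_three
  set c1 := α - π/2 - δ with hc1
  set c2 := α - π/2 + δ with hc2
  clear_value c1 c2
  have h1 : -(π/2) ≤ c1 := by rw [hc1]; linarith
  have h2 : c1 ≤ c2 := by rw [hc1, hc2]; linarith
  have h3 : c2 ≤ π/2 := by rw [hc2]; linarith
  set f : ℝ → ℂ := fun φ => Q φ * Complex.exp (Complex.I * ((lam * Real.sin (α - φ) : ℝ) : ℂ))
    with hf
  have hQcont : ContinuousOn Q (Icc (-(π/2)) (π/2)) := fun x hx => (hQ x hx).continuousWithinAt
  have hfc : ContinuousOn f (Icc (-(π/2)) (π/2)) := by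
    rw [hf]
    exact hQcont.mul (by fun_prop)
  have hint : ∀ a b : ℝ, -(π/2) ≤ a → a ≤ b → b ≤ π/2 → IntervalIntegrable f volume a b := by
    intro a b ha hab hb
    apply ContinuousOn.intervalIntegrable
    apply hfc.mono
    rw [uIcc_of_le hab]
    exact Icc_subset_Icc ha hb
  have hsplit : (∫ φ in (-(π/2))..(π/2), f φ) =
      (∫ φ in (-(π/2))..c1, f φ) + (∫ φ in c1..c2, f φ) + (∫ φ in c2..(π/2), f φ) := by
    rw [intervalIntegral.integral_add_adjacent_intervals (hint _ _ (le_refl _) h1 (by linarith))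
      (hint _ _ h1 h2 h3)]
    rw [intervalIntegral.integral_add_adjacent_intervals
      (hint _ _ (le_refl _) (by linarith) h3) (hint _ _ (by linarith) h3 (le_refl _))]
  have hmid : ‖∫ φ in c1..c2, f φ‖ ≤ 2*M₀*δ := by
    have hb : ∀ x ∈ Ι c1 c2, ‖f x‖ ≤ M₀ := by
      intro x hx
      rw [Set.uIoc_of_le h2] at hx
      have hx1 : c1 < x := hx.1
      have hx2 : x ≤ c2 := hx.2
      have hxm : x ∈ Icc (-(π/2)) (π/2) := ⟨by linarith, by linarith⟩
      rw [hf]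
      show ‖Q x * Complex.exp (Complex.I * ((lam * Real.sin (α - x) : ℝ) : ℂ))‖ ≤ M₀
      rw [norm_mul, norm_exp_I_real, mul_one]
      exact hbQ x hxm
    have := intervalIntegral.norm_integral_le_of_norm_le_const hb
    have habs : |c2 - c1| = 2*δ := by rw [hc1, hc2, abs_of_nonneg (by linarith)]; ring
    rw [habs] at this
    calc ‖∫ φ in c1..c2, f φ‖ ≤ M₀ * (2*δ) := this
      _ = 2*M₀*δ := by ring
  have hleft : ‖∫ φ in (-(π/2))..c1, f φ‖ ≤ (24*M₀ + 16*M₁)/(lam*δ) :=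
    piece lam δ M₀ M₁ α (-(π/2)) c1 Q Q' hlam hδ hQ hQ'c hM₀ hM₁ hbQ hbQ'
      (le_refl _) h1 (by linarith) (Or.inr (le_of_eq hc1)) hα hα'
  have hright : ‖∫ φ in c2..(π/2), f φ‖ ≤ (24*M₀ + 16*M₁)/(lam*δ) :=
    piece lam δ M₀ M₁ α c2 (π/2) Q Q' hlam hδ hQ hQ'c hM₀ hM₁ hbQ hbQ'
      (by linarith) h3 (le_refl _) (Or.inl (by rw [hc2])) hα hα'
  calc ‖∫ φ in (-(π/2))..(π/2), f φ‖
      ≤ ‖(∫ φ in (-(π/2))..c1, f φ) + (∫ φ in c1..c2, f φ)‖ + ‖∫ φ in c2..(π/2), f φ‖ := by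
        rw [hsplit]; exact norm_add_le _ _
    _ ≤ (‖∫ φ in (-(π/2))..c1, f φ‖ + ‖∫ φ in c1..c2, f φ‖) + ‖∫ φ in c2..(π/2), f φ‖ :=
        add_le_add_left (norm_add_le _ _) _
    _ ≤ ((24*M₀ + 16*M₁)/(lam*δ) + 2*M₀*δ) + (24*M₀ + 16*M₁)/(lam*δ) :=
        add_le_add (add_le_add hleft hmid) hright
    _ = 2*M₀*δ + (48*M₀ + 32*M₁)/(lam*δ) := by ring

set_option maxHeartbeats 1000000 in
/-- tangential-derivative estimate. For `P ∈ C³([−π/2, π/2])` with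
`P(±π/2) = 0` and `u(r,α) = ∫_{−π/2}^{π/2} P(φ) e^{i r k sin(α−φ)} dφ`, there is `C > 0`
with `|∂_α u(r,α)| ≤ C r^{−1/2}` for all `r ≥ 1`, uniformly in `α ∈ [π/4, 3π/4]`
(equivalently, the tangential derivative `r⁻¹ ∂_α u` is `O(r^{−3/2})`). -/
theorem stmt9 (k : ℝ) (hk : 0 < k) (P : ℝ → ℂ)
    (hP : ContDiffOn ℝ 3 P (Set.Icc (-(Real.pi / 2)) (Real.pi / 2)))
    (hP1 : P (-(Real.pi / 2)) = 0) (hP2 : P (Real.pi / 2) = 0)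
    (u : ℝ → ℝ → ℂ)
    (hu : ∀ r α : ℝ, u r α =
      ∫ φ in (-(Real.pi / 2))..(Real.pi / 2),
        P φ * Complex.exp (Complex.I * ((r * k * Real.sin (α - φ) : ℝ) : ℂ))) :
    ∃ C > 0, ∀ r α : ℝ, 1 ≤ r → α ∈ Set.Icc (Real.pi / 4) (3 * Real.pi / 4) →
      ‖deriv (fun a : ℝ => u r a) α‖ ≤ C * r ^ (-(1 / 2) : ℝ) := by
  have hπ := Real.pi_gt_three
  have hlt : -(π/2) < π/2 := by linarith
  have huIcc : uIcc (-(π/2)) (π/2) = Icc (-(π/2)) (π/2) := uIcc_of_le (by linarith)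
  have hudo : UniqueDiffOn ℝ (Icc (-(π/2)) (π/2)) := uniqueDiffOn_Icc hlt
  have hP3 : ContDiffOn ℝ 3 P (Icc (-(π/2)) (π/2)) := by
    have : Set.Icc (-(Real.pi / 2)) (Real.pi / 2) = Icc (-(π/2)) (π/2) := rfl
    rw [← this]; exact hP
  set P' := derivWithin P (Icc (-(π/2)) (π/2)) with hP'def
  set P'' := derivWithin P' (Icc (-(π/2)) (π/2)) with hP''def
  have hPc : ContinuousOn P (Icc (-(π/2)) (π/2)) := hP3.continuousOn
  have hP'd : ∀ x ∈ Icc (-(π/2)) (π/2), HasDerivWithinAt P (P' x) (Icc (-(π/2)) (π/2)) x :=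
    fun x hx => ((hP3.differentiableOn (by norm_num)) x hx).hasDerivWithinAt
  have hP'C2 : ContDiffOn ℝ 2 P' (Icc (-(π/2)) (π/2)) := hP3.derivWithin hudo (by norm_num : (2:WithTop ℕ∞) + 1 ≤ 3)
  have hP'c : ContinuousOn P' (Icc (-(π/2)) (π/2)) := hP'C2.continuousOn
  have hP''d : ∀ x ∈ Icc (-(π/2)) (π/2), HasDerivWithinAt P' (P'' x) (Icc (-(π/2)) (π/2)) x :=
    fun x hx => ((hP'C2.differentiableOn (by norm_num)) x hx).hasDerivWithinAt
  have hP''c : ContinuousOn P'' (Icc (-(π/2)) (π/2)) :=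
    (hP'C2.derivWithin hudo (by norm_num : (1:WithTop ℕ∞) + 1 ≤ 2)).continuousOn
  obtain ⟨m₀, hm₀⟩ := isCompact_Icc.exists_bound_of_continuousOn hP'c
  obtain ⟨m₁, hm₁⟩ := isCompact_Icc.exists_bound_of_continuousOn hP''c
  obtain ⟨N₀, hN₀0, hbN₀⟩ :
      ∃ N, 0 ≤ N ∧ ∀ x ∈ Icc (-(π/2)) (π/2), ‖P' x‖ ≤ N :=
    ⟨max m₀ 0, le_max_right _ _, fun x hx => (hm₀ x hx).trans (le_max_left _ _)⟩
  obtain ⟨N₁, hN₁0, hbN₁⟩ :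
      ∃ N, 0 ≤ N ∧ ∀ x ∈ Icc (-(π/2)) (π/2), ‖P'' x‖ ≤ N :=
    ⟨max m₁ 0, le_max_right _ _, fun x hx => (hm₁ x hx).trans (le_max_left _ _)⟩
  have hsk : 0 < Real.sqrt k := Real.sqrt_pos.mpr hk
  refine ⟨2*N₀/Real.sqrt k + (48*N₀ + 32*N₁)/Real.sqrt k + 4*(48*N₀+32*N₁)/(π*k) + 1, ?_, ?_⟩
  · have e1 : 0 ≤ 2*N₀/Real.sqrt k := div_nonneg (by linarith) hsk.le
    have e2 : 0 ≤ (48*N₀ + 32*N₁)/Real.sqrt k := div_nonneg (by linarith) hsk.le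
    have e3 : 0 ≤ 4*(48*N₀+32*N₁)/(π*k) := div_nonneg (by linarith) (by positivity)
    linarith
  intro r α hr hαmem
  obtain ⟨hα, hα'⟩ := hαmem
  have hr0 : 0 < r := lt_of_lt_of_le one_pos hr
  have hlam : 0 < r * k := mul_pos hr0 hk
  have hsubI : Ι (-(π/2)) (π/2) ⊆ Icc (-(π/2)) (π/2) := by
    rw [uIoc_of_le (by linarith : -(π/2) ≤ π/2)]; exact Ioc_subset_Icc_self
  -- Step A : differentiation under the integral sign
  have hDrw : (fun a => u r a) = fun a => ∫ φ in (-(π/2))..(π/2),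
      P φ * Complex.exp (Complex.I * ((r * k * Real.sin (a - φ) : ℝ) : ℂ)) :=
    funext fun a => hu r a
  have hmeas : ∀ x : ℝ, AEStronglyMeasurable
      (fun φ => P φ * Complex.exp (Complex.I * ((r * k * Real.sin (x - φ) : ℝ) : ℂ)))
      (volume.restrict (Ι (-(π/2)) (π/2))) := by
    intro x
    apply ContinuousOn.aestronglyMeasurable _ measurableSet_uIoc
    exact (hPc.mono hsubI).mul (by fun_prop)
  have hmeas' : AEStronglyMeasurable
      (fun φ => P φ * (Complex.exp (Complex.I * ((r * k * Real.sin (α - φ) : ℝ) : ℂ)) *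
        (Complex.I * ((r * k * Real.cos (α - φ) : ℝ) : ℂ))))
      (volume.restrict (Ι (-(π/2)) (π/2))) := by
    apply ContinuousOn.aestronglyMeasurable _ measurableSet_uIoc
    exact (hPc.mono hsubI).mul (by fun_prop)
  have hFint : IntervalIntegrable
      (fun φ => P φ * Complex.exp (Complex.I * ((r * k * Real.sin (α - φ) : ℝ) : ℂ)))
      volume (-(π/2)) (π/2) := by
    apply ContinuousOn.intervalIntegrable
    rw [huIcc]
    exact hPc.mul (by fun_prop)
  have hboundint : IntervalIntegrable (fun φ => r * k * ‖P φ‖) volume (-(π/2)) (π/2) := by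
    apply ContinuousOn.intervalIntegrable
    rw [huIcc]
    exact continuousOn_const.mul hPc.norm
  have hbound : ∀ᵐ t : ℝ ∂volume, t ∈ Ι (-(π/2)) (π/2) → ∀ x ∈ Metric.ball α 1,
      ‖P t * (Complex.exp (Complex.I * ((r * k * Real.sin (x - t) : ℝ) : ℂ)) *
        (Complex.I * ((r * k * Real.cos (x - t) : ℝ) : ℂ)))‖ ≤ r * k * ‖P t‖ := by
    apply ae_of_all
    intro t _ x _
    rw [norm_mul, norm_mul, norm_exp_I_real, one_mul, norm_mul, Complex.norm_I, one_mul,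
      Complex.norm_real, Real.norm_eq_abs]
    have h1 : |r * k * Real.cos (x - t)| ≤ r * k := by
      rw [abs_mul, abs_of_pos hlam]
      nlinarith [Real.abs_cos_le_one (x - t)]
    nlinarith [norm_nonneg (P t)]
  have hdiff : ∀ᵐ t : ℝ ∂volume, t ∈ Ι (-(π/2)) (π/2) → ∀ x ∈ Metric.ball α 1,
      HasDerivAt (fun a => P t * Complex.exp (Complex.I * ((r * k * Real.sin (a - t) : ℝ) : ℂ)))
        (P t * (Complex.exp (Complex.I * ((r * k * Real.sin (x - t) : ℝ) : ℂ)) *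
          (Complex.I * ((r * k * Real.cos (x - t) : ℝ) : ℂ)))) x := by
    apply ae_of_all
    intro t _ x _
    exact (hasDerivAt_cexp_I (hasDerivAt_phase' (r*k) t x)).const_mul (P t)
  have hder := (intervalIntegral.hasDerivAt_integral_of_dominated_loc_of_deriv_le
    (F := fun a φ => P φ * Complex.exp (Complex.I * ((r * k * Real.sin (a - φ) : ℝ) : ℂ)))
    (F' := fun a φ => P φ * (Complex.exp (Complex.I * ((r * k * Real.sin (a - φ) : ℝ) : ℂ)) *
      (Complex.I * ((r * k * Real.cos (a - φ) : ℝ) : ℂ))))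
    (bound := fun φ => r * k * ‖P φ‖)
    (Metric.ball_mem_nhds α one_pos) (Filter.Eventually.of_forall hmeas) hFint hmeas' hbound hboundint hdiff).2
  have hD : deriv (fun a => u r a) α = ∫ φ in (-(π/2))..(π/2),
      P φ * (Complex.exp (Complex.I * ((r * k * Real.sin (α - φ) : ℝ) : ℂ)) *
        (Complex.I * ((r * k * Real.cos (α - φ) : ℝ) : ℂ))) := by
    rw [hDrw]
    exact hder.deriv
  -- Step B : integration by parts
  have hv : ∀ x ∈ uIcc (-(π/2)) (π/2),
      HasDerivWithinAt (fun y => Complex.exp (Complex.I * ((r * k * Real.sin (α - y) : ℝ) : ℂ)))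
        (Complex.exp (Complex.I * ((r * k * Real.sin (α - x) : ℝ) : ℂ)) *
          (Complex.I * ((-(r * k * Real.cos (α - x)) : ℝ) : ℂ))) (uIcc (-(π/2)) (π/2)) x :=
    fun x _ => (hasDerivAt_cexp_I (hasDerivAt_phase (r*k) α x)).hasDerivWithinAt
  have hu' : ∀ x ∈ uIcc (-(π/2)) (π/2),
      HasDerivWithinAt P (P' x) (uIcc (-(π/2)) (π/2)) x := by
    rw [huIcc]; exact hP'd
  have hP'int : IntervalIntegrable P' volume (-(π/2)) (π/2) := by
    apply ContinuousOn.intervalIntegrable; rw [huIcc]; exact hP'c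
  have hE'vint : IntervalIntegrable
      (fun x => Complex.exp (Complex.I * ((r * k * Real.sin (α - x) : ℝ) : ℂ)) *
        (Complex.I * ((-(r * k * Real.cos (α - x)) : ℝ) : ℂ))) volume (-(π/2)) (π/2) := by
    apply Continuous.intervalIntegrable
    fun_prop
  have keyB := intervalIntegral.integral_mul_deriv_eq_deriv_mul_of_hasDerivWithinAt
    hu' hv hP'int hE'vint
  have hBB : (∫ φ in (-(π/2))..(π/2),
        P φ * (Complex.exp (Complex.I * ((r * k * Real.sin (α - φ) : ℝ) : ℂ)) *
          (Complex.I * ((r * k * Real.cos (α - φ) : ℝ) : ℂ)))) =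
      ∫ φ in (-(π/2))..(π/2),
        P' φ * Complex.exp (Complex.I * ((r * k * Real.sin (α - φ) : ℝ) : ℂ)) := by
    have h3 : ∀ φ : ℝ, P φ * (Complex.exp (Complex.I * ((r * k * Real.sin (α - φ) : ℝ) : ℂ)) *
        (Complex.I * ((r * k * Real.cos (α - φ) : ℝ) : ℂ))) =
        -(P φ * (Complex.exp (Complex.I * ((r * k * Real.sin (α - φ) : ℝ) : ℂ)) *
          (Complex.I * ((-(r * k * Real.cos (α - φ)) : ℝ) : ℂ)))) := by
      intro φ
      push_cast
      ring
    rw [intervalIntegral.integral_congr (fun x _ => h3 x), intervalIntegral.integral_neg,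
      keyB, hP1, hP2]
    ring
  -- Step C : the stationary-phase bound
  have hsr : 0 < Real.sqrt r := Real.sqrt_pos.mpr hr0
  have hts : r ^ (-(1/2) : ℝ) = (Real.sqrt r)⁻¹ := by
    rw [Real.rpow_neg hr0.le, ← Real.sqrt_eq_rpow]
  set t := r ^ (-(1/2) : ℝ) with htdef
  clear_value t
  have htpos : 0 < t := by rw [hts]; positivity
  have hsrr : Real.sqrt r * Real.sqrt r = r := Real.mul_self_sqrt hr0.le
  have hskk : Real.sqrt k * Real.sqrt k = k := Real.mul_self_sqrt hk.le
  have ht1 : t ≤ 1 := by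
    rw [hts]
    have h1 : 1 ≤ Real.sqrt r := by nlinarith
    rw [inv_le_one_iff₀]
    right; exact h1
  have hδpos : 0 < min (π/4) (t / Real.sqrt k) := lt_min (by linarith) (div_pos htpos hsk)
  have hδ4 : min (π/4) (t / Real.sqrt k) ≤ π/4 := min_le_left _ _
  have hosc := osc (r*k) (min (π/4) (t / Real.sqrt k)) N₀ N₁ α P' P'' hlam hδpos hδ4
    hP''d hP''c hN₀0 hN₁0 hbN₀ hbN₁ hα hα'
  -- final arithmetic
  have hδle : min (π/4) (t / Real.sqrt k) ≤ t / Real.sqrt k := min_le_right _ _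
  have hterm1 : 2*N₀*(min (π/4) (t / Real.sqrt k)) ≤ (2*N₀/Real.sqrt k) * t := by
    have h1 : 2*N₀*(min (π/4) (t / Real.sqrt k)) ≤ 2*N₀*(t/Real.sqrt k) :=
      mul_le_mul_of_nonneg_left hδle (by linarith)
    calc 2*N₀*(min (π/4) (t / Real.sqrt k)) ≤ 2*N₀*(t/Real.sqrt k) := h1
      _ = (2*N₀/Real.sqrt k) * t := by ring
  have hrt2 : r * t^2 = 1 := by
    rw [hts]
    field_simp
    rw [Real.sq_sqrt hr0.le]
  have hterm2 : (48*N₀ + 32*N₁)/(r*k*(min (π/4) (t / Real.sqrt k))) ≤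
      ((48*N₀ + 32*N₁)/Real.sqrt k) * t + (4*(48*N₀+32*N₁)/(π*k)) * t := by
    rcases le_total (t / Real.sqrt k) (π/4) with hcase | hcase
    · have hδeq : min (π/4) (t / Real.sqrt k) = t / Real.sqrt k := min_eq_right hcase
      have h6 : r * k * (t / Real.sqrt k) = Real.sqrt r * Real.sqrt k := by
        rw [hts]
        field_simp
        linear_combination (- (Real.sqrt k * Real.sqrt k)) * hsrr - r * hskk
      have h7 : (48*N₀ + 32*N₁)/(Real.sqrt r * Real.sqrt k) =
          ((48*N₀ + 32*N₁)/Real.sqrt k) * t := by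
        rw [hts, mul_comm (Real.sqrt r) (Real.sqrt k), ← div_div,
          div_eq_mul_inv ((48*N₀ + 32*N₁)/Real.sqrt k)]
      rw [hδeq, h6, h7]
      have : 0 ≤ (4*(48*N₀+32*N₁)/(π*k)) * t :=
        mul_nonneg (div_nonneg (by linarith) (by positivity)) htpos.le
      linarith
    · have hδeq : min (π/4) (t / Real.sqrt k) = π/4 := min_eq_left hcase
      have hinvr : 1/r ≤ t := by
        have h8 : 1/r = t^2 := by
          field_simp
          linear_combination -hrt2
        rw [h8]
        nlinarith
      have h9 : (48*N₀ + 32*N₁)/(r*k*(π/4)) = (4*(48*N₀+32*N₁)/(π*k)) * (1/r) := by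
        field_simp
      rw [hδeq, h9]
      have h10 : (4*(48*N₀+32*N₁)/(π*k)) * (1/r) ≤ (4*(48*N₀+32*N₁)/(π*k)) * t :=
        mul_le_mul_of_nonneg_left hinvr (div_nonneg (by linarith) (by positivity))
      have : 0 ≤ ((48*N₀ + 32*N₁)/Real.sqrt k) * t :=
        mul_nonneg (div_nonneg (by linarith) hsk.le) htpos.le
      linarith
  -- put everything together
  rw [hD, hBB]
  calc ‖∫ φ in (-(π/2))..(π/2),
        P' φ * Complex.exp (Complex.I * ((r * k * Real.sin (α - φ) : ℝ) : ℂ))‖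
      ≤ 2*N₀*(min (π/4) (t / Real.sqrt k)) +
        (48*N₀ + 32*N₁)/(r*k*(min (π/4) (t / Real.sqrt k))) := hosc
    _ ≤ (2*N₀/Real.sqrt k) * t + (((48*N₀ + 32*N₁)/Real.sqrt k) * t +
        (4*(48*N₀+32*N₁)/(π*k)) * t) := add_le_add hterm1 hterm2
    _ = (2*N₀/Real.sqrt k + (48*N₀ + 32*N₁)/Real.sqrt k + 4*(48*N₀+32*N₁)/(π*k)) * t := by
        ring
    _ ≤ (2*N₀/Real.sqrt k + (48*N₀ + 32*N₁)/Real.sqrt k + 4*(48*N₀+32*N₁)/(π*k) + 1) * t := by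
        apply mul_le_mul_of_nonneg_right _ htpos.le
        linarith
end
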